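/- arXiv:1602.08740 — 12 statements merged into one kernel-verified Lean document; each statement's English description precedes it below -/
import Mathlib

section
/- A group Γ is boundedly simple if and only if every nontrivial central seminorm on Γ is a bounded norm. -/
/-- A central seminorm on a group: nonnegative, symmetric under inverses,
subadditive, and central (`ν (g*h) = ν (h*g)`). -/
def IsCentralSeminorm {Γ : Type*} [Group Γ] (ν : Γ → ℝ) : Prop :=
  (∀ g : Γ, 0 ≤ ν g) ∧ (∀ g : Γ, ν g⁻¹ = ν g) ∧
  (∀ g h : Γ, ν (g * h) ≤ ν g + ν h) ∧ (∀ g h : Γ, ν (g * h) = ν (h * g))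

/-- A group is boundedly simple: for every nontrivial `g` there is `N` such that
every element is a product of at most `N` conjugates of `g` or `g⁻¹`. -/
def BoundedlySimple (Γ : Type*) [Group Γ] : Prop :=
  ∀ g : Γ, g ≠ 1 → ∃ N : ℕ, ∀ f : Γ, ∃ l : List Γ, l.length ≤ N ∧
    (∀ x ∈ l, ∃ γ : Γ, x = γ * g * γ⁻¹ ∨ x = γ * g⁻¹ * γ⁻¹) ∧ l.prod = f

section Aux

variable {Γ : Type*} [Group Γ]

lemma aux_prod_le (ν : Γ → ℝ) (hsub : ∀ g h : Γ, ν (g * h) ≤ ν g + ν h) :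
    ∀ l : List Γ, ν l.prod ≤ ν 1 + (l.map ν).sum := by
  intro l
  induction l with
  | nil => simp
  | cons x l ih =>
    simp only [List.prod_cons, List.map_cons, List.sum_cons]
    calc ν (x * l.prod) ≤ ν x + ν l.prod := hsub _ _
      _ ≤ ν x + (ν 1 + (l.map ν).sum) := by linarith
      _ = ν 1 + (ν x + (l.map ν).sum) := by ring

lemma aux_sum_const (ν : Γ → ℝ) (c : ℝ) :
    ∀ l : List Γ, (∀ x ∈ l, ν x = c) → (l.map ν).sum = l.length * c := by
  intro l
  induction l with
  | nil => simp
  | cons x l ih =>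
    intro hl
    simp only [List.map_cons, List.sum_cons, List.length_cons]
    rw [hl x List.mem_cons_self, ih (fun y hy => hl y (List.mem_cons_of_mem x hy))]
    push_cast; ring

lemma aux_conj_prod (c : Γ) :
    ∀ l : List Γ, (l.map (fun x => c * x * c⁻¹)).prod = c * l.prod * c⁻¹ := by
  intro l
  induction l with
  | nil => simp
  | cons x l ih =>
    simp only [List.map_cons, List.prod_cons, ih]
    group

/-- conjugates of g or g⁻¹ -/
def ConjSet (g : Γ) (x : Γ) : Prop := ∃ γ : Γ, x = γ * g * γ⁻¹ ∨ x = γ * g⁻¹ * γ⁻¹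

lemma conjSet_inv {g x : Γ} (hx : ConjSet g x) : ConjSet g x⁻¹ := by
  obtain ⟨γ, h | h⟩ := hx
  · exact ⟨γ, Or.inr (by rw [h]; group)⟩
  · exact ⟨γ, Or.inl (by rw [h]; group)⟩

lemma conjSet_conj {g x : Γ} (c : Γ) (hx : ConjSet g x) : ConjSet g (c * x * c⁻¹) := by
  obtain ⟨γ, h | h⟩ := hx
  · exact ⟨c * γ, Or.inl (by rw [h]; group)⟩
  · exact ⟨c * γ, Or.inr (by rw [h]; group)⟩

/-- The set of possible word lengths of `f` in conjugates of `g^{±1}`. -/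
def WordLens (g f : Γ) : Set ℕ :=
  {n : ℕ | ∃ l : List Γ, l.length = n ∧ (∀ x ∈ l, ConjSet g x) ∧ l.prod = f}

lemma wordLens_inv {g f : Γ} {n : ℕ} (h : n ∈ WordLens g f) : n ∈ WordLens g f⁻¹ := by
  obtain ⟨l, hlen, hS, hprod⟩ := h
  refine ⟨(l.map (fun x => x⁻¹)).reverse, by simp [hlen], ?_, ?_⟩
  · intro x hx
    rw [List.mem_reverse, List.mem_map] at hx
    obtain ⟨y, hy, rfl⟩ := hx
    exact conjSet_inv (hS y hy)
  · rw [← List.prod_inv_reverse, hprod]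

lemma wordLens_conj {g f : Γ} (c : Γ) {n : ℕ} (h : n ∈ WordLens g f) :
    n ∈ WordLens g (c * f * c⁻¹) := by
  obtain ⟨l, hlen, hS, hprod⟩ := h
  refine ⟨l.map (fun x => c * x * c⁻¹), by simp [hlen], ?_, ?_⟩
  · intro x hx
    rw [List.mem_map] at hx
    obtain ⟨y, hy, rfl⟩ := hx
    exact conjSet_conj c (hS y hy)
  · rw [aux_conj_prod, hprod]

lemma wordLens_mul {g a b : Γ} {m n : ℕ} (ha : m ∈ WordLens g a) (hb : n ∈ WordLens g b) :
    m + n ∈ WordLens g (a * b) := by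
  obtain ⟨la, hla, hSa, hpa⟩ := ha
  obtain ⟨lb, hlb, hSb, hpb⟩ := hb
  refine ⟨la ++ lb, by simp [hla, hlb], ?_, by simp [hpa, hpb]⟩
  intro x hx
  rcases List.mem_append.mp hx with h | h
  · exact hSa x h
  · exact hSb x h

end Aux

/-- A group is boundedly simple iff every nontrivial central seminorm on it is a
bounded norm. -/
theorem boundedlySimple_iff_every_nontrivial_central_seminorm_is_bounded_norm
    {Γ : Type*} [Group Γ] :
    BoundedlySimple Γ ↔
      ∀ ν : Γ → ℝ, IsCentralSeminorm ν → (∃ g : Γ, ν g ≠ 0) →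
        ((∃ M : ℝ, ∀ g : Γ, ν g ≤ M) ∧ ∀ g : Γ, g ≠ 1 → 0 < ν g) := by
  constructor
  · -- forward direction
    intro hBS ν hν hnt
    obtain ⟨hpos, hinv, hsub, hcen⟩ := hν
    by_cases htriv : ∀ f : Γ, f = 1
    · refine ⟨⟨ν 1, fun f => by rw [htriv f]⟩, fun f hf => absurd (htriv f) hf⟩
    · push_neg at htriv
      obtain ⟨g₀, hg₀⟩ := htriv
      obtain ⟨N, hN⟩ := hBS g₀ hg₀
      -- key: value of ν on conjugates of a^{±1} is ν a
      have hconjval : ∀ a x : Γ, (∃ γ : Γ, x = γ * a * γ⁻¹ ∨ x = γ * a⁻¹ * γ⁻¹) →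
          ν x = ν a := by
        rintro a x ⟨γ, h | h⟩
        · rw [h, hcen, ← mul_assoc]; simp
        · rw [h, hcen, ← mul_assoc]; simp [hinv a]
      -- a product bound
      have hbound : ∀ (a : Γ), a ≠ 1 → ∀ (Na : ℕ),
          (∀ f : Γ, ∃ l : List Γ, l.length ≤ Na ∧
            (∀ x ∈ l, ∃ γ : Γ, x = γ * a * γ⁻¹ ∨ x = γ * a⁻¹ * γ⁻¹) ∧ l.prod = f) →
          ∀ f : Γ, ν f ≤ ν 1 + (Na : ℝ) * ν a := by
        intro a _ Na hNa f
        obtain ⟨l, hlen, hS, hprod⟩ := hNa f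
        have h1 : ν l.prod ≤ ν 1 + (l.map ν).sum := aux_prod_le ν hsub l
        have h2 : (l.map ν).sum ≤ (Na : ℝ) * ν a := by
          rw [aux_sum_const ν (ν a) l (fun x hx => hconjval a x (hS x hx))]
          have := hpos a
          have hle : (l.length : ℝ) ≤ (Na : ℝ) := by exact_mod_cast hlen
          nlinarith
        rw [hprod] at h1
        linarith
      constructor
      · exact ⟨ν 1 + (N : ℝ) * ν g₀, hbound g₀ hg₀ N hN⟩
      · intro a ha
        rcases lt_or_eq_of_le (hpos a) with h | h
        · exact h
        · exfalso
          have hν1 : ν 1 = 0 := by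
            have := hsub a a⁻¹
            rw [mul_inv_cancel, hinv a, ← h] at this
            have := hpos 1
            linarith
          obtain ⟨Na, hNa⟩ := hBS a ha
          obtain ⟨f₀, hf₀⟩ := hnt
          have := hbound a ha Na hNa f₀
          rw [hν1, ← h] at this
          simp at this
          exact hf₀ (le_antisymm this (hpos f₀))
  · -- backward direction
    intro h g hg
    -- Step 1: every element is a product of conjugates of g^{±1}
    have hQall : ∀ f : Γ, (WordLens g f).Nonempty := by
      by_contra hcon
      push_neg at hcon
      obtain ⟨f₀, hf₀⟩ := hcon
      classical
      set ν₀ : Γ → ℝ := fun f => if (WordLens g f).Nonempty then 0 else 1 with hν₀def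
      have hval : ∀ f : Γ, (WordLens g f).Nonempty → ν₀ f = 0 := by
        intro f hf; simp [hν₀def, hf]
      have hval' : ∀ f : Γ, ¬ (WordLens g f).Nonempty → ν₀ f = 1 := by
        intro f hf; simp [hν₀def, hf]
      have hQ1 : (WordLens g (1 : Γ)).Nonempty := ⟨0, [], by simp, by simp, by simp⟩
      have hQinv : ∀ f : Γ, (WordLens g f).Nonempty → (WordLens g f⁻¹).Nonempty := by
        rintro f ⟨n, hn⟩; exact ⟨n, wordLens_inv hn⟩
      have hQconj : ∀ (c f : Γ), (WordLens g f).Nonempty →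
          (WordLens g (c * f * c⁻¹)).Nonempty := by
        rintro c f ⟨n, hn⟩; exact ⟨n, wordLens_conj c hn⟩
      have hQmul : ∀ a b : Γ, (WordLens g a).Nonempty → (WordLens g b).Nonempty →
          (WordLens g (a * b)).Nonempty := by
        rintro a b ⟨m, hm⟩ ⟨n, hn⟩; exact ⟨m + n, wordLens_mul hm hn⟩
      have hiff : ∀ a b : Γ, (WordLens g (a * b)).Nonempty ↔ (WordLens g (b * a)).Nonempty := by
        have key : ∀ a b : Γ, (WordLens g (a * b)).Nonempty → (WordLens g (b * a)).Nonempty := by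
          intro a b hab
          have := hQconj a⁻¹ _ hab
          have heq : a⁻¹ * (a * b) * a⁻¹⁻¹ = b * a := by group
          rwa [heq] at this
        exact fun a b => ⟨key a b, key b a⟩
      have hsemi : IsCentralSeminorm ν₀ := by
        refine ⟨fun f => ?_, fun f => ?_, fun a b => ?_, fun a b => ?_⟩
        · by_cases hf : (WordLens g f).Nonempty
          · rw [hval f hf]
          · rw [hval' f hf]; norm_num
        · by_cases hf : (WordLens g f).Nonempty
          · rw [hval f hf, hval f⁻¹ (hQinv f hf)]
          · have hf' : ¬ (WordLens g f⁻¹).Nonempty := by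
              intro hh
              have := hQinv f⁻¹ hh
              rw [inv_inv] at this
              exact hf this
            rw [hval' f hf, hval' f⁻¹ hf']
        · by_cases ha : (WordLens g a).Nonempty
          · by_cases hb : (WordLens g b).Nonempty
            · rw [hval a ha, hval b hb, hval _ (hQmul a b ha hb)]; norm_num
            · rw [hval a ha, hval' b hb]
              by_cases hab : (WordLens g (a * b)).Nonempty
              · rw [hval _ hab]; norm_num
              · rw [hval' _ hab]; norm_num
          · rw [hval' a ha]
            by_cases hab : (WordLens g (a * b)).Nonempty
            · rw [hval _ hab]
              by_cases hb : (WordLens g b).Nonempty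
              · rw [hval b hb]; norm_num
              · rw [hval' b hb]; norm_num
            · rw [hval' _ hab]
              by_cases hb : (WordLens g b).Nonempty
              · rw [hval b hb]; norm_num
              · rw [hval' b hb]; norm_num
        · by_cases hab : (WordLens g (a * b)).Nonempty
          · rw [hval _ hab, hval _ ((hiff a b).mp hab)]
          · have hba : ¬ (WordLens g (b * a)).Nonempty := fun hh => hab ((hiff a b).mpr hh)
            rw [hval' _ hab, hval' _ hba]
      have hnt : ∃ f : Γ, ν₀ f ≠ 0 := ⟨f₀, by rw [hval' f₀ (by simp [hf₀])]; norm_num⟩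
      obtain ⟨_, hnorm⟩ := h ν₀ hsemi hnt
      have hQg : (WordLens g g).Nonempty :=
        ⟨1, [g], by simp, by rintro x hx; simp at hx; exact ⟨1, Or.inl (by simp [hx])⟩, by simp⟩
      have := hnorm g hg
      rw [hval g hQg] at this
      exact lt_irrefl 0 this
    -- Step 2: the word-length seminorm
    set ν₁ : Γ → ℝ := fun f => (Nat.cast (sInf (WordLens g f)) : ℝ) with hν₁def
    have hmem : ∀ f : Γ, sInf (WordLens g f) ∈ WordLens g f := fun f => Nat.sInf_mem (hQall f)
    have hle : ∀ (f : Γ) (n : ℕ), n ∈ WordLens g f → sInf (WordLens g f) ≤ n :=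
      fun f n hn => Nat.sInf_le hn
    have hsemi : IsCentralSeminorm ν₁ := by
      refine ⟨fun f => by positivity, fun f => ?_, fun a b => ?_, fun a b => ?_⟩
      · have h1 : sInf (WordLens g f⁻¹) ≤ sInf (WordLens g f) :=
          hle _ _ (wordLens_inv (hmem f))
        have h2 : sInf (WordLens g f) ≤ sInf (WordLens g f⁻¹) := by
          have := wordLens_inv (hmem f⁻¹)
          rw [inv_inv] at this
          exact hle _ _ this
        simp only [hν₁def]
        exact_mod_cast le_antisymm h1 h2
      · have : sInf (WordLens g (a * b)) ≤ sInf (WordLens g a) + sInf (WordLens g b) :=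
          hle _ _ (wordLens_mul (hmem a) (hmem b))
        simp only [hν₁def]
        exact_mod_cast this
      · have key : ∀ a b : Γ, sInf (WordLens g (b * a)) ≤ sInf (WordLens g (a * b)) := by
          intro a b
          have := wordLens_conj a⁻¹ (hmem (a * b))
          have heq : a⁻¹ * (a * b) * a⁻¹⁻¹ = b * a := by group
          rw [heq] at this
          exact hle _ _ this
        simp only [hν₁def]
        exact_mod_cast le_antisymm (key b a) (key a b)
    have hνg : sInf (WordLens g g) = 1 := by
      have h1 : (1 : ℕ) ∈ WordLens g g :=
        ⟨[g], by simp, by rintro x hx; simp at hx; exact ⟨1, Or.inl (by simp [hx])⟩, by simp⟩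
      have h0 : (0 : ℕ) ∉ WordLens g g := by
        rintro ⟨l, hlen, -, hprod⟩
        rw [List.length_eq_zero_iff] at hlen
        rw [hlen] at hprod
        simp at hprod
        exact hg hprod.symm
      have hin := hmem g
      have hub := hle g 1 h1
      interval_cases h : sInf (WordLens g g)
      · exact absurd (h ▸ hin) h0
      · rfl
    have hnt : ∃ f : Γ, ν₁ f ≠ 0 := ⟨g, by simp [hν₁def, hνg]⟩
    obtain ⟨⟨M, hM⟩, -⟩ := h ν₁ hsemi hnt
    refine ⟨⌈M⌉₊, fun f => ?_⟩
    obtain ⟨l, hlen, hS, hprod⟩ := hmem f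
    refine ⟨l, ?_, hS, hprod⟩
    rw [hlen]
    have := hM f
    simp only [hν₁def] at this
    have h2 : (Nat.cast (sInf (WordLens g f)) : ℝ) ≤ (Nat.cast ⌈M⌉₊ : ℝ) :=
      this.trans (Nat.le_ceil M)
    exact_mod_cast h2
end

section
/- If α and hβh⁻¹ commute in a group Γ, then the commutator [α,β] can be written as a product of two h-commutators, i.e., [α,β] ∈ ([Γ,h])² where [Γ,h] = {[g,h] : g ∈ Γ}; explicitly [α,β] = [αβα⁻¹, αhα⁻¹]·[β⁻¹, βhβ⁻¹]. -/
open scoped commutatorElement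

/-- If `α` commutes with `hβh⁻¹`, then `[α,β] = [αβα⁻¹, αhα⁻¹]·[β⁻¹, βhβ⁻¹]`;
in particular `[α,β]` is a product of two `h`-commutators, i.e. a product of two
conjugates of `h` and two conjugates of `h⁻¹`. -/
theorem commutator_eq_product_of_two_h_commutators {Γ : Type*} [Group Γ]
    (α β h : Γ) (hc : Commute α (h * β * h⁻¹)) :
    ⁅α, β⁆ = ⁅α * β * α⁻¹, α * h * α⁻¹⁆ * ⁅β⁻¹, β * h * β⁻¹⁆ ∧
    ∃ a b c d : Γ,
      ⁅α, β⁆ = (a * h * a⁻¹) * (b * h⁻¹ * b⁻¹) * (c * h * c⁻¹) * (d * h⁻¹ * d⁻¹) := by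
  have key := (hc.inv_left.inv_right).eq
  have e1 : ⁅α, β⁆ = ⁅α * β * α⁻¹, α * h * α⁻¹⁆ * ⁅β⁻¹, β * h * β⁻¹⁆ := by
    simp only [commutatorElement_def]
    rw [show (α*β*α⁻¹)*(α*h*α⁻¹)*(α*β*α⁻¹)⁻¹*(α*h*α⁻¹)⁻¹*
        (β⁻¹*(β*h*β⁻¹)*β⁻¹⁻¹*(β*h*β⁻¹)⁻¹) =
        α*β*((h*β*h⁻¹)⁻¹*α⁻¹)*(h*β*h⁻¹)*β⁻¹ by group, ← key]
    group
  refine ⟨e1, α*β, α, 1, β, ?_⟩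
  rw [e1]
  group
end

section
/- Suppose every two elements of a group Γ commute up to conjugation (for all α, β there is h with α·(hβh⁻¹) = (hβh⁻¹)·α). Then every commutator [α,β] in Γ equals a commutator of two elements of the derived subgroup Γ'; in particular Γ' = Γ'' and Γ' is perfect. -/
open scoped commutatorElement

private lemma conj_comm_left {Γ : Type*} [Group Γ] (x c d : Γ) (h : Commute x c) :
    ⁅x, c * d⁆ = c * ⁅x, d⁆ * c⁻¹ := by
  have hx : x * c = c * x := h.eq
  rw [commutatorElement_def, commutatorElement_def]
  calc x * (c * d) * x⁻¹ * (c * d)⁻¹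
      = (x * c) * d * x⁻¹ * d⁻¹ * c⁻¹ := by group
    _ = (c * x) * d * x⁻¹ * d⁻¹ * c⁻¹ := by rw [hx]
    _ = c * (x * d * x⁻¹ * d⁻¹) * c⁻¹ := by group

private lemma conj_comm_conj {Γ : Type*} [Group Γ] (x c d : Γ) (h : Commute x c) :
    ⁅x, c * d * c⁻¹⁆ = c * ⁅x, d⁆ * c⁻¹ := by
  have hx : x * c = c * x := h.eq
  have hxi : c⁻¹ * x⁻¹ = x⁻¹ * c⁻¹ := (h.inv_left.inv_right.eq).symm
  rw [commutatorElement_def, commutatorElement_def]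
  calc x * (c * d * c⁻¹) * x⁻¹ * (c * d * c⁻¹)⁻¹
      = (x * c) * (d * (c⁻¹ * x⁻¹) * c) * d⁻¹ * c⁻¹ := by group
    _ = (c * x) * (d * (x⁻¹ * c⁻¹) * c) * d⁻¹ * c⁻¹ := by rw [hx, hxi]
    _ = c * (x * d * x⁻¹ * d⁻¹) * c⁻¹ := by group

/-- Key step: every commutator `⁅α, β⁆` equals `⁅α, e⁆` for some `e ∈ Γ'`. -/
private lemma step {Γ : Type*} [Group Γ]
    (hc : ∀ α β : Γ, ∃ h : Γ, Commute α (h * β * h⁻¹)) (α β : Γ) :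
    ∃ e ∈ commutator Γ, ⁅α, β⁆ = ⁅α, e⁆ := by
  obtain ⟨h, hcomm⟩ := hc α β
  set c := h * β * h⁻¹ with hc_def
  set d := c⁻¹ * β with hd_def
  have hd_mem : d ∈ commutator Γ := by
    have : d = ⁅h, β⁻¹⁆ := by
      simp only [hd_def, hc_def, commutatorElement_def]; group
    rw [this, commutator_def]
    exact Subgroup.commutator_mem_commutator (Subgroup.mem_top _) (Subgroup.mem_top _)
  refine ⟨c * d * c⁻¹, ?_, ?_⟩
  · exact (Subgroup.commutator_normal ⊤ ⊤).conj_mem d hd_mem c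
  · have hβ : β = c * d := by simp [hd_def]
    rw [hβ, conj_comm_left α c d hcomm, conj_comm_conj α c d hcomm]

/-- If every two elements of `Γ` commute up to conjugation, then every commutator
of `Γ` is a commutator of two elements of the derived subgroup `Γ'`; in
particular `Γ'' = Γ'`, i.e. `Γ'` is perfect. -/
theorem commutator_of_derived_of_commute_up_to_conjugation {Γ : Type*} [Group Γ]
    (hc : ∀ α β : Γ, ∃ h : Γ, Commute α (h * β * h⁻¹)) :
    (∀ α β : Γ, ∃ a ∈ commutator Γ, ∃ b ∈ commutator Γ, ⁅α, β⁆ = ⁅a, b⁆) ∧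
    ⁅commutator Γ, commutator Γ⁆ = commutator Γ := by
  have main : ∀ α β : Γ, ∃ a ∈ commutator Γ, ∃ b ∈ commutator Γ, ⁅α, β⁆ = ⁅a, b⁆ := by
    intro α β
    obtain ⟨e, he, h1⟩ := step hc α β
    obtain ⟨f, hf, h2⟩ := step hc e α
    refine ⟨f, hf, e, he, ?_⟩
    rw [h1, ← commutatorElement_inv, h2, commutatorElement_inv]
  refine ⟨main, le_antisymm (Subgroup.commutator_le_left _ _) ?_⟩
  rw [commutator_def Γ, Subgroup.commutator_le]
  intro g _ h _
  obtain ⟨a, ha, b, hb, hab⟩ := main g h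
  rw [hab]
  exact Subgroup.commutator_mem_commutator ha hb
end

section
/- Let Γ be a group, H ≤ Γ a subgroup, and h ∈ Γ an element such that [f, hⁱg h⁻ⁱ] = 1 for all f, g ∈ H and all 1 ≤ i ≤ k (h k-displaces H), with k ≥ 2. Then every product of at most k commutators of elements of H can be written in the form [α,β][γ,h] for some α, β, γ ∈ Γ. -/
open scoped commutatorElement

namespace BIPaux

variable {Γ : Type*} [Group Γ]

/-- `conjProd h f [p₁,…,pₙ] = f p₁ * h (f p₂) h⁻¹ * h² (f p₃) h⁻² * ⋯`. -/
def conjProd (h : Γ) (f : Γ × Γ → Γ) : List (Γ × Γ) → Γ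
  | [] => 1
  | p :: l => f p * (h * conjProd h f l * h⁻¹)

/-- If `u, v` commute with `a, b`, the commutator of products splits. -/
theorem comm_split (a b u v : Γ) (h1 : Commute a u) (h2 : Commute a v)
    (h3 : Commute b u) (h4 : Commute b v) :
    ⁅a * u, b * v⁆ = ⁅a, b⁆ * ⁅u, v⁆ := by
  have ha : Commute a⁻¹ (u * v * (u⁻¹ * v⁻¹)) :=
    (h1.inv_left.mul_right h2.inv_left).mul_right
      (h1.inv_left.inv_right.mul_right h2.inv_left.inv_right)
  have hb : Commute b⁻¹ (u * v * (u⁻¹ * v⁻¹)) :=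
    (h3.inv_left.mul_right h4.inv_left).mul_right
      (h3.inv_left.inv_right.mul_right h4.inv_left.inv_right)
  have hC : Commute (a⁻¹ * b⁻¹) (u * v * (u⁻¹ * v⁻¹)) := ha.mul_left hb
  have e1 : a * u * (b * v) = a * b * (u * v) := h3.symm.mul_mul_mul_comm a v
  have e2 : u⁻¹ * a⁻¹ * (v⁻¹ * b⁻¹) = u⁻¹ * v⁻¹ * (a⁻¹ * b⁻¹) :=
    (h2.inv_left.inv_right).mul_mul_mul_comm u⁻¹ b⁻¹
  calc ⁅a * u, b * v⁆ = (a * u * (b * v)) * (u⁻¹ * a⁻¹ * (v⁻¹ * b⁻¹)) := by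
        rw [commutatorElement_def]; group
    _ = (a * b * (u * v)) * (u⁻¹ * v⁻¹ * (a⁻¹ * b⁻¹)) := by rw [e1, e2]
    _ = (a * b) * ((u * v * (u⁻¹ * v⁻¹)) * (a⁻¹ * b⁻¹)) := by group
    _ = (a * b) * ((a⁻¹ * b⁻¹) * (u * v * (u⁻¹ * v⁻¹))) := by rw [← hC.eq]
    _ = ⁅a, b⁆ * ⁅u, v⁆ := by rw [commutatorElement_def, commutatorElement_def]; group

theorem commEl_mem {H : Subgroup Γ} {a b : Γ} (ha : a ∈ H) (hb : b ∈ H) :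
    ⁅a, b⁆ ∈ H := by
  rw [commutatorElement_def]
  exact mul_mem (mul_mem (mul_mem ha hb) (inv_mem ha)) (inv_mem hb)

/-- The key algebraic step of the induction. -/
theorem key (h z' γ' x : Γ) (hx : x = z' * ⁅γ', h⁆)
    (hc : x * (h * z' * h⁻¹) = (h * z' * h⁻¹) * x) :
    x = (h * z' * h⁻¹) * ⁅x * (h * γ' * h⁻¹), h⁆ := by
  have h2 : ⁅x * (h * γ' * h⁻¹), h⁆ = x * (h * z' * h⁻¹)⁻¹ := by
    subst hx
    rw [commutatorElement_def, commutatorElement_def]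
    group
  rw [h2, ← mul_assoc, ← hc]
  group

end BIPaux

/-- Burago–Ivanov–Polterovich: if `h` `k`-displaces the subgroup `H` (with
`k ≥ 2`), then every product of at most `k` commutators of elements of `H` is of
the form `[α,β][γ,h]`. -/
theorem product_of_commutators_of_k_displaces {Γ : Type*} [Group Γ]
    (H : Subgroup Γ) (h : Γ) (k : ℕ) (hk : 2 ≤ k)
    (hdisp : ∀ f g : Γ, f ∈ H → g ∈ H → ∀ i : ℕ, 1 ≤ i → i ≤ k →
      Commute f (h ^ i * g * (h ^ i)⁻¹))
    (f : Γ)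
    (hf : ∃ l : List (Γ × Γ), l.length ≤ k ∧ (∀ p ∈ l, p.1 ∈ H ∧ p.2 ∈ H) ∧
      (l.map fun p => ⁅p.1, p.2⁆).prod = f) :
    ∃ α β γ : Γ, f = ⁅α, β⁆ * ⁅γ, h⁆ := by
  classical
  obtain ⟨l, hlen, hmem, hprod⟩ := hf
  -- the subgroup generated by the conjugates of `H` by `h^j`, `1 ≤ j ≤ k`
  set S : Set Γ := {x | ∃ g ∈ H, ∃ j : ℕ, 1 ≤ j ∧ j ≤ k ∧ x = h ^ j * g * (h ^ j)⁻¹}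
    with hS
  set K : Subgroup Γ := Subgroup.closure S with hK
  -- every element of `H` commutes with every element of `K`
  have lemA : ∀ x ∈ H, ∀ y ∈ K, Commute x y := by
    intro x hx y hy
    induction hy using Subgroup.closure_induction with
    | mem z hz =>
      obtain ⟨g, hg, j, hj1, hjk, rfl⟩ := hz
      exact hdisp x g hx hg j hj1 hjk
    | one => exact Commute.one_right x
    | mul y z _ _ hy hz => exact hy.mul_right hz
    | inv y _ hy => exact hy.inv_right
  -- conjugates of `conjProd` lie in `K`
  have lemB : ∀ (l' : List (Γ × Γ)) (φ : Γ × Γ → Γ), (∀ p ∈ l', φ p ∈ H) →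
      ∀ j : ℕ, 1 ≤ j → j + l'.length ≤ k + 1 →
      h ^ j * BIPaux.conjProd h φ l' * (h ^ j)⁻¹ ∈ K := by
    intro l'
    induction l' with
    | nil =>
      intro φ _ j _ _
      simpa [BIPaux.conjProd] using K.one_mem
    | cons p t ih =>
      intro φ hφ j hj1 hjk
      simp only [List.length_cons] at hjk
      have hsplit : h ^ j * BIPaux.conjProd h φ (p :: t) * (h ^ j)⁻¹ =
          (h ^ j * φ p * (h ^ j)⁻¹) *
            (h ^ (j + 1) * BIPaux.conjProd h φ t * (h ^ (j + 1))⁻¹) := by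
        simp only [BIPaux.conjProd, pow_succ]
        group
      rw [hsplit]
      refine K.mul_mem ?_ ?_
      · apply Subgroup.subset_closure
        exact ⟨φ p, hφ p (List.mem_cons_self), j, hj1, by omega, rfl⟩
      · exact ih φ (fun q hq => hφ q (List.mem_cons_of_mem p hq)) (j + 1)
          (by omega) (by omega)
  -- commuting with `h^1`-conjugates, in convenient form
  have lemB1 : ∀ (l' : List (Γ × Γ)) (φ : Γ × Γ → Γ), (∀ p ∈ l', φ p ∈ H) →
      l'.length ≤ k → ∀ x ∈ H, Commute x (h * BIPaux.conjProd h φ l' * h⁻¹) := by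
    intro l' φ hφ hlen' x hx
    have := lemB l' φ hφ 1 le_rfl (by omega)
    rw [pow_one] at this
    exact lemA x hx _ this
  -- `z = ⁅A, B⁆`
  have lemC : ∀ (l' : List (Γ × Γ)), (∀ p ∈ l', p.1 ∈ H ∧ p.2 ∈ H) →
      l'.length ≤ k →
      BIPaux.conjProd h (fun p => ⁅p.1, p.2⁆) l' =
        ⁅BIPaux.conjProd h Prod.fst l', BIPaux.conjProd h Prod.snd l'⁆ := by
    intro l'
    induction l' with
    | nil => simp [BIPaux.conjProd]
    | cons p t ih =>
      intro hmem' hlen'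
      have hmt : ∀ q ∈ t, q.1 ∈ H ∧ q.2 ∈ H := fun q hq =>
        hmem' q (List.mem_cons_of_mem p hq)
      have hlt : t.length ≤ k := by
        simp only [List.length_cons] at hlen'; omega
      have hp1 : p.1 ∈ H := (hmem' p (List.mem_cons_self)).1
      have hp2 : p.2 ∈ H := (hmem' p (List.mem_cons_self)).2
      have c1 := lemB1 t Prod.fst (fun q hq => (hmt q hq).1) hlt
      have c2 := lemB1 t Prod.snd (fun q hq => (hmt q hq).2) hlt
      simp only [BIPaux.conjProd]
      rw [ih hmt hlt]
      rw [BIPaux.comm_split p.1 p.2 (h * BIPaux.conjProd h Prod.fst t * h⁻¹)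
        (h * BIPaux.conjProd h Prod.snd t * h⁻¹)
        (c1 p.1 hp1) (c2 p.1 hp1) (c1 p.2 hp2) (c2 p.2 hp2)]
      congr 1
      rw [commutatorElement_def, commutatorElement_def]
      group
  -- main induction: the product equals `z * ⁅γ, h⁆`
  have lemD : ∀ (l' : List (Γ × Γ)), (∀ p ∈ l', p.1 ∈ H ∧ p.2 ∈ H) →
      l'.length ≤ k → ∃ γ : Γ,
      (l'.map fun p => ⁅p.1, p.2⁆).prod =
        BIPaux.conjProd h (fun p => ⁅p.1, p.2⁆) l' * ⁅γ, h⁆ := by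
    intro l'
    induction l' with
    | nil => exact fun _ _ => ⟨1, by simp [BIPaux.conjProd]⟩
    | cons p t ih =>
      intro hmem' hlen'
      have hmt : ∀ q ∈ t, q.1 ∈ H ∧ q.2 ∈ H := fun q hq =>
        hmem' q (List.mem_cons_of_mem p hq)
      have hlt : t.length ≤ k := by
        simp only [List.length_cons] at hlen'; omega
      obtain ⟨γ', hγ'⟩ := ih hmt hlt
      set x : Γ := (t.map fun p => ⁅p.1, p.2⁆).prod with hxdef
      have hxH : x ∈ H := by
        apply H.list_prod_mem
        intro y hy
        simp only [List.mem_map] at hy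
        obtain ⟨q, hq, rfl⟩ := hy
        exact BIPaux.commEl_mem (hmt q hq).1 (hmt q hq).2
      have hcomm : x * (h * BIPaux.conjProd h (fun p => ⁅p.1, p.2⁆) t * h⁻¹) =
          (h * BIPaux.conjProd h (fun p => ⁅p.1, p.2⁆) t * h⁻¹) * x := by
        have := lemB1 t (fun p => ⁅p.1, p.2⁆)
          (fun q hq => BIPaux.commEl_mem (hmt q hq).1 (hmt q hq).2) hlt x hxH
        exact this.eq
      refine ⟨x * (h * γ' * h⁻¹), ?_⟩
      have keyeq := BIPaux.key h (BIPaux.conjProd h (fun p => ⁅p.1, p.2⁆) t) γ' x hγ' hcomm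
      simp only [List.map_cons, List.prod_cons, BIPaux.conjProd, ← hxdef]
      rw [mul_assoc]
      rw [← keyeq]
  -- assemble
  obtain ⟨γ, hγ⟩ := lemD l hmem hlen
  refine ⟨BIPaux.conjProd h Prod.fst l, BIPaux.conjProd h Prod.snd l, γ, ?_⟩
  rw [← hprod, hγ, lemC l hmem hlen]
end

section
/- Let Γ be a group and g ∈ Γ such that for every finitely generated subgroup H ≤ Γ and every k ∈ ℕ, some conjugate of g k-displaces H. Then every element of the derived subgroup Γ' is a product of three g-commutators; equivalently Γ' ⊆ (ᴳg · ᴳ(g⁻¹))³ where ᴳg denotes the conjugacy class of g. -/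
namespace ThreeGComm

variable {Γ : Type*} [Group Γ]

/-- Product of commutators determined by a list of pairs. -/
def fprod : List (Γ × Γ) → Γ
  | [] => 1
  | p :: l => p.1 * p.2 * p.1⁻¹ * p.2⁻¹ * fprod l

def Aprod (c : Γ) : List (Γ × Γ) → Γ
  | [] => 1
  | p :: l => c * (p.1 * Aprod c l) * c⁻¹

def Bprod (c : Γ) : List (Γ × Γ) → Γ
  | [] => 1
  | p :: l => c * (p.2 * Bprod c l) * c⁻¹

def Uprod (c : Γ) : List (Γ × Γ) → Γ
  | [] => 1
  | p :: l => c * (p.1 * p.2 * p.1⁻¹ * p.2⁻¹ * fprod l * Uprod c l) * c⁻¹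

@[simp] lemma fprod_nil : fprod ([] : List (Γ × Γ)) = 1 := rfl
@[simp] lemma fprod_cons (p : Γ × Γ) (l : List (Γ × Γ)) :
    fprod (p :: l) = p.1 * p.2 * p.1⁻¹ * p.2⁻¹ * fprod l := rfl

lemma fprod_append (l₁ l₂ : List (Γ × Γ)) :
    fprod (l₁ ++ l₂) = fprod l₁ * fprod l₂ := by
  induction l₁ with
  | nil => simp
  | cons p l ih => simp [ih, mul_assoc]

lemma fprod_inv (l : List (Γ × Γ)) :
    fprod ((l.map Prod.swap).reverse) = (fprod l)⁻¹ := by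
  induction l with
  | nil => simp
  | cons p l ih =>
    have : ((p :: l).map Prod.swap).reverse = (l.map Prod.swap).reverse ++ [p.swap] := by
      simp
    rw [this, fprod_append, ih]
    simp only [fprod_cons, fprod_nil, Prod.fst_swap, Prod.snd_swap]
    group

lemma exists_fprod {x : Γ} (hx : x ∈ commutator Γ) :
    ∃ l : List (Γ × Γ), fprod l = x := by
  rw [commutator_eq_closure] at hx
  refine Subgroup.closure_induction ?_ ?_ ?_ ?_ hx
  · rintro y ⟨a, b, rfl⟩
    exact ⟨[(a, b)], by simp [commutatorElement_def]⟩
  · exact ⟨[], rfl⟩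
  · rintro y z _ _ ⟨l₁, rfl⟩ ⟨l₂, rfl⟩
    exact ⟨l₁ ++ l₂, fprod_append l₁ l₂⟩
  · rintro y _ ⟨l, rfl⟩
    exact ⟨(l.map Prod.swap).reverse, fprod_inv l⟩

/-- The subgroup generated by the conjugates `c^i H c^{-i}`, `1 ≤ i ≤ m`. -/
def K (c : Γ) (H : Subgroup Γ) (m : ℕ) : Subgroup Γ :=
  Subgroup.closure {x | ∃ i : ℕ, 1 ≤ i ∧ i ≤ m ∧ ∃ h ∈ H, x = c ^ i * h * (c ^ i)⁻¹}

lemma commute_of_mem_K {c : Γ} {H : Subgroup Γ} {k m : ℕ}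
    (hc : ∀ h ∈ H, ∀ h' ∈ H, ∀ i : ℕ, 1 ≤ i → i ≤ k →
      Commute h (c ^ i * h' * (c ^ i)⁻¹))
    (hm : m ≤ k) {h x : Γ} (hh : h ∈ H) (hx : x ∈ K c H m) : Commute h x := by
  have hle : K c H m ≤ Subgroup.centralizer {h} := by
    refine (Subgroup.closure_le _).mpr ?_
    rintro y ⟨i, hi1, hi2, h', hh', rfl⟩
    refine Subgroup.mem_centralizer_iff.mpr ?_
    intro z hz
    rw [Set.mem_singleton_iff] at hz
    subst hz
    exact hc z hh h' hh' i hi1 (hi2.trans hm)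
  have := Subgroup.mem_centralizer_iff.mp (hle hx) h rfl
  exact this

lemma conj_mem_K {c : Γ} {H : Subgroup Γ} {m : ℕ} {x : Γ} (hx : x ∈ K c H m) :
    c * x * c⁻¹ ∈ K c H (m + 1) := by
  refine Subgroup.closure_induction ?_ ?_ ?_ ?_ hx
  · rintro y ⟨i, hi1, hi2, h, hh, rfl⟩
    have h1 : c * (c ^ i * h * (c ^ i)⁻¹) * c⁻¹ = c ^ (i + 1) * h * (c ^ (i + 1))⁻¹ := by
      rw [pow_succ']; group
    rw [h1]
    exact Subgroup.subset_closure ⟨i + 1, le_trans hi1 (Nat.le_succ i),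
      Nat.succ_le_succ hi2, h, hh, rfl⟩
  · have : c * (1 : Γ) * c⁻¹ = 1 := by group
    rw [this]; exact one_mem _
  · intro y z _ _ hy hz
    have : c * (y * z) * c⁻¹ = (c * y * c⁻¹) * (c * z * c⁻¹) := by group
    rw [this]; exact mul_mem hy hz
  · intro y _ hy
    have : c * y⁻¹ * c⁻¹ = (c * y * c⁻¹)⁻¹ := by group
    rw [this]; exact inv_mem hy

lemma conj_H_mem_K {c : Γ} {H : Subgroup Γ} {m : ℕ} {h : Γ} (hh : h ∈ H) :
    c * h * c⁻¹ ∈ K c H (m + 1) :=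
  Subgroup.subset_closure ⟨1, le_refl 1, Nat.succ_le_succ (Nat.zero_le m), h, hh,
    by rw [pow_one]⟩

lemma fprod_mem {H : Subgroup Γ} {l : List (Γ × Γ)}
    (hl : ∀ p ∈ l, p.1 ∈ H ∧ p.2 ∈ H) : fprod l ∈ H := by
  induction l with
  | nil => simp
  | cons p l ih =>
    have hp := hl p (List.mem_cons_self)
    exact mul_mem (mul_mem (mul_mem (mul_mem hp.1 hp.2) (inv_mem hp.1)) (inv_mem hp.2))
      (ih fun q hq => hl q (List.mem_cons_of_mem p hq))

lemma Aprod_mem {c : Γ} {H : Subgroup Γ} {l : List (Γ × Γ)}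
    (hl : ∀ p ∈ l, p.1 ∈ H ∧ p.2 ∈ H) : Aprod c l ∈ K c H l.length := by
  induction l with
  | nil => exact one_mem _
  | cons p l ih =>
    show c * (p.1 * Aprod c l) * c⁻¹ ∈ K c H (l.length + 1)
    have h1 : c * (p.1 * Aprod c l) * c⁻¹ = (c * p.1 * c⁻¹) * (c * Aprod c l * c⁻¹) := by
      group
    rw [h1]
    exact mul_mem (conj_H_mem_K (hl p (List.mem_cons_self)).1)
      (conj_mem_K (ih fun q hq => hl q (List.mem_cons_of_mem p hq)))

lemma Bprod_mem {c : Γ} {H : Subgroup Γ} {l : List (Γ × Γ)}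
    (hl : ∀ p ∈ l, p.1 ∈ H ∧ p.2 ∈ H) : Bprod c l ∈ K c H l.length := by
  induction l with
  | nil => exact one_mem _
  | cons p l ih =>
    show c * (p.2 * Bprod c l) * c⁻¹ ∈ K c H (l.length + 1)
    have h1 : c * (p.2 * Bprod c l) * c⁻¹ = (c * p.2 * c⁻¹) * (c * Bprod c l * c⁻¹) := by
      group
    rw [h1]
    exact mul_mem (conj_H_mem_K (hl p (List.mem_cons_self)).2)
      (conj_mem_K (ih fun q hq => hl q (List.mem_cons_of_mem p hq)))

lemma Uprod_mem {c : Γ} {H : Subgroup Γ} {l : List (Γ × Γ)}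
    (hl : ∀ p ∈ l, p.1 ∈ H ∧ p.2 ∈ H) : Uprod c l ∈ K c H l.length := by
  induction l with
  | nil => exact one_mem _
  | cons p l ih =>
    show c * (p.1 * p.2 * p.1⁻¹ * p.2⁻¹ * fprod l * Uprod c l) * c⁻¹ ∈ K c H (l.length + 1)
    have h1 : c * (p.1 * p.2 * p.1⁻¹ * p.2⁻¹ * fprod l * Uprod c l) * c⁻¹ =
        (c * (p.1 * p.2 * p.1⁻¹ * p.2⁻¹ * fprod l) * c⁻¹) * (c * Uprod c l * c⁻¹) := by
      group
    rw [h1]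
    have hp := hl p (List.mem_cons_self)
    have hfH : p.1 * p.2 * p.1⁻¹ * p.2⁻¹ * fprod l ∈ H :=
      mul_mem (mul_mem (mul_mem (mul_mem hp.1 hp.2) (inv_mem hp.1)) (inv_mem hp.2))
        (fprod_mem fun q hq => hl q (List.mem_cons_of_mem p hq))
    exact mul_mem (conj_H_mem_K hfH)
      (conj_mem_K (ih fun q hq => hl q (List.mem_cons_of_mem p hq)))

/-- The key identity: the commutator of the shifted products `A`, `B` encodes the
product of commutators `fprod l` up to a `c`-commutator correction. -/
lemma key_identity {c : Γ} {H : Subgroup Γ} {k : ℕ}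
    (hc : ∀ h ∈ H, ∀ h' ∈ H, ∀ i : ℕ, 1 ≤ i → i ≤ k →
      Commute h (c ^ i * h' * (c ^ i)⁻¹)) :
    ∀ l : List (Γ × Γ), l.length ≤ k → (∀ p ∈ l, p.1 ∈ H ∧ p.2 ∈ H) →
      Aprod c l * Bprod c l * (Aprod c l)⁻¹ * (Bprod c l)⁻¹
        = Uprod c l * c⁻¹ * (Uprod c l)⁻¹ * c * fprod l := by
  intro l
  induction l with
  | nil => intro _ _; simp [Aprod, Bprod, Uprod]
  | cons p l ih =>
    intro hlen hl
    have hlen' : l.length ≤ k := le_trans (Nat.le_succ _) hlen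
    have hl' : ∀ q ∈ l, q.1 ∈ H ∧ q.2 ∈ H := fun q hq => hl q (List.mem_cons_of_mem p hq)
    have hp := hl p (List.mem_cons_self)
    set a := p.1 with ha
    set b := p.2 with hb
    set A' := Aprod c l with hA'
    set B' := Bprod c l with hB'
    set U' := Uprod c l with hU'
    set f' := fprod l with hf'
    have hA'K : A' ∈ K c H l.length := Aprod_mem hl'
    have hB'K : B' ∈ K c H l.length := Bprod_mem hl'
    have hCBK : A' * B' * A'⁻¹ * B'⁻¹ ∈ K c H l.length :=
      mul_mem (mul_mem (mul_mem hA'K hB'K) (inv_mem hA'K)) (inv_mem hB'K)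
    have hf'H : f' ∈ H := fprod_mem hl'
    have hbA : Commute b A' := commute_of_mem_K hc hlen' hp.2 hA'K
    have haB : Commute a B' := commute_of_mem_K hc hlen' hp.1 hB'K
    have haCB : Commute a (A' * B' * A'⁻¹ * B'⁻¹) := commute_of_mem_K hc hlen' hp.1 hCBK
    have hbCB : Commute b (A' * B' * A'⁻¹ * B'⁻¹) := commute_of_mem_K hc hlen' hp.2 hCBK
    have hfCB : Commute f' (A' * B' * A'⁻¹ * B'⁻¹) := commute_of_mem_K hc hlen' hf'H hCBK
    have hstep : (a * A') * (b * B') * (a * A')⁻¹ * (b * B')⁻¹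
        = (a * b * a⁻¹ * b⁻¹) * f' * (A' * B' * A'⁻¹ * B'⁻¹) * f'⁻¹ := by
      calc (a * A') * (b * B') * (a * A')⁻¹ * (b * B')⁻¹
          = a * (A' * b) * (B' * A'⁻¹) * (a⁻¹ * B'⁻¹) * b⁻¹ := by group
        _ = a * (b * A') * (B' * A'⁻¹) * (a⁻¹ * B'⁻¹) * b⁻¹ := by rw [← hbA.eq]
        _ = a * (b * A') * (B' * A'⁻¹) * (B'⁻¹ * a⁻¹) * b⁻¹ := by
            rw [(haB.inv_left.inv_right).eq]
        _ = a * b * ((A' * B' * A'⁻¹ * B'⁻¹) * a⁻¹) * b⁻¹ := by group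
        _ = a * b * (a⁻¹ * (A' * B' * A'⁻¹ * B'⁻¹)) * b⁻¹ := by rw [← haCB.inv_left.eq]
        _ = a * b * a⁻¹ * ((A' * B' * A'⁻¹ * B'⁻¹) * b⁻¹) := by group
        _ = a * b * a⁻¹ * (b⁻¹ * (A' * B' * A'⁻¹ * B'⁻¹)) := by rw [← hbCB.inv_left.eq]
        _ = a * b * a⁻¹ * b⁻¹ * (A' * B' * A'⁻¹ * B'⁻¹) := by group
        _ = a * b * a⁻¹ * b⁻¹ * (f' * (A' * B' * A'⁻¹ * B'⁻¹) * f'⁻¹) := by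
            rw [hfCB.eq]; group
        _ = (a * b * a⁻¹ * b⁻¹) * f' * (A' * B' * A'⁻¹ * B'⁻¹) * f'⁻¹ := by group
    have ihe := ih hlen' hl'
    show (c * (a * A') * c⁻¹) * (c * (b * B') * c⁻¹) * (c * (a * A') * c⁻¹)⁻¹ *
          (c * (b * B') * c⁻¹)⁻¹
        = (c * (a * b * a⁻¹ * b⁻¹ * f' * U') * c⁻¹) * c⁻¹ *
          (c * (a * b * a⁻¹ * b⁻¹ * f' * U') * c⁻¹)⁻¹ * c * (a * b * a⁻¹ * b⁻¹ * f')
    calc (c * (a * A') * c⁻¹) * (c * (b * B') * c⁻¹) * (c * (a * A') * c⁻¹)⁻¹ *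
          (c * (b * B') * c⁻¹)⁻¹
        = c * ((a * A') * (b * B') * (a * A')⁻¹ * (b * B')⁻¹) * c⁻¹ := by group
      _ = c * ((a * b * a⁻¹ * b⁻¹) * f' * (A' * B' * A'⁻¹ * B'⁻¹) * f'⁻¹) * c⁻¹ := by
          rw [hstep]
      _ = c * ((a * b * a⁻¹ * b⁻¹) * f' * (U' * c⁻¹ * U'⁻¹ * c * f') * f'⁻¹) * c⁻¹ := by
          rw [ihe]
      _ = (c * (a * b * a⁻¹ * b⁻¹ * f' * U') * c⁻¹) * c⁻¹ *
          (c * (a * b * a⁻¹ * b⁻¹ * f' * U') * c⁻¹)⁻¹ * c * (a * b * a⁻¹ * b⁻¹ * f') := by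
          group

end ThreeGComm

open ThreeGComm in
/-- If for every finitely generated subgroup `H ≤ Γ` and every `k` some conjugate
of `g` `k`-displaces `H`, then every element of the derived subgroup `Γ'` is a
product of three `g`-commutators, i.e. of three conjugates of `g` and three
conjugates of `g⁻¹` (alternating). -/
theorem derived_in_three_g_commutators {Γ : Type*} [Group Γ] (g : Γ)
    (hdisp : ∀ H : Subgroup Γ, H.FG → ∀ k : ℕ, ∃ γ : Γ,
      ∀ f g' : Γ, f ∈ H → g' ∈ H → ∀ i : ℕ, 1 ≤ i → i ≤ k →
        Commute f ((γ * g * γ⁻¹) ^ i * g' * ((γ * g * γ⁻¹) ^ i)⁻¹)) :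
    ∀ f ∈ commutator Γ, ∃ a₁ b₁ a₂ b₂ a₃ b₃ : Γ,
      f = (a₁ * g * a₁⁻¹) * (b₁ * g⁻¹ * b₁⁻¹) * (a₂ * g * a₂⁻¹) *
          (b₂ * g⁻¹ * b₂⁻¹) * (a₃ * g * a₃⁻¹) * (b₃ * g⁻¹ * b₃⁻¹) := by
  intro f hf
  obtain ⟨lp, hlp⟩ := exists_fprod hf
  haveI := Classical.decEq Γ
  -- the finitely generated subgroup containing all the entries of `lp`
  set S : Finset Γ := (lp.map Prod.fst ++ lp.map Prod.snd).toFinset with hS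
  set H : Subgroup Γ := Subgroup.closure (S : Set Γ) with hH
  have hHfg : H.FG := (Subgroup.fg_iff H).mpr ⟨(S : Set Γ), rfl, S.finite_toSet⟩
  have hmem : ∀ p ∈ lp, p.1 ∈ H ∧ p.2 ∈ H := by
    intro p hp
    have h1 : p.1 ∈ lp.map Prod.fst ++ lp.map Prod.snd :=
      List.mem_append.mpr (Or.inl (List.mem_map.mpr ⟨p, hp, rfl⟩))
    have h2 : p.2 ∈ lp.map Prod.fst ++ lp.map Prod.snd :=
      List.mem_append.mpr (Or.inr (List.mem_map.mpr ⟨p, hp, rfl⟩))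
    exact ⟨Subgroup.subset_closure (Finset.mem_coe.mpr (List.mem_toFinset.mpr h1)),
      Subgroup.subset_closure (Finset.mem_coe.mpr (List.mem_toFinset.mpr h2))⟩
  obtain ⟨γ, hγ⟩ := hdisp H hHfg lp.length
  set c : Γ := γ * g * γ⁻¹ with hcdef
  have hc : ∀ h ∈ H, ∀ h' ∈ H, ∀ i : ℕ, 1 ≤ i → i ≤ lp.length →
      Commute h (c ^ i * h' * (c ^ i)⁻¹) :=
    fun h hh h' hh' i hi1 hi2 => hγ h h' hh hh' i hi1 hi2
  have keyid := key_identity hc lp (le_refl _) hmem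
  set A : Γ := Aprod c lp with hAdef
  set B : Γ := Bprod c lp with hBdef
  set U : Γ := Uprod c lp with hUdef
  -- second displacement, for the subgroup generated by A and B
  have hH2fg : (Subgroup.closure ({A, B} : Set Γ)).FG :=
    (Subgroup.fg_iff _).mpr ⟨({A, B} : Set Γ), rfl,
      (Set.finite_singleton B).insert A⟩
  obtain ⟨γ', hγ'⟩ := hdisp (Subgroup.closure ({A, B} : Set Γ)) hH2fg 1
  set c' : Γ := γ' * g * γ'⁻¹ with hc'def
  have hAB : Commute A (c' * B * c'⁻¹) := by
    have := hγ' A B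
      (Subgroup.subset_closure (Set.mem_insert A {B}))
      (Subgroup.subset_closure (Set.mem_insert_of_mem A rfl)) 1 le_rfl le_rfl
    rwa [pow_one] at this
  have hAB' : A⁻¹ * (c' * B * c'⁻¹) = (c' * B * c'⁻¹) * A⁻¹ := hAB.inv_left.eq
  refine ⟨c⁻¹ * U * γ, γ, A * B * γ', A * γ', γ', B * γ', ?_⟩
  have expand :
      ((c⁻¹ * U * γ) * g * (c⁻¹ * U * γ)⁻¹) * (γ * g⁻¹ * γ⁻¹) *
        ((A * B * γ') * g * (A * B * γ')⁻¹) * ((A * γ') * g⁻¹ * (A * γ')⁻¹) *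
        (γ' * g * γ'⁻¹) * ((B * γ') * g⁻¹ * (B * γ')⁻¹)
      = c⁻¹ * U * c * U⁻¹ * (A * B * c' * B⁻¹ * c'⁻¹ * (A⁻¹ * (c' * B * c'⁻¹)) * B⁻¹) := by
    rw [hcdef, hc'def]; group
  rw [expand, hAB']
  have collapse :
      c⁻¹ * U * c * U⁻¹ * (A * B * c' * B⁻¹ * c'⁻¹ * ((c' * B * c'⁻¹) * A⁻¹) * B⁻¹)
      = c⁻¹ * U * c * U⁻¹ * (A * B * A⁻¹ * B⁻¹) := by group
  rw [collapse, keyid]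
  group
  rw [hlp]
end

section
/- Let Γ be a group acting faithfully by order-preserving bijections on a linear order (I,≤). If the action is bounded (every element's support lies in some open interval (a,b)) and proximal (for all a<b and c<d in I there is g ∈ Γ with g(a) < c and d < g(b)), then the commutator subgroup Γ' is 6-uniformly simple: for every nontrivial f ∈ Γ' and nontrivial h ∈ Γ', f is a product of at most 6 conjugates (in Γ') of h or h⁻¹. -/
namespace UnifSix

variable {Γ : Type*} [Group Γ] {I : Type*} [LinearOrder I] [MulAction Γ I]

def FixOut (g : Γ) (a b : I) : Prop := ∀ x : I, x ≤ a ∨ b ≤ x → g • x = x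

theorem smul_lt (hord : ∀ g : Γ, ∀ x y : I, x ≤ y → g • x ≤ g • y)
    (g : Γ) {x y : I} (hxy : x < y) : g • x < g • y := by
  refine (hord g x y hxy.le).lt_of_ne fun e => hxy.ne ?_
  have := congrArg (fun z => g⁻¹ • z) e
  simpa using this


theorem lt_of_smul_lt (hord : ∀ g : Γ, ∀ x y : I, x ≤ y → g • x ≤ g • y)
    {g : Γ} {x y : I} (h : g • x < g • y) : x < y := by
  by_contra hle
  push_neg at hle
  exact absurd (hord g y x hle) (not_le.mpr h)

theorem FixOut.mono {g : Γ} {a b a' b' : I} (h : FixOut g a b)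
    (ha : a' ≤ a) (hb : b ≤ b') : FixOut g a' b' := by
  intro x hx
  refine h x ?_
  rcases hx with h1 | h1
  · exact Or.inl (h1.trans ha)
  · exact Or.inr (hb.trans h1)

theorem FixOut.mul {g g' : Γ} {a b : I} (h : FixOut g a b) (h' : FixOut g' a b) :
    FixOut (g * g') a b := by
  intro x hx
  rw [mul_smul, h' x hx, h x hx]

theorem FixOut.inv {g : Γ} {a b : I} (h : FixOut g a b) : FixOut g⁻¹ a b := by
  intro x hx
  have hgx := h x hx
  calc g⁻¹ • x = g⁻¹ • (g • x) := by rw [hgx]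
    _ = x := inv_smul_smul g x

theorem FixOut.conj (hord : ∀ g : Γ, ∀ x y : I, x ≤ y → g • x ≤ g • y)
    {g : Γ} {a b : I} (h : FixOut g a b) (t : Γ) :
    FixOut (t * g * t⁻¹) (t • a) (t • b) := by
  intro x hx
  have hx' : t⁻¹ • x ≤ a ∨ b ≤ t⁻¹ • x := by
    rcases hx with h1 | h1
    · left
      have := hord t⁻¹ _ _ h1
      rwa [inv_smul_smul] at this
    · right
      have := hord t⁻¹ _ _ h1
      rwa [inv_smul_smul] at this
  rw [mul_smul, mul_smul, h _ hx', smul_inv_smul]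

theorem fixOut_one (a b : I) : FixOut (1 : Γ) a b := fun x _ => one_smul _ x

theorem commute_disjoint (hord : ∀ g : Γ, ∀ x y : I, x ≤ y → g • x ≤ g • y)
    (hfaith : ∀ g : Γ, (∀ x : I, g • x = x) → g = 1)
    {u v : Γ} {a b c d : I} (hu : FixOut u a b) (hv : FixOut v c d)
    (hbc : b ≤ c) : u * v = v * u := by
  have key : ∀ x : I, u • (v • x) = v • (u • x) := by
    intro x
    rcases le_or_gt b x with hbx | hxb
    · have hux : u • x = x := hu x (Or.inr hbx)
      have huvx : u • (v • x) = v • x := by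
        rcases le_or_gt x c with hxc | hcx
        · rw [hv x (Or.inl hxc), hux]
        · have hvc : v • c = c := hv c (Or.inl le_rfl)
          have : c < v • x := by
            have := smul_lt hord v hcx
            rwa [hvc] at this
          exact hu _ (Or.inr (hbc.trans this.le))
      rw [huvx, hux]
    · have hvx : v • x = x := hv x (Or.inl (hxb.le.trans hbc))
      have hvux : v • (u • x) = u • x := by
        rcases le_or_gt x a with hxa | hax
        · rw [hu x (Or.inl hxa), hvx]
        · have hub : u • b = b := hu b (Or.inr le_rfl)
          have : u • x < b := by
            have := smul_lt hord u hxb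
            rwa [hub] at this
          exact hv _ (Or.inl (this.le.trans hbc))
      rw [hvx, hvux]
  have h1 : (v * u)⁻¹ * (u * v) = 1 := by
    apply hfaith
    intro x
    rw [mul_smul, mul_smul, key, ← mul_smul v u, inv_smul_smul]
  exact (inv_mul_eq_one.mp h1).symm

variable {G : Type*} [Group G]

theorem comm_inv_left' {X Y : G} (h : X * Y = Y * X) : X⁻¹ * Y = Y * X⁻¹ := by
  have h2 : X⁻¹ * (X * Y) * X⁻¹ = X⁻¹ * (Y * X) * X⁻¹ := by rw [h]
  simpa [mul_assoc] using h2.symm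

theorem swap_mul' {X Y : G} (h : X * Y = Y * X) (R : G) :
    X * (Y * R) = Y * (X * R) := by rw [← mul_assoc, h, mul_assoc]

theorem four_id (u v s : G) (h : s * v * s⁻¹ * u = u * (s * v * s⁻¹)) :
    ((u * v) * s * (u * v)⁻¹) * ((u * s⁻¹ * u⁻¹) * (s * (v * s⁻¹ * v⁻¹))) =
      u * v * u⁻¹ * v⁻¹ := by
  have hu : u⁻¹ * (s * v * s⁻¹) = s * v * s⁻¹ * u⁻¹ := comm_inv_left' h.symm
  calc ((u * v) * s * (u * v)⁻¹) * ((u * s⁻¹ * u⁻¹) * (s * (v * s⁻¹ * v⁻¹)))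
      = u * (v * ((s * v⁻¹ * s⁻¹) * ((u⁻¹ * (s * v * s⁻¹)) * v⁻¹))) := by group
    _ = u * (v * ((s * v⁻¹ * s⁻¹) * ((s * v * s⁻¹ * u⁻¹) * v⁻¹))) := by rw [hu]
    _ = u * v * u⁻¹ * v⁻¹ := by group

theorem absorb_id (U V p q : G) (h1 : p * V = V * p) (h2 : p * q = q * p)
    (h3 : q * U = U * q) :
    (U * p) * (V * q) * (U * p)⁻¹ * (V * q)⁻¹ = U * V * U⁻¹ * V⁻¹ := by
  have hqU : q * U⁻¹ = U⁻¹ * q := (comm_inv_left' h3.symm).symm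
  calc (U * p) * (V * q) * (U * p)⁻¹ * (V * q)⁻¹
      = U * (p * (V * (q * (p⁻¹ * (U⁻¹ * (q⁻¹ * V⁻¹)))))) := by group
    _ = U * (V * (p * (q * (p⁻¹ * (U⁻¹ * (q⁻¹ * V⁻¹)))))) := by rw [swap_mul' h1]
    _ = U * (V * (q * (p * (p⁻¹ * (U⁻¹ * (q⁻¹ * V⁻¹)))))) := by rw [swap_mul' h2]
    _ = U * (V * (q * (U⁻¹ * (q⁻¹ * V⁻¹)))) := by group
    _ = U * (V * (U⁻¹ * (q * (q⁻¹ * V⁻¹)))) := by rw [swap_mul' hqU]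
    _ = U * V * U⁻¹ * V⁻¹ := by group

theorem split_id (a b P Q : G) (haP : a * P = P * a) (haQ : a * Q = Q * a)
    (hbP : b * P = P * b) (hbQ : b * Q = Q * b) :
    (a * P) * (b * Q) * (a * P)⁻¹ * (b * Q)⁻¹ =
      (a * b * a⁻¹ * b⁻¹) * (P * Q * P⁻¹ * Q⁻¹) := by
  have e1 : P * b = b * P := hbP.symm
  have e2 : P⁻¹ * a⁻¹ = a⁻¹ * P⁻¹ := by
    have := comm_inv_left' haP          -- a⁻¹ P = P a⁻¹
    exact comm_inv_left' this.symm      -- P⁻¹ a⁻¹ = a⁻¹ P⁻¹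
  have e3 : Q * a⁻¹ = a⁻¹ * Q := (comm_inv_left' haQ).symm
  have e4 : P * a⁻¹ = a⁻¹ * P := (comm_inv_left' haP).symm
  have e5 : Q⁻¹ * b⁻¹ = b⁻¹ * Q⁻¹ := by
    have := comm_inv_left' hbQ
    exact comm_inv_left' this.symm
  have e6 : P⁻¹ * b⁻¹ = b⁻¹ * P⁻¹ := by
    have := comm_inv_left' hbP
    exact comm_inv_left' this.symm
  have e7 : Q * b⁻¹ = b⁻¹ * Q := (comm_inv_left' hbQ).symm
  have e8 : P * b⁻¹ = b⁻¹ * P := (comm_inv_left' hbP).symm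
  calc (a * P) * (b * Q) * (a * P)⁻¹ * (b * Q)⁻¹
      = a * (P * (b * (Q * (P⁻¹ * (a⁻¹ * (Q⁻¹ * b⁻¹)))))) := by group
    _ = a * (b * (P * (Q * (P⁻¹ * (a⁻¹ * (Q⁻¹ * b⁻¹)))))) := by rw [swap_mul' e1]
    _ = a * (b * (P * (Q * (a⁻¹ * (P⁻¹ * (Q⁻¹ * b⁻¹)))))) := by rw [swap_mul' e2]
    _ = a * (b * (P * (a⁻¹ * (Q * (P⁻¹ * (Q⁻¹ * b⁻¹)))))) := by rw [swap_mul' e3]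
    _ = a * (b * (a⁻¹ * (P * (Q * (P⁻¹ * (Q⁻¹ * b⁻¹)))))) := by rw [swap_mul' e4]
    _ = a * (b * (a⁻¹ * (P * (Q * (P⁻¹ * (b⁻¹ * Q⁻¹)))))) := by rw [e5]
    _ = a * (b * (a⁻¹ * (P * (Q * (b⁻¹ * (P⁻¹ * Q⁻¹)))))) := by rw [swap_mul' e6]
    _ = a * (b * (a⁻¹ * (P * (b⁻¹ * (Q * (P⁻¹ * Q⁻¹)))))) := by rw [swap_mul' e7]
    _ = a * (b * (a⁻¹ * (b⁻¹ * (P * (Q * (P⁻¹ * Q⁻¹)))))) := by rw [swap_mul' e8]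
    _ = (a * b * a⁻¹ * b⁻¹) * (P * Q * P⁻¹ * Q⁻¹) := by group


theorem mem_commutator_of_elem {G : Type*} [Group G] (a b : G) :
    a * b * a⁻¹ * b⁻¹ ∈ commutator G := by
  have h := Subgroup.commutator_mem_commutator (Subgroup.mem_top (x := a)) (Subgroup.mem_top (x := b))
  rw [commutator_def]
  exact h

theorem fixOut_listProd {a b : I} :
    ∀ m : List Γ, (∀ x ∈ m, FixOut x a b) → FixOut m.prod a b := by
  intro m
  induction m with
  | nil => intro _; simpa using fixOut_one a b
  | cons x xs ihx =>
    intro hm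
    rw [List.prod_cons]
    exact (hm x (List.mem_cons_self)).mul
      (ihx fun y hy => hm y (List.mem_cons_of_mem _ hy))

theorem telescope (hord : ∀ g : Γ, ∀ x y : I, x ≤ y → g • x ≤ g • y)
    (hfaith : ∀ g : Γ, (∀ x : I, g • x = x) → g = 1)
    (t : Γ) (p : ℕ → I) (hp : ∀ k, p k < p (k + 1))
    (hpt : ∀ k, t • p k = p (k + 1)) :
    ∀ L : List (Γ × Γ),
      (∀ q ∈ L, FixOut q.1 (p 0) (p 1) ∧ FixOut q.2 (p 0) (p 1)) →
      ∃ X U V : Γ, X ∈ commutator Γ ∧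
        FixOut U (p 0) (p L.length) ∧ FixOut V (p 0) (p L.length) ∧
        (L.map fun q => q.1 * q.2 * q.1⁻¹ * q.2⁻¹).prod =
          X * t * X⁻¹ * t⁻¹ * (t * (U * V * U⁻¹ * V⁻¹) * t⁻¹) := by
  have hsm : StrictMono p := strictMono_nat_of_lt_succ hp
  intro L
  induction L with
  | nil =>
    intro _
    refine ⟨1, 1, 1, Subgroup.one_mem _, fixOut_one _ _, fixOut_one _ _, ?_⟩
    simp only [List.map_nil, List.prod_nil]
    group
  | cons q L' ih =>
    intro hall
    obtain ⟨hq1, hq2⟩ := hall q (List.mem_cons_self)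
    obtain ⟨X', U', V', hX', hU', hV', hid⟩ :=
      ih (fun r hr => hall r (List.mem_cons_of_mem _ hr))
    set n' := L'.length with hn'
    -- support facts
    have hW' : FixOut (U' * V' * U'⁻¹ * V'⁻¹) (p 0) (p n') :=
      ((hU'.mul hV').mul hU'.inv).mul hV'.inv
    have hzfix : FixOut (t * (U' * V' * U'⁻¹ * V'⁻¹) * t⁻¹) (p 1) (p (n' + 1)) := by
      have := hW'.conj hord t
      rwa [hpt 0, hpt n'] at this
    have hP'fix : FixOut (L'.map fun q => q.1 * q.2 * q.1⁻¹ * q.2⁻¹).prod (p 0) (p 1) := by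
      apply fixOut_listProd
      intro x hx
      obtain ⟨r, hr, rfl⟩ := List.mem_map.mp hx
      obtain ⟨hr1, hr2⟩ := hall r (List.mem_cons_of_mem _ hr)
      exact ((hr1.mul hr2).mul hr1.inv).mul hr2.inv
    have hTU : FixOut (t * U' * t⁻¹) (p 1) (p (n' + 1)) := by
      have := hU'.conj hord t
      rwa [hpt 0, hpt n'] at this
    have hTV : FixOut (t * V' * t⁻¹) (p 1) (p (n' + 1)) := by
      have := hV'.conj hord t
      rwa [hpt 0, hpt n'] at this
    -- commuting facts
    have haP : q.1 * (t * U' * t⁻¹) = (t * U' * t⁻¹) * q.1 :=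
      commute_disjoint hord hfaith hq1 hTU le_rfl
    have haQ : q.1 * (t * V' * t⁻¹) = (t * V' * t⁻¹) * q.1 :=
      commute_disjoint hord hfaith hq1 hTV le_rfl
    have hbP : q.2 * (t * U' * t⁻¹) = (t * U' * t⁻¹) * q.2 :=
      commute_disjoint hord hfaith hq2 hTU le_rfl
    have hbQ : q.2 * (t * V' * t⁻¹) = (t * V' * t⁻¹) * q.2 :=
      commute_disjoint hord hfaith hq2 hTV le_rfl
    have hPz : (L'.map fun q => q.1 * q.2 * q.1⁻¹ * q.2⁻¹).prod *
          (t * (U' * V' * U'⁻¹ * V'⁻¹) * t⁻¹) =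
        (t * (U' * V' * U'⁻¹ * V'⁻¹) * t⁻¹) *
          (L'.map fun q => q.1 * q.2 * q.1⁻¹ * q.2⁻¹).prod :=
      commute_disjoint hord hfaith hP'fix hzfix le_rfl
    -- the key commutator merge
    have key : (q.1 * (t * U' * t⁻¹)) * (q.2 * (t * V' * t⁻¹)) *
          (q.1 * (t * U' * t⁻¹))⁻¹ * (q.2 * (t * V' * t⁻¹))⁻¹ =
        (q.1 * q.2 * q.1⁻¹ * q.2⁻¹) * (t * (U' * V' * U'⁻¹ * V'⁻¹) * t⁻¹) := by
      rw [split_id q.1 q.2 (t * U' * t⁻¹) (t * V' * t⁻¹) haP haQ hbP hbQ]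
      congr 1
      group
    refine ⟨(q.1 * q.2 * q.1⁻¹ * q.2⁻¹) * (L'.map fun q => q.1 * q.2 * q.1⁻¹ * q.2⁻¹).prod *
        (t * X' * t⁻¹),
      q.1 * (t * U' * t⁻¹), q.2 * (t * V' * t⁻¹), ?_, ?_, ?_, ?_⟩
    · refine Subgroup.mul_mem _ (Subgroup.mul_mem _ (mem_commutator_of_elem q.1 q.2) ?_) ?_
      · apply Subgroup.list_prod_mem
        intro x hx
        obtain ⟨r, hr, rfl⟩ := List.mem_map.mp hx
        exact mem_commutator_of_elem r.1 r.2
      · exact (Subgroup.commutator_normal ⊤ ⊤).conj_mem X' (by rwa [commutator_def] at hX') t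
    · have h1 : FixOut q.1 (p 0) (p ((q :: L').length)) :=
        hq1.mono le_rfl (hsm.monotone (by simp))
      have h2 : FixOut (t * U' * t⁻¹) (p 0) (p ((q :: L').length)) := by
        refine hTU.mono (hsm.monotone (by simp)) (hsm.monotone (by simp [hn'])) 
      exact h1.mul h2
    · have h1 : FixOut q.2 (p 0) (p ((q :: L').length)) :=
        hq2.mono le_rfl (hsm.monotone (by simp))
      have h2 : FixOut (t * V' * t⁻¹) (p 0) (p ((q :: L').length)) := by
        refine hTV.mono (hsm.monotone (by simp)) (hsm.monotone (by simp [hn']))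
      exact h1.mul h2
    · rw [List.map_cons, List.prod_cons, key, hid]
      have h0 := hPz
      rw [hid] at h0
      have hAz : (X' * t * X'⁻¹ * t⁻¹) * (t * (U' * V' * U'⁻¹ * V'⁻¹) * t⁻¹) =
          (t * (U' * V' * U'⁻¹ * V'⁻¹) * t⁻¹) * (X' * t * X'⁻¹ * t⁻¹) := by
        refine mul_right_cancel (b := t * (U' * V' * U'⁻¹ * V'⁻¹) * t⁻¹) ?_
        rw [mul_assoc (t * (U' * V' * U'⁻¹ * V'⁻¹) * t⁻¹)]
        exact h0
      have hAinv : (X' * t * X'⁻¹ * t⁻¹)⁻¹ * (t * (U' * V' * U'⁻¹ * V'⁻¹) * t⁻¹) =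
          (t * (U' * V' * U'⁻¹ * V'⁻¹) * t⁻¹) * (X' * t * X'⁻¹ * t⁻¹)⁻¹ :=
        comm_inv_left' hAz
      refine Eq.symm ?_
      calc (q.1 * q.2 * q.1⁻¹ * q.2⁻¹) *
            (X' * t * X'⁻¹ * t⁻¹ * (t * (U' * V' * U'⁻¹ * V'⁻¹) * t⁻¹)) * (t * X' * t⁻¹) * t *
            ((q.1 * q.2 * q.1⁻¹ * q.2⁻¹) *
              (X' * t * X'⁻¹ * t⁻¹ * (t * (U' * V' * U'⁻¹ * V'⁻¹) * t⁻¹)) * (t * X' * t⁻¹))⁻¹ *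
            t⁻¹ *
            (t * ((q.1 * q.2 * q.1⁻¹ * q.2⁻¹) * (t * (U' * V' * U'⁻¹ * V'⁻¹) * t⁻¹)) * t⁻¹)
          = (q.1 * q.2 * q.1⁻¹ * q.2⁻¹) * ((X' * t * X'⁻¹ * t⁻¹) *
              ((t * (U' * V' * U'⁻¹ * V'⁻¹) * t⁻¹) *
                (t * (((X' * t * X'⁻¹ * t⁻¹) *
                  ((t * (U' * V' * U'⁻¹ * V'⁻¹) * t⁻¹)⁻¹ *
                    ((X' * t * X'⁻¹ * t⁻¹)⁻¹ * (t * (U' * V' * U'⁻¹ * V'⁻¹) * t⁻¹)))) * t⁻¹)))) := by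
            group
        _ = (q.1 * q.2 * q.1⁻¹ * q.2⁻¹) * ((X' * t * X'⁻¹ * t⁻¹) *
              ((t * (U' * V' * U'⁻¹ * V'⁻¹) * t⁻¹) *
                (t * (((X' * t * X'⁻¹ * t⁻¹) *
                  ((t * (U' * V' * U'⁻¹ * V'⁻¹) * t⁻¹)⁻¹ *
                    ((t * (U' * V' * U'⁻¹ * V'⁻¹) * t⁻¹) * (X' * t * X'⁻¹ * t⁻¹)⁻¹))) * t⁻¹)))) := by
            rw [hAinv]
        _ = (q.1 * q.2 * q.1⁻¹ * q.2⁻¹) *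
              (X' * t * X'⁻¹ * t⁻¹ * (t * (U' * V' * U'⁻¹ * V'⁻¹) * t⁻¹)) := by
            group

theorem main
    (hord : ∀ g : Γ, ∀ x y : I, x ≤ y → g • x ≤ g • y)
    (hfaith : ∀ g : Γ, (∀ x : I, g • x = x) → g = 1)
    (hbounded : ∀ g : Γ, ∃ a b : I, ∀ x : I, g • x ≠ x → a < x ∧ x < b)
    (hprox : ∀ a b c d : I, a < b → c < d → ∃ g : Γ, g • a < c ∧ d < g • b) :
    ∀ f ∈ commutator Γ, f ≠ 1 → ∀ h ∈ commutator Γ, h ≠ 1 →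
      ∃ l : List Γ, l.length ≤ 6 ∧
        (∀ x ∈ l, ∃ γ ∈ commutator Γ, x = γ * h * γ⁻¹ ∨ x = γ * h⁻¹ * γ⁻¹) ∧
        l.prod = f := by
  intro f hf hf1 h hh hh1
  -- bounded supports give FixOut
  have fixb : ∀ g : Γ, ∃ a b : I, FixOut g a b := by
    intro g
    obtain ⟨a, b, hab⟩ := hbounded g
    refine ⟨a, b, fun x hx => ?_⟩
    by_contra hne
    obtain ⟨h1, h2⟩ := hab x hne
    rcases hx with hx | hx
    · exact absurd (hx.trans_lt h1) (lt_irrefl x)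
    · exact absurd (h2.trans_le hx) (lt_irrefl x)
  -- a point moved by h
  have hmoved : ∃ x : I, h • x ≠ x := by
    by_contra hc
    push_neg at hc
    exact hh1 (hfaith h hc)
  obtain ⟨h', x₀, hh'or, hy0⟩ : ∃ (h' : Γ) (x₀ : I),
      (h' = h ∨ h' = h⁻¹) ∧ x₀ < h' • x₀ := by
    obtain ⟨x, hx⟩ := hmoved
    rcases lt_or_gt_of_ne hx with hlt | hgt
    · refine ⟨h⁻¹, h • x, Or.inr rfl, ?_⟩
      rw [inv_smul_smul]
      exact hlt
    · exact ⟨h, x, Or.inl rfl, hgt⟩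
  have hh'mem : h' ∈ commutator Γ := by
    rcases hh'or with rfl | rfl
    · exact hh
    · exact Subgroup.inv_mem _ hh
  -- no max, no min
  have nomax : ∀ x : I, ∃ y : I, x < y := by
    intro x
    rcases lt_or_ge x (h' • x₀) with hlt | hge
    · exact ⟨_, hlt⟩
    · obtain ⟨g, _, hg2⟩ := hprox x₀ x x₀ x (hy0.trans_le hge) (hy0.trans_le hge)
      exact ⟨g • x, hg2⟩
  have nomin : ∀ x : I, ∃ y : I, y < x := by
    intro x
    rcases lt_or_ge x₀ x with hlt | hle
    · obtain ⟨g, hg1, _⟩ := hprox x₀ x x₀ x hlt hlt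
      exact ⟨g • x₀, hg1.trans hlt⟩
    · obtain ⟨g, hg1, _⟩ := hprox x (h' • x₀) x (h' • x₀)
        (hle.trans_lt hy0) (hle.trans_lt hy0)
      exact ⟨g • x, hg1⟩
  -- push up
  have pushup : ∀ P Q : I, ∃ k : Γ, Q < k • P := by
    intro P Q
    obtain ⟨P', hP'⟩ := nomin P
    obtain ⟨Q', hQ'⟩ := nomax Q
    obtain ⟨k, _, hk2⟩ := hprox P' P Q Q' hP' hQ'
    exact ⟨k, hQ'.trans hk2⟩
  -- proximality within the commutator subgroup
  have proxC : ∀ A B : I, A < B →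
      ∃ γ : Γ, γ ∈ commutator Γ ∧ γ • x₀ < A ∧ B < γ • (h' • x₀) := by
    intro A B hAB
    obtain ⟨g, hg1, hg2⟩ := hprox x₀ (h' • x₀) A B hy0 hAB
    obtain ⟨m, M, hgfix⟩ := fixb g
    obtain ⟨k, hk⟩ := pushup m (h' • x₀)
    have hwfix : FixOut (k * g⁻¹ * k⁻¹) (k • m) (k • M) :=
      FixOut.conj hord (FixOut.inv hgfix) k
    have hgw : g * k * g⁻¹ * k⁻¹ = g * (k * g⁻¹ * k⁻¹) := by group
    refine ⟨g * k * g⁻¹ * k⁻¹, mem_commutator_of_elem g k, ?_, ?_⟩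
    · have hx0 : (k * g⁻¹ * k⁻¹) • x₀ = x₀ :=
        hwfix x₀ (Or.inl (hy0.trans hk).le)
      rw [hgw, mul_smul, hx0]
      exact hg1
    · have hx1 : (k * g⁻¹ * k⁻¹) • (h' • x₀) = h' • x₀ :=
        hwfix _ (Or.inl hk.le)
      rw [hgw, mul_smul, hx1]
      exact hg2
  -- decompose f into a list of commutators
  have hfc : f ∈ Submonoid.closure (commutatorSet Γ ∪ (commutatorSet Γ)⁻¹) := by
    have h1 : f ∈ commutator Γ := hf
    rw [commutator_eq_closure] at h1
    rw [← Subgroup.closure_toSubmonoid] at *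
    exact h1
  obtain ⟨l₀, hl₀, hl₀p⟩ := Submonoid.exists_list_of_mem_closure hfc
  have topairs : ∀ m : List Γ, (∀ y ∈ m, y ∈ commutatorSet Γ ∪ (commutatorSet Γ)⁻¹) →
      ∃ L : List (Γ × Γ), m = L.map fun r => r.1 * r.2 * r.1⁻¹ * r.2⁻¹ := by
    intro m
    induction m with
    | nil => exact fun _ => ⟨[], rfl⟩
    | cons y m ihm =>
      intro hm
      obtain ⟨L, hL⟩ := ihm fun z hz => hm z (List.mem_cons_of_mem _ hz)
      rcases hm y (List.mem_cons_self) with hy | hy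
      · obtain ⟨a, b, hab⟩ := hy
        refine ⟨(a, b) :: L, ?_⟩
        rw [List.map_cons, ← hL]
        congr 1
        exact hab.symm
      · obtain ⟨a, b, hab⟩ := Set.mem_inv.mp hy
        refine ⟨(b, a) :: L, ?_⟩
        rw [List.map_cons, ← hL]
        congr 1
        rw [← inv_inv y, ← hab]
        exact commutatorElement_inv a b
  obtain ⟨L, hLdef⟩ := topairs l₀ hl₀
  have hfprod : (L.map fun r => r.1 * r.2 * r.1⁻¹ * r.2⁻¹).prod = f := by
    rw [← hLdef]; exact hl₀p
  -- common bound for all entries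
  have hbnds : ∀ M : List (Γ × Γ), ∃ A B : I, A < B ∧
      ∀ r ∈ M, FixOut r.1 A B ∧ FixOut r.2 A B := by
    intro M
    induction M with
    | nil => exact ⟨x₀, h' • x₀, hy0, by simp⟩
    | cons r M ihm =>
      obtain ⟨A, B, hAB, hM⟩ := ihm
      obtain ⟨a1, b1, h1⟩ := fixb r.1
      obtain ⟨a2, b2, h2⟩ := fixb r.2
      refine ⟨min A (min a1 a2), max B (max b1 b2),
        (min_le_left _ _).trans_lt (hAB.trans_le (le_max_left _ _)), ?_⟩
      intro r' hr'
      rcases List.mem_cons.mp hr' with rfl | hr'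
      · constructor
        · exact h1.mono ((min_le_right _ _).trans (min_le_left _ _))
            ((le_max_left _ _).trans (le_max_right _ _))
        · exact h2.mono ((min_le_right _ _).trans (min_le_right _ _))
            ((le_max_right _ _).trans (le_max_right _ _))
      · obtain ⟨ha, hb⟩ := hM r' hr'
        exact ⟨ha.mono (min_le_left _ _) (le_max_left _ _),
          hb.mono (min_le_left _ _) (le_max_left _ _)⟩
  obtain ⟨A, B, hAB, hallAB⟩ := hbnds L
  obtain ⟨γ, hγmem, hγ1, hγ2⟩ := proxC A B hAB
  obtain ⟨T, hT⟩ : ∃ T : Γ, T = γ * h' * γ⁻¹ := ⟨_, rfl⟩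
  have hTmem : T ∈ commutator Γ := by
    rw [hT]
    exact (Subgroup.commutator_normal ⊤ ⊤).conj_mem h'
      (by rwa [commutator_def] at hh'mem) γ
  set p : ℕ → I := fun n => γ • ((h' ^ n) • x₀) with hpdef
  have aux : ∀ n : ℕ, (h' ^ n) • x₀ < (h' ^ (n + 1)) • x₀ := by
    intro n
    induction n with
    | zero => simpa [pow_zero, pow_one, one_smul] using hy0
    | succ n ihn =>
      have := smul_lt hord h' ihn
      rw [← mul_smul, ← mul_smul, ← pow_succ', ← pow_succ'] at this
      exact this
  have hp : ∀ n, p n < p (n + 1) := fun n => smul_lt hord γ (aux n)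
  have hpt : ∀ n, T • p n = p (n + 1) := by
    intro n
    rw [hT, hpdef]
    show (γ * h' * γ⁻¹) • (γ • ((h' ^ n) • x₀)) = γ • ((h' ^ (n + 1)) • x₀)
    rw [mul_smul, mul_smul, inv_smul_smul, ← mul_smul h', ← pow_succ']
  have hsm : StrictMono p := strictMono_nat_of_lt_succ hp
  have hp0 : p 0 = γ • x₀ := by rw [hpdef]; simp [pow_zero, one_smul]
  have hp1 : p 1 = γ • (h' • x₀) := by rw [hpdef]; simp [pow_one]
  have hentries : ∀ q ∈ L, FixOut q.1 (p 0) (p 1) ∧ FixOut q.2 (p 0) (p 1) := by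
    intro q hq
    obtain ⟨h1, h2⟩ := hallAB q hq
    constructor
    · exact h1.mono (by rw [hp0]; exact hγ1.le) (by rw [hp1]; exact hγ2.le)
    · exact h2.mono (by rw [hp0]; exact hγ1.le) (by rw [hp1]; exact hγ2.le)
  obtain ⟨X, U, V, hX, hU, hV, htel⟩ := telescope hord hfaith T p hp hpt L hentries
  -- L is nonempty
  have hn1 : 0 < L.length := by
    rcases L with _ | ⟨q, L'⟩
    · exfalso
      apply hf1
      rw [← hfprod]
      simp
    · simp
  have hp0n : p 0 < p L.length := hsm hn1
  obtain ⟨k, hk⟩ := pushup (p 0) (p L.length)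
  obtain ⟨l', hl'⟩ := pushup (p 0) (k • p L.length)
  have c3 : k • p 0 < k • p L.length := smul_lt hord k hp0n
  have c5 : l' • p 0 < l' • p L.length := smul_lt hord l' hp0n
  have hKU : FixOut (k * U⁻¹ * k⁻¹) (k • p 0) (k • p L.length) :=
    FixOut.conj hord (FixOut.inv hU) k
  have hLV : FixOut (l' * V⁻¹ * l'⁻¹) (l' • p 0) (l' • p L.length) :=
    FixOut.conj hord (FixOut.inv hV) l'
  have h1 : (k * U⁻¹ * k⁻¹) * V = V * (k * U⁻¹ * k⁻¹) :=
    (commute_disjoint hord hfaith hV hKU hk.le).symm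
  have h2 : (k * U⁻¹ * k⁻¹) * (l' * V⁻¹ * l'⁻¹) = (l' * V⁻¹ * l'⁻¹) * (k * U⁻¹ * k⁻¹) :=
    commute_disjoint hord hfaith hKU hLV hl'.le
  have h3 : (l' * V⁻¹ * l'⁻¹) * U = U * (l' * V⁻¹ * l'⁻¹) :=
    (commute_disjoint hord hfaith hU hLV (hk.trans (c3.trans hl')).le).symm
  obtain ⟨U1, hU1⟩ : ∃ z : Γ, z = U * (k * U⁻¹ * k⁻¹) := ⟨_, rfl⟩
  obtain ⟨V1, hV1⟩ : ∃ z : Γ, z = V * (l' * V⁻¹ * l'⁻¹) := ⟨_, rfl⟩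
  have hU1mem : U1 ∈ commutator Γ := by
    rw [hU1, show U * (k * U⁻¹ * k⁻¹) = U * k * U⁻¹ * k⁻¹ by group]
    exact mem_commutator_of_elem U k
  have hV1mem : V1 ∈ commutator Γ := by
    rw [hV1, show V * (l' * V⁻¹ * l'⁻¹) = V * l' * V⁻¹ * l'⁻¹ by group]
    exact mem_commutator_of_elem V l'
  have chain : p L.length < l' • p L.length := hk.trans (c3.trans (hl'.trans c5))
  have hU1fix : FixOut U1 (p 0) (l' • p L.length) := by
    rw [hU1]
    exact (hU.mono le_rfl chain.le).mul
      (hKU.mono (hp0n.trans hk).le (hl'.trans c5).le)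
  have hV1fix : FixOut V1 (p 0) (l' • p L.length) := by
    rw [hV1]
    exact (hV.mono le_rfl chain.le).mul
      (hLV.mono (hp0n.trans (hk.trans (c3.trans hl'))).le le_rfl)
  have hB1 : p 0 < l' • p L.length := hp0n.trans chain
  obtain ⟨U2, hU2⟩ : ∃ z : Γ, z = T * U1 * T⁻¹ := ⟨_, rfl⟩
  obtain ⟨V2, hV2⟩ : ∃ z : Γ, z = T * V1 * T⁻¹ := ⟨_, rfl⟩
  have hTp0 : p 0 ≤ T • p 0 := by
    rw [hpt 0]
    exact (hp 0).le
  have hU2mem : U2 ∈ commutator Γ := by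
    rw [hU2]
    exact (Subgroup.commutator_normal ⊤ ⊤).conj_mem U1
      (by rwa [commutator_def] at hU1mem) T
  have hV2mem : V2 ∈ commutator Γ := by
    rw [hV2]
    exact (Subgroup.commutator_normal ⊤ ⊤).conj_mem V1
      (by rwa [commutator_def] at hV1mem) T
  have hU2fix : FixOut U2 (p 0) (T • (l' • p L.length)) := by
    rw [hU2]
    exact (hU1fix.conj hord T).mono hTp0 le_rfl
  have hV2fix : FixOut V2 (p 0) (T • (l' • p L.length)) := by
    rw [hV2]
    exact (hV1fix.conj hord T).mono hTp0 le_rfl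
  have hp0Btop : p 0 < T • (l' • p L.length) :=
    hTp0.trans_lt (smul_lt hord T hB1)
  obtain ⟨δ, hδmem, hδ1, hδ2⟩ := proxC (p 0) (T • (l' • p L.length)) hp0Btop
  obtain ⟨S, hS⟩ : ∃ z : Γ, z = δ * h' * δ⁻¹ := ⟨_, rfl⟩
  have hSp0 : T • (l' • p L.length) < S • p 0 := by
    have e1 : x₀ < δ⁻¹ • p 0 := by
      refine lt_of_smul_lt hord (g := δ) ?_
      rwa [smul_inv_smul]
    have e2 : δ⁻¹ • (T • (l' • p L.length)) < h' • x₀ := by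
      refine lt_of_smul_lt hord (g := δ) ?_
      rwa [smul_inv_smul]
    have e3 : h' • x₀ < h' • (δ⁻¹ • p 0) := smul_lt hord h' e1
    have e4 := smul_lt hord δ (e2.trans e3)
    rw [smul_inv_smul] at e4
    have e5 : S • p 0 = δ • (h' • (δ⁻¹ • p 0)) := by
      rw [hS, mul_smul, mul_smul]
    rw [e5]
    exact e4
  have hSV2fix : FixOut (S * V2 * S⁻¹) (S • p 0) (S • (T • (l' • p L.length))) :=
    hV2fix.conj hord S
  have hcomm4 : S * V2 * S⁻¹ * U2 = U2 * (S * V2 * S⁻¹) :=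
    (commute_disjoint hord hfaith hU2fix hSV2fix hSp0.le).symm
  have four := four_id U2 V2 S hcomm4
  refine ⟨[(X * γ) * h' * (X * γ)⁻¹, γ * h'⁻¹ * γ⁻¹,
      ((U2 * V2) * δ) * h' * ((U2 * V2) * δ)⁻¹, (U2 * δ) * h'⁻¹ * (U2 * δ)⁻¹,
      δ * h' * δ⁻¹, (V2 * δ) * h'⁻¹ * (V2 * δ)⁻¹], by simp, ?_, ?_⟩
  · intro x hx
    have mk : ∀ g : Γ, g ∈ commutator Γ →
        (∃ γ' ∈ commutator Γ, g * h' * g⁻¹ = γ' * h * γ'⁻¹ ∨ g * h' * g⁻¹ = γ' * h⁻¹ * γ'⁻¹) := by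
      intro g hg
      refine ⟨g, hg, ?_⟩
      rcases hh'or with rfl | rfl
      · exact Or.inl rfl
      · exact Or.inr rfl
    have mk' : ∀ g : Γ, g ∈ commutator Γ →
        (∃ γ' ∈ commutator Γ, g * h'⁻¹ * g⁻¹ = γ' * h * γ'⁻¹ ∨ g * h'⁻¹ * g⁻¹ = γ' * h⁻¹ * γ'⁻¹) := by
      intro g hg
      refine ⟨g, hg, ?_⟩
      rcases hh'or with rfl | rfl
      · exact Or.inr rfl
      · exact Or.inl (by rw [inv_inv])
    simp only [List.mem_cons, List.not_mem_nil, or_false] at hx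
    rcases hx with rfl | rfl | rfl | rfl | rfl | rfl
    · obtain ⟨γ', hγ', hor⟩ := mk (X * γ) (Subgroup.mul_mem _ hX hγmem)
      exact ⟨γ', hγ', by rcases hor with hh | hh <;> [exact Or.inl hh; exact Or.inr hh]⟩
    · obtain ⟨γ', hγ', hor⟩ := mk' γ hγmem
      exact ⟨γ', hγ', by rcases hor with hh | hh <;> [exact Or.inl hh; exact Or.inr hh]⟩
    · obtain ⟨γ', hγ', hor⟩ := mk ((U2 * V2) * δ)
        (Subgroup.mul_mem _ (Subgroup.mul_mem _ hU2mem hV2mem) hδmem)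
      exact ⟨γ', hγ', by rcases hor with hh | hh <;> [exact Or.inl hh; exact Or.inr hh]⟩
    · obtain ⟨γ', hγ', hor⟩ := mk' (U2 * δ) (Subgroup.mul_mem _ hU2mem hδmem)
      exact ⟨γ', hγ', by rcases hor with hh | hh <;> [exact Or.inl hh; exact Or.inr hh]⟩
    · obtain ⟨γ', hγ', hor⟩ := mk δ hδmem
      exact ⟨γ', hγ', by rcases hor with hh | hh <;> [exact Or.inl hh; exact Or.inr hh]⟩
    · obtain ⟨γ', hγ', hor⟩ := mk' (V2 * δ) (Subgroup.mul_mem _ hV2mem hδmem)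
      exact ⟨γ', hγ', by rcases hor with hh | hh <;> [exact Or.inl hh; exact Or.inr hh]⟩
  · simp only [List.prod_cons, List.prod_nil, mul_one]
    calc (X * γ) * h' * (X * γ)⁻¹ * (γ * h'⁻¹ * γ⁻¹ *
          (((U2 * V2) * δ) * h' * ((U2 * V2) * δ)⁻¹ * ((U2 * δ) * h'⁻¹ * (U2 * δ)⁻¹ *
            (δ * h' * δ⁻¹ * ((V2 * δ) * h'⁻¹ * (V2 * δ)⁻¹)))))
        = X * T * X⁻¹ * T⁻¹ *
            (((U2 * V2) * S * (U2 * V2)⁻¹) * ((U2 * S⁻¹ * U2⁻¹) * (S * (V2 * S⁻¹ * V2⁻¹)))) := by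
          rw [hT, hS]
          group
      _ = X * T * X⁻¹ * T⁻¹ * (U2 * V2 * U2⁻¹ * V2⁻¹) := by rw [four]
      _ = X * T * X⁻¹ * T⁻¹ * (T * (U1 * V1 * U1⁻¹ * V1⁻¹) * T⁻¹) := by
          rw [hU2, hV2]
          group
      _ = X * T * X⁻¹ * T⁻¹ * (T * (U * V * U⁻¹ * V⁻¹) * T⁻¹) := by
          rw [hU1, hV1, absorb_id U V _ _ h1 h2 h3]
      _ = f := by rw [← htel]; exact hfprod

end UnifSix

/-- If a group `Γ` acts faithfully by order-preserving bijections on a linear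
order `I`, boundedly (supports lie in open intervals) and proximally, then the
commutator subgroup `Γ'` is 6-uniformly simple: every nontrivial `f ∈ Γ'` is a
product of at most 6 conjugates (by elements of `Γ'`) of any given nontrivial
`h ∈ Γ'` or of `h⁻¹`. -/
theorem commutator_six_uniformly_simple_of_bounded_proximal
    {Γ : Type*} [Group Γ] {I : Type*} [LinearOrder I] [MulAction Γ I]
    (hord : ∀ g : Γ, ∀ x y : I, x ≤ y → g • x ≤ g • y)
    (hfaith : ∀ g : Γ, (∀ x : I, g • x = x) → g = 1)
    (hbounded : ∀ g : Γ, ∃ a b : I, ∀ x : I, g • x ≠ x → a < x ∧ x < b)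
    (hprox : ∀ a b c d : I, a < b → c < d → ∃ g : Γ, g • a < c ∧ d < g • b) :
    ∀ f ∈ commutator Γ, f ≠ 1 → ∀ h ∈ commutator Γ, h ≠ 1 →
      ∃ l : List Γ, l.length ≤ 6 ∧
        (∀ x ∈ l, ∃ γ ∈ commutator Γ, x = γ * h * γ⁻¹ ∨ x = γ * h⁻¹ * γ⁻¹) ∧
        l.prod = f := by
  exact UnifSix.main hord hfaith hbounded hprox
end

section
/- Under the hypotheses above (Γ acts faithfully, order-preservingly, boundedly and proximally on a linear order), every element of the commutator subgroup Γ' is a product of at most two commutators of elements of Γ. -/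
open scoped commutatorElement

section CommWidthTwoAux

variable {Γ : Type*} [Group Γ] {I : Type*} [LinearOrder I] [MulAction Γ I]

/-- The support of `g` is contained in `S`. -/
def SuppIn (g : Γ) (S : Set I) : Prop := ∀ x : I, g • x ≠ x → x ∈ S

theorem SuppIn.mono {g : Γ} {S T : Set I} (h : SuppIn g S) (hST : S ⊆ T) : SuppIn g T :=
  fun x hx => hST (h x hx)

theorem suppIn_one (S : Set I) : SuppIn (1 : Γ) S := fun x hx => absurd (one_smul Γ x) hx

theorem SuppIn.mul {g h : Γ} {S : Set I} (hg : SuppIn g S) (hh : SuppIn h S) :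
    SuppIn (g * h) S := by
  intro x hx
  rw [mul_smul] at hx
  by_cases hhx : h • x = x
  · rw [hhx] at hx; exact hg x hx
  · exact hh x hhx

theorem SuppIn.inv {g : Γ} {S : Set I} (hg : SuppIn g S) : SuppIn g⁻¹ S := by
  intro x hx
  refine hg x fun h => hx ?_
  have h2 : g⁻¹ • (g • x) = x := inv_smul_smul g x
  rwa [h] at h2

theorem suppIn_list_prod {S : Set I} :
    ∀ l : List Γ, (∀ g ∈ l, SuppIn g S) → SuppIn l.prod S := by
  intro l
  induction l with
  | nil => intro _; simpa using suppIn_one S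
  | cons g t ih =>
      intro h
      rw [List.prod_cons]
      exact (h g (List.mem_cons_self)).mul (ih fun x hx => h x (List.mem_cons_of_mem _ hx))

theorem SuppIn.commutatorElement {g h : Γ} {S : Set I} (hg : SuppIn g S) (hh : SuppIn h S) :
    SuppIn ⁅g, h⁆ S := by
  rw [commutatorElement_def]
  exact ((hg.mul hh).mul hg.inv).mul hh.inv

/-- Points moved by `g` stay moved. -/
theorem smul_moved {g : Γ} {x : I} (hx : g • x ≠ x) : g • (g • x) ≠ g • x :=
  fun e => hx (MulAction.injective g e)

theorem commute_of_disjoint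
    (hfaith : ∀ g : Γ, (∀ x : I, g • x = x) → g = 1)
    {g h : Γ} {S T : Set I} (hg : SuppIn g S) (hh : SuppIn h T)
    (hd : ∀ x, x ∈ S → x ∉ T) : Commute g h := by
  have key : ∀ x : I, g • (h • x) = h • (g • x) := by
    intro x
    by_cases hhx : h • x = x
    · by_cases hgx : g • x = x
      · simp [hhx, hgx]
      · have hgS : g • x ∈ S := hg _ (smul_moved hgx)
        have : h • (g • x) = g • x := by
          by_contra hc
          exact hd _ hgS (hh _ hc)
        rw [hhx, this]
    · have hxT : x ∈ T := hh x hhx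
      have hgx : g • x = x := by
        by_contra hc
        exact hd _ (hg x hc) hxT
      have hhxT : h • x ∈ T := hh _ (smul_moved hhx)
      have hgfix : g • (h • x) = h • x := by
        by_contra hc
        exact hd _ (hg _ hc) hhxT
      rw [hgfix, hgx]
  have h1 : ∀ x : I, ((h * g)⁻¹ * (g * h)) • x = x := by
    intro x
    rw [mul_smul, mul_smul, key, ← mul_smul h g x, inv_smul_smul]
  have h2 : (h * g)⁻¹ * (g * h) = 1 := hfaith _ h1
  have h3 : h * g = g * h := by
    rwa [inv_mul_eq_one] at h2
  exact h3.symm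

theorem smul_lt (hord : ∀ g : Γ, ∀ x y : I, x ≤ y → g • x ≤ g • y)
    {g : Γ} {x y : I} (h : x < y) : g • x < g • y :=
  lt_of_le_of_ne (hord g x y h.le) fun e => h.ne (MulAction.injective g e)

theorem suppIn_conj_Ioo (hord : ∀ g : Γ, ∀ x y : I, x ≤ y → g • x ≤ g • y)
    {g φ : Γ} {a b : I} (hg : SuppIn g (Set.Ioo a b)) :
    SuppIn (φ * g * φ⁻¹) (Set.Ioo (φ • a) (φ • b)) := by
  intro x hx
  have h1 : g • (φ⁻¹ • x) ≠ φ⁻¹ • x := by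
    intro e
    apply hx
    rw [mul_smul, mul_smul, e, smul_inv_smul]
  obtain ⟨h2, h3⟩ := hg _ h1
  refine ⟨?_, ?_⟩
  · have := smul_lt hord (g := φ) h2; rwa [smul_inv_smul] at this
  · have := smul_lt hord (g := φ) h3; rwa [smul_inv_smul] at this

theorem suppIn_conj_Ioi (hord : ∀ g : Γ, ∀ x y : I, x ≤ y → g • x ≤ g • y)
    {g φ : Γ} {a : I} (hg : SuppIn g (Set.Ioi a)) :
    SuppIn (φ * g * φ⁻¹) (Set.Ioi (φ • a)) := by
  intro x hx
  have h1 : g • (φ⁻¹ • x) ≠ φ⁻¹ • x := by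
    intro e
    apply hx
    rw [mul_smul, mul_smul, e, smul_inv_smul]
  have h2 : a < φ⁻¹ • x := hg _ h1
  have := smul_lt hord (g := φ) h2
  rwa [smul_inv_smul] at this

theorem commutator_split {x y u v : Γ} (hux : Commute u x) (huy : Commute u y)
    (hvx : Commute v x) (hvy : Commute v y) :
    ⁅x * u, y * v⁆ = ⁅x, y⁆ * ⁅u, v⁆ := by
  have hW : Commute (u * v * u⁻¹ * v⁻¹) (x⁻¹ * y⁻¹) := by
    have h1 : Commute u (x⁻¹ * y⁻¹) := (hux.inv_right).mul_right (huy.inv_right)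
    have h2 : Commute v (x⁻¹ * y⁻¹) := (hvx.inv_right).mul_right (hvy.inv_right)
    exact ((h1.mul_left h2).mul_left h1.inv_left).mul_left h2.inv_left |>.symm.symm
  calc ⁅x * u, y * v⁆
      = (x * u) * (y * v) * ((x * u)⁻¹ * (y * v)⁻¹) := by
        rw [commutatorElement_def]; group
    _ = ((x * y) * (u * v)) * ((u⁻¹ * v⁻¹) * (x⁻¹ * y⁻¹)) := by
        rw [huy.mul_mul_mul_comm, mul_inv_rev, mul_inv_rev,
          (hvx.symm.inv_inv).mul_mul_mul_comm]
    _ = (x * y) * ((u * v * u⁻¹ * v⁻¹) * (x⁻¹ * y⁻¹)) := by group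
    _ = (x * y) * ((x⁻¹ * y⁻¹) * (u * v * u⁻¹ * v⁻¹)) := by rw [hW.eq]
    _ = ⁅x, y⁆ * ⁅u, v⁆ := by rw [commutatorElement_def, commutatorElement_def]; group

theorem step_id (c F A W φ : Γ) (hEq : F = ⁅A, φ⁆ * (φ * W * φ⁻¹))
    (hcomm : Commute F (φ * W * φ⁻¹)) :
    c * F = ⁅c * F * (φ * A * φ⁻¹), φ⁆ * (φ * (c * (φ * W * φ⁻¹)) * φ⁻¹) := by
  have hA : A * φ * A⁻¹ * φ⁻¹ = (φ * W * φ⁻¹)⁻¹ * F := by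
    have h1 : ⁅A, φ⁆ = F * (φ * W * φ⁻¹)⁻¹ := by rw [hEq]; group
    rw [commutatorElement_def] at h1
    rw [h1, (hcomm.inv_right).eq]
  symm
  calc ⁅c * F * (φ * A * φ⁻¹), φ⁆ * (φ * (c * (φ * W * φ⁻¹)) * φ⁻¹)
      = c * F * φ * (A * φ * A⁻¹ * φ⁻¹) * F⁻¹ * (φ * W * φ⁻¹) * φ⁻¹ := by
        rw [commutatorElement_def]; group
    _ = c * F * φ * ((φ * W * φ⁻¹)⁻¹ * F) * F⁻¹ * (φ * W * φ⁻¹) * φ⁻¹ := by rw [hA]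
    _ = c * F := by group

theorem key_lemma (hord : ∀ g : Γ, ∀ x y : I, x ≤ y → g • x ≤ g • y)
    (hfaith : ∀ g : Γ, (∀ x : I, g • x = x) → g = 1) :
    ∀ (L : List (Γ × Γ)) (a b : I) (φ : Γ), a < b → b ≤ φ • a →
    (∀ p ∈ L, SuppIn p.1 (Set.Ioo a b) ∧ SuppIn p.2 (Set.Ioo a b)) →
    ∃ A U V : Γ, (L.map fun p => ⁅p.1, p.2⁆).prod = ⁅A, φ⁆ * (φ * ⁅U, V⁆ * φ⁻¹) ∧
      SuppIn U (Set.Ioi a) ∧ SuppIn V (Set.Ioi a) := by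
  intro L
  induction L with
  | nil =>
      intro a b φ hab hba hsupp
      exact ⟨1, 1, 1, by simp, suppIn_one _, suppIn_one _⟩
  | cons p T ih =>
      obtain ⟨x, y⟩ := p
      intro a b φ hab hba hsupp
      obtain ⟨A', U', V', hEq, hU', hV'⟩ :=
        ih a b φ hab hba fun q hq => hsupp q (List.mem_cons_of_mem _ hq)
      have hx : SuppIn x (Set.Ioo a b) := (hsupp (x, y) (List.mem_cons_self)).1
      have hy : SuppIn y (Set.Ioo a b) := (hsupp (x, y) (List.mem_cons_self)).2
      have hF' : SuppIn (T.map fun p => ⁅p.1, p.2⁆).prod (Set.Ioo a b) := by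
        refine suppIn_list_prod _ ?_
        intro g hg
        obtain ⟨q, hq, rfl⟩ := List.mem_map.mp hg
        exact ((hsupp q (List.mem_cons_of_mem _ hq)).1).commutatorElement
          ((hsupp q (List.mem_cons_of_mem _ hq)).2)
      have hdisj : ∀ z : I, z ∈ Set.Ioo a b → z ∉ Set.Ioi (φ • a) := by
        intro z hz hz'
        exact lt_irrefl z (((hz.2.trans_le hba)).trans hz')
      have hU'c : SuppIn (φ * U' * φ⁻¹) (Set.Ioi (φ • a)) := suppIn_conj_Ioi hord hU'
      have hV'c : SuppIn (φ * V' * φ⁻¹) (Set.Ioi (φ • a)) := suppIn_conj_Ioi hord hV'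
      have hW' : SuppIn ⁅U', V'⁆ (Set.Ioi a) := hU'.commutatorElement hV'
      have hWc : SuppIn (φ * ⁅U', V'⁆ * φ⁻¹) (Set.Ioi (φ • a)) := suppIn_conj_Ioi hord hW'
      have cux : Commute (φ * U' * φ⁻¹) x :=
        (commute_of_disjoint hfaith hx hU'c hdisj).symm
      have cuy : Commute (φ * U' * φ⁻¹) y :=
        (commute_of_disjoint hfaith hy hU'c hdisj).symm
      have cvx : Commute (φ * V' * φ⁻¹) x :=
        (commute_of_disjoint hfaith hx hV'c hdisj).symm
      have cvy : Commute (φ * V' * φ⁻¹) y :=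
        (commute_of_disjoint hfaith hy hV'c hdisj).symm
      have cFW : Commute ((T.map fun p => ⁅p.1, p.2⁆).prod) (φ * ⁅U', V'⁆ * φ⁻¹) :=
        commute_of_disjoint hfaith hF' hWc hdisj
      have hIoi : Set.Ioi (φ • a) ⊆ Set.Ioi a := Set.Ioi_subset_Ioi (hab.le.trans hba)
      refine ⟨⁅x, y⁆ * (T.map fun p => ⁅p.1, p.2⁆).prod * (φ * A' * φ⁻¹),
        x * (φ * U' * φ⁻¹), y * (φ * V' * φ⁻¹), ?_, ?_, ?_⟩
      · have hsplit : ⁅x * (φ * U' * φ⁻¹), y * (φ * V' * φ⁻¹)⁆ =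
            ⁅x, y⁆ * ⁅φ * U' * φ⁻¹, φ * V' * φ⁻¹⁆ :=
          commutator_split cux cuy cvx cvy
        have hconj : ⁅φ * U' * φ⁻¹, φ * V' * φ⁻¹⁆ = φ * ⁅U', V'⁆ * φ⁻¹ := by
          rw [commutatorElement_def, commutatorElement_def]; group
        rw [List.map_cons, List.prod_cons, hsplit, hconj]
        exact step_id _ _ _ _ _ hEq cFW
      · exact (hx.mono Set.Ioo_subset_Ioi_self).mul (hU'c.mono hIoi)
      · exact (hy.mono Set.Ioo_subset_Ioi_self).mul (hV'c.mono hIoi)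

theorem exists_pairs : ∀ l : List Γ,
    (∀ y ∈ l, y ∈ commutatorSet Γ ∨ y⁻¹ ∈ commutatorSet Γ) →
    ∃ L : List (Γ × Γ), (L.map fun p => ⁅p.1, p.2⁆) = l := by
  intro l
  induction l with
  | nil => exact fun _ => ⟨[], rfl⟩
  | cons z t ih =>
      intro h
      obtain ⟨L, hL⟩ := ih fun w hw => h w (List.mem_cons_of_mem _ hw)
      rcases h z (List.mem_cons_self) with hz | hz
      · obtain ⟨g, h', e⟩ := hz
        exact ⟨(g, h') :: L, by simp [hL, e]⟩
      · obtain ⟨g, h', e⟩ := hz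
        refine ⟨(h', g) :: L, ?_⟩
        have : ⁅h', g⁆ = z := by
          rw [← commutatorElement_inv, e, inv_inv]
        simp [hL, this]

theorem exists_bounds (hbounded : ∀ g : Γ, ∃ a b : I, ∀ x : I, g • x ≠ x → a < x ∧ x < b)
    {p q : I} (hpq : p < q) :
    ∀ l : List Γ, ∃ a b : I, a < b ∧ ∀ g ∈ l, SuppIn g (Set.Ioo a b) := by
  intro l
  induction l with
  | nil => exact ⟨p, q, hpq, by simp⟩
  | cons g t ih =>
      obtain ⟨a, b, hab, hsup⟩ := ih
      obtain ⟨a', b', hg⟩ := hbounded g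
      refine ⟨min a a', max b b', lt_of_le_of_lt (min_le_left _ _) (lt_of_lt_of_le hab (le_max_left _ _)), ?_⟩
      intro g' hg'
      rcases List.mem_cons.mp hg' with rfl | hmem
      · intro x hx
        obtain ⟨h1, h2⟩ := hg x hx
        exact ⟨lt_of_le_of_lt (min_le_right _ _) h1, lt_of_lt_of_le h2 (le_max_right _ _)⟩
      · intro x hx
        obtain ⟨h1, h2⟩ := hsup g' hmem x hx
        exact ⟨lt_of_le_of_lt (min_le_left _ _) h1, lt_of_lt_of_le h2 (le_max_left _ _)⟩

theorem prod_inv_eq : ∀ L : List (Γ × Γ),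
    (((L.map fun p => (p.2, p.1)).reverse).map fun p => ⁅p.1, p.2⁆).prod =
      ((L.map fun p => ⁅p.1, p.2⁆).prod)⁻¹ := by
  intro L
  induction L with
  | nil => simp
  | cons c T ih =>
      simp only [List.map_cons, List.reverse_cons, List.map_append, List.prod_append,
        List.prod_cons, mul_inv_rev, List.map_nil, List.prod_nil, mul_one]
      rw [ih, commutatorElement_inv]

end CommWidthTwoAux

/-- If a group `Γ` acts faithfully by order-preserving bijections on a linear
order `I`, boundedly and proximally, then every element of the commutator
subgroup `Γ'` is a product of at most two commutators of elements of `Γ`. -/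
theorem commutator_width_two_of_bounded_proximal
    {Γ : Type*} [Group Γ] {I : Type*} [LinearOrder I] [MulAction Γ I]
    (hord : ∀ g : Γ, ∀ x y : I, x ≤ y → g • x ≤ g • y)
    (hfaith : ∀ g : Γ, (∀ x : I, g • x = x) → g = 1)
    (hbounded : ∀ g : Γ, ∃ a b : I, ∀ x : I, g • x ≠ x → a < x ∧ x < b)
    (hprox : ∀ a b c d : I, a < b → c < d → ∃ g : Γ, g • a < c ∧ d < g • b) :
    ∀ f ∈ commutator Γ, ∃ a b c d : Γ, f = ⁅a, b⁆ * ⁅c, d⁆ := by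
  intro f hf
  by_cases hpair : ∃ p q : I, p < q
  · obtain ⟨p, q, hpq⟩ := hpair
    have no_min : ∀ x : I, ∃ y, y < x := by
      intro x
      by_contra hc
      push_neg at hc
      have hxq : x < q := lt_of_le_of_lt (hc p) hpq
      obtain ⟨g, hg, -⟩ := hprox x q x q hxq hxq
      exact absurd hg (not_lt.mpr (hc _))
    have no_max : ∀ x : I, ∃ y, x < y := by
      intro x
      by_contra hc
      push_neg at hc
      have hpx : p < x := lt_of_lt_of_le hpq (hc q)
      obtain ⟨g, -, hg⟩ := hprox p x p x hpx hpx
      exact absurd hg (not_lt.mpr (hc _))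
    have hf' : f ∈ Subgroup.closure (commutatorSet Γ) := by
      rwa [← commutator_eq_closure] at *
    -- f is a product of commutators
    have hP : ∃ L : List (Γ × Γ), (L.map fun p => ⁅p.1, p.2⁆).prod = f := by
      refine Subgroup.closure_induction
        (p := fun g _ => ∃ L : List (Γ × Γ), (L.map fun p => ⁅p.1, p.2⁆).prod = g)
        ?_ ?_ ?_ ?_ hf'
      · rintro z ⟨g, h, rfl⟩
        exact ⟨[(g, h)], by simp⟩
      · exact ⟨[], by simp⟩
      · rintro u v - - ⟨L1, rfl⟩ ⟨L2, rfl⟩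
        exact ⟨L1 ++ L2, by simp⟩
      · rintro u - ⟨L, rfl⟩
        exact ⟨(L.map fun p => (p.2, p.1)).reverse, prod_inv_eq L⟩
    obtain ⟨L, hL⟩ := hP
    obtain ⟨a, b, hab, hbd⟩ :=
      exists_bounds hbounded hpq (L.map Prod.fst ++ L.map Prod.snd)
    obtain ⟨a₁, ha₁⟩ := no_min a
    obtain ⟨a₂, ha₂⟩ := no_min a₁
    obtain ⟨w, hw⟩ := no_max b
    obtain ⟨g, hg, -⟩ := hprox b w a₂ a₁ hw ha₂
    have hφ : b ≤ g⁻¹ • a := by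
      by_contra hc
      push_neg at hc
      have h1 : g • (g⁻¹ • a) ≤ g • b := hord g _ _ hc.le
      rw [smul_inv_smul] at h1
      exact absurd (lt_of_le_of_lt h1 ((hg.trans ha₂).trans ha₁)) (lt_irrefl a)
    obtain ⟨A, U, V, hmain, -, -⟩ := key_lemma hord hfaith L a b g⁻¹ hab hφ
      (fun pp hpp => ⟨hbd _ (List.mem_append_left _ (List.mem_map_of_mem hpp)),
        hbd _ (List.mem_append_right _ (List.mem_map_of_mem hpp))⟩)
    refine ⟨A, g⁻¹, g⁻¹ * U * g, g⁻¹ * V * g, ?_⟩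
    rw [← hL, hmain]
    congr 1
    rw [commutatorElement_def, commutatorElement_def]
    group
  · -- I has at most one point: Γ is trivial
    have htriv : ∀ g : Γ, g = 1 := by
      intro g
      refine hfaith g fun x => ?_
      by_contra hc
      rcases lt_or_gt_of_ne hc with h | h
      · exact hpair ⟨_, _, h⟩
      · exact hpair ⟨_, _, h⟩
    refine ⟨1, 1, 1, 1, ?_⟩
    rw [htriv f]
    simp
end

section
/- Every proximal order-preserving group action on a linear order (I,≤) is order-primitive: for any linear order (J,≤), group homomorphism Ψ: Γ → Aut(J,≤), and order-preserving Γ-equivariant map ψ: I → J, either ψ is injective or ψ(I) is a singleton. -/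
/-- Every proximal order-preserving action of a group `Γ` on a linear order `I`
is order-primitive: any order-preserving `Γ`-equivariant map from `I` to another
linearly ordered `Γ`-set `J` is injective or has singleton image. -/
theorem proximal_implies_primitive
    {Γ : Type*} [Group Γ] {I : Type u_1} [LinearOrder I] [MulAction Γ I]
    (hord : ∀ g : Γ, ∀ x y : I, x ≤ y → g • x ≤ g • y)
    (hprox : ∀ a b c d : I, a < b → c < d → ∃ g : Γ, g • a < c ∧ d < g • b) :
    ∀ (J : Type u_1) [inst : LinearOrder J] (Ψ : Γ →* (J ≃o J)) (ψ : I → J),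
      Monotone ψ → (∀ (γ : Γ) (x : I), ψ (γ • x) = Ψ γ (ψ x)) →
      Function.Injective ψ ∨ ∃ j : J, ∀ x : I, ψ x = j := by
  intro J _ Ψ ψ hmono hequiv
  by_cases hinj : Function.Injective ψ
  · exact Or.inl hinj
  · right
    -- get a < b with ψ a = ψ b
    obtain ⟨a, b, heq, hne⟩ : ∃ a b : I, ψ a = ψ b ∧ a ≠ b := by
      simp only [Function.Injective, not_forall] at hinj
      obtain ⟨a, b, h1, h2⟩ := hinj
      exact ⟨a, b, h1, h2⟩
    obtain ⟨a, b, hab, heq⟩ : ∃ a b : I, a < b ∧ ψ a = ψ b := by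
      rcases hne.lt_or_gt with h | h
      · exact ⟨a, b, h, heq⟩
      · exact ⟨b, a, h, heq.symm⟩
    have key : ∀ x y : I, x < y → ψ x = ψ y := by
      intro x y hxy
      obtain ⟨g, h1, h2⟩ := hprox a b x y hab hxy
      have e : ψ (g • a) = ψ (g • b) := by
        rw [hequiv, hequiv, heq]
      have le1 : ψ (g • a) ≤ ψ x := hmono h1.le
      have le2 : ψ y ≤ ψ (g • b) := hmono h2.le
      exact le_antisymm (hmono hxy.le) (le2.trans (by rw [← e]; exact le1))
    refine ⟨ψ a, fun x => ?_⟩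
    rcases lt_trichotomy x a with h | h | h
    · exact (key x a h)
    · rw [h]
    · exact (key a x h).symm
end

section
/- Let Γ = 𝔽(Γ) be a topological full group acting faithfully and extremely proximally on a Cantor set C. Then the commutator subgroup Γ' also acts extremely proximally on C: for any nonempty proper clopen sets U, V ⊊ C there exists g ∈ Γ' with g(U) ⊊ V. -/
variable {C : Type*}

/-- The group of self-homeomorphisms of a space, with `g * h = h.trans g`
(i.e. `(g * h) x = g (h x)`). -/
instance homeoGroup [TopologicalSpace C] : Group (C ≃ₜ C) where
  mul g h := h.trans g
  one := Homeomorph.refl C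
  inv := Homeomorph.symm
  mul_assoc _ _ _ := rfl
  one_mul _ := rfl
  mul_one _ := rfl
  inv_mul_cancel g := by ext x; exact g.symm_apply_apply x

/-- `Γ` is a topological full group: any homeomorphism which locally agrees with
elements of `Γ` belongs to `Γ`. -/
def IsTopologicalFullGroup [TopologicalSpace C] (Γ : Subgroup (C ≃ₜ C)) : Prop :=
  ∀ g : C ≃ₜ C,
    (∀ x : C, ∃ U : Set C, IsOpen U ∧ x ∈ U ∧ ∃ γ ∈ Γ, ∀ y ∈ U, g y = γ y) →
    g ∈ Γ

/-- A set `A` of homeomorphisms acts extremely proximally: any nonempty proper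
clopen set can be mapped strictly inside any other nonempty proper clopen set. -/
def ExtremelyProximal [TopologicalSpace C] (A : Set (C ≃ₜ C)) : Prop :=
  ∀ U V : Set C, IsClopen U → IsClopen V → U.Nonempty → V.Nonempty →
    U ≠ Set.univ → V ≠ Set.univ → ∃ g ∈ A, g '' U ⊂ V

attribute [local instance] Classical.propDecidable

open Set
open scoped commutatorElement

/-- In a Cantor set, inside any open set containing `p` and avoiding a point `q ≠ p`
one can find a clopen neighbourhood of `p` avoiding `q`. -/
lemma aux_cantor_clopen_sep [TopologicalSpace C] (hC : Nonempty (C ≃ₜ (ℕ → Bool)))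
    {O : Set C} (hO : IsOpen O) {p q : C} (hp : p ∈ O) (hq : q ≠ p) :
    ∃ K : Set C, IsClopen K ∧ p ∈ K ∧ K ⊆ O ∧ q ∉ K := by
  obtain ⟨e⟩ := hC
  haveI : CompactSpace C := e.symm.compactSpace
  haveI : T2Space C := e.symm.t2Space
  haveI : TotallyDisconnectedSpace C :=
    e.isEmbedding.isTotallyDisconnected_range.mp
      (isTotallyDisconnected_of_totallyDisconnectedSpace _)
  have hO' : IsOpen (O \ {q}) := hO.sdiff isClosed_singleton
  have hp' : p ∈ O \ {q} := ⟨hp, by simp [hq.symm]⟩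
  obtain ⟨K, hK, hpK, hKsub⟩ :=
    isTopologicalBasis_isClopen.exists_subset_of_mem_open hp' hO'
  exact ⟨K, hK, hpK, fun x hx => (hKsub hx).1, fun hqK => (hKsub hqK).2 rfl⟩

/-- A Cantor set has no isolated points: any open set containing `p` contains
another point. -/
lemma aux_cantor_exists_ne [TopologicalSpace C] (hC : Nonempty (C ≃ₜ (ℕ → Bool)))
    {O : Set C} (hO : IsOpen O) {p : C} (hp : p ∈ O) : ∃ q ∈ O, q ≠ p := by
  obtain ⟨e⟩ := hC
  have hO' : IsOpen (e.symm ⁻¹' O) := hO.preimage e.symm.continuous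
  have hp' : e p ∈ e.symm ⁻¹' O := by simp [hp]
  obtain ⟨I, u, hu, hsub⟩ := isOpen_pi_iff.mp hO' _ hp'
  obtain ⟨n, hn⟩ := I.exists_notMem
  set q' : ℕ → Bool := Function.update (e p) n (!(e p n)) with hq'def
  have hq' : q' ∈ (I : Set ℕ).pi u := by
    intro i hi
    rw [hq'def, Function.update_of_ne (by rintro rfl; exact hn hi)]
    exact (hu i hi).2
  refine ⟨e.symm q', hsub hq', fun h => ?_⟩
  have hqp : q' = e p := by
    have := congrArg e h
    simpa using this
  have := congrFun hqp n
  rw [hq'def, Function.update_self] at this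
  simp at this

/-- Core step: if `U` and `T` are disjoint nonempty proper clopen sets, then some
element of the commutator subgroup maps `U` strictly inside `T`. -/
lemma aux_step [TopologicalSpace C] (Γ : Subgroup (C ≃ₜ C))
    (hfull : IsTopologicalFullGroup Γ) (hprox : ExtremelyProximal (Γ : Set (C ≃ₜ C)))
    {U T : Set C} (hU : IsClopen U) (hT : IsClopen T) (hUne : U.Nonempty)
    (hTne : T.Nonempty) (hUp : U ≠ univ) (hTp : T ≠ univ) (hdisj : Disjoint U T) :
    ∃ c ∈ (⁅Γ, Γ⁆ : Subgroup (C ≃ₜ C)), c '' U ⊂ T := by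
  obtain ⟨g₀, hg₀Γ, hg₀⟩ := hprox U T hU hT hUne hTne hUp hTp
  set W : Set C := ⇑g₀ '' U with hWdef
  have hW : IsClopen W := by
    have : W = ⇑g₀.symm ⁻¹' U := g₀.image_eq_preimage_symm U
    rw [this]; exact hU.preimage g₀.symm.continuous
  have hWT : W ⊆ T := hg₀.1
  have hUW : Disjoint U W := hdisj.mono_right hWT
  -- the "swap" homeomorphism: g₀ on U, g₀⁻¹ on W, identity elsewhere
  set f : C → C := U.piecewise ⇑g₀ (W.piecewise ⇑g₀.symm id) with hfdef
  have hfU : ∀ x ∈ U, f x = g₀ x := fun x hx => piecewise_eq_of_mem _ _ _ hx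
  have hfW : ∀ x ∈ W, f x = g₀.symm x := by
    intro x hx
    rw [hfdef, piecewise_eq_of_notMem _ _ _ (disjoint_right.mp hUW hx),
      piecewise_eq_of_mem _ _ _ hx]
  have hfO : ∀ x, x ∉ U → x ∉ W → f x = x := by
    intro x hxU hxW
    rw [hfdef, piecewise_eq_of_notMem _ _ _ hxU, piecewise_eq_of_notMem _ _ _ hxW]
    rfl
  have hfcont : Continuous f := by
    refine Continuous.piecewise (by simp [hU.frontier_eq]) g₀.continuous ?_
    exact Continuous.piecewise (by simp [hW.frontier_eq]) g₀.symm.continuous continuous_id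
  have hinv : Function.Involutive f := by
    intro x
    by_cases hxU : x ∈ U
    · rw [hfU x hxU]
      have hmem : g₀ x ∈ W := mem_image_of_mem _ hxU
      rw [hfW _ hmem, g₀.symm_apply_apply]
    · by_cases hxW : x ∈ W
      · rw [hfW x hxW]
        have hmem : g₀.symm x ∈ U := by
          obtain ⟨y, hy, hyx⟩ := hxW
          rw [← hyx, g₀.symm_apply_apply]; exact hy
        rw [hfU _ hmem, g₀.apply_symm_apply]
      · rw [hfO x hxU hxW, hfO x hxU hxW]
  set gg : C ≃ₜ C := ⟨Function.Involutive.toPerm f hinv, hfcont, hfcont⟩ with hggdef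
  have hgg_apply : ∀ x, gg x = f x := fun _ => rfl
  have hgg_symm : ∀ x, gg.symm x = f x := fun _ => rfl
  have hggΓ : gg ∈ Γ := by
    apply hfull
    intro x
    by_cases hxU : x ∈ U
    · exact ⟨U, hU.2, hxU, g₀, hg₀Γ, fun y hy => by rw [hgg_apply, hfU y hy]⟩
    · by_cases hxW : x ∈ W
      · refine ⟨W, hW.2, hxW, g₀⁻¹, inv_mem hg₀Γ, fun y hy => ?_⟩
        rw [hgg_apply, hfW y hy]; rfl
      · refine ⟨(U ∪ W)ᶜ, (hU.union hW).compl.2, by simp [hxU, hxW], 1, one_mem _,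
          fun y hy => ?_⟩
        simp only [mem_compl_iff, mem_union, not_or] at hy
        rw [hgg_apply, hfO y hy.1 hy.2]; rfl
  -- the support S of gg is a proper nonempty clopen set
  set S : Set C := U ∪ W with hSdef
  have hS : IsClopen S := hU.union hW
  have hSne : S.Nonempty := hUne.mono subset_union_left
  have hSp : S ≠ univ := by
    obtain ⟨t, htT, htW⟩ := exists_of_ssubset hg₀
    intro h
    have : t ∈ S := h ▸ mem_univ t
    rcases this with htU | htW'
    · exact disjoint_left.mp hdisj htU htT
    · exact htW htW'
  -- move S off U
  have hUcne : Uᶜ.Nonempty := nonempty_compl.mpr hUp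
  have hUcp : Uᶜ ≠ univ := by
    intro h
    obtain ⟨x, hx⟩ := hUne
    exact (h ▸ mem_univ x : x ∈ Uᶜ) hx
  obtain ⟨h, hhΓ, hh⟩ := hprox S Uᶜ hS hU.compl hSne hUcne hSp hUcp
  have hhUS : ∀ x ∈ U, x ∉ ⇑h '' S := fun x hx hmem => hh.1 hmem hx
  refine ⟨⁅gg, h⁆, Subgroup.commutator_mem_commutator hggΓ hhΓ, ?_⟩
  have hc : ∀ x ∈ U, (⁅gg, h⁆ : C ≃ₜ C) x = g₀ x := by
    intro x hx
    have h1 : (⁅gg, h⁆ : C ≃ₜ C) x = gg (h (gg.symm (h.symm x))) := rfl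
    have h2 : h.symm x ∉ S := fun hmem => by
      have : x ∈ ⇑h '' S := ⟨h.symm x, hmem, h.apply_symm_apply x⟩
      exact hhUS x hx this
    have h3 : gg.symm (h.symm x) = h.symm x := by
      rw [hgg_symm, hfO _ (fun hm => h2 (Or.inl hm)) (fun hm => h2 (Or.inr hm))]
    rw [h1, h3, h.apply_symm_apply, hgg_apply, hfU x hx]
  have himg : (⁅gg, h⁆ : C ≃ₜ C) '' U = ⇑g₀ '' U := image_congr hc
  rw [himg]
  exact hg₀

/-- If a topological full group `Γ` acts (faithfully) extremely proximally on a
Cantor set `C`, then so does its commutator subgroup `Γ' = ⁅Γ,Γ⁆`. -/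
theorem commutator_extremely_proximal [TopologicalSpace C]
    (hC : Nonempty (C ≃ₜ (ℕ → Bool))) (Γ : Subgroup (C ≃ₜ C))
    (hfull : IsTopologicalFullGroup Γ) (hprox : ExtremelyProximal (Γ : Set (C ≃ₜ C))) :
    ExtremelyProximal ((⁅Γ, Γ⁆ : Subgroup (C ≃ₜ C)) : Set (C ≃ₜ C)) := by
  intro U V hU hV hUne hVne hUp hVp
  -- find p ∈ V and q ∈ Uᶜ with p ≠ q
  obtain ⟨q, hq⟩ : Uᶜ.Nonempty := nonempty_compl.mpr hUp
  obtain ⟨p, hpV, hpq⟩ : ∃ p ∈ V, p ≠ q := by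
    by_cases hqV : q ∈ V
    · obtain ⟨p, hpV, hne⟩ := aux_cantor_exists_ne hC hV.2 hqV
      exact ⟨p, hpV, hne⟩
    · obtain ⟨p, hpV⟩ := hVne
      exact ⟨p, hpV, fun h => hqV (h ▸ hpV)⟩
  -- V₂ : clopen nbhd of p inside V avoiding q
  obtain ⟨V₂, hV₂, hpV₂, hV₂V, hqV₂⟩ := aux_cantor_clopen_sep hC hV.2 hpV hpq.symm
  -- T₁ : clopen nbhd of q inside Uᶜ ∩ V₂ᶜ avoiding p
  have hopen : IsOpen (Uᶜ ∩ V₂ᶜ) := hU.compl.2.inter hV₂.compl.2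
  have hqmem : q ∈ Uᶜ ∩ V₂ᶜ := ⟨hq, hqV₂⟩
  obtain ⟨T₁, hT₁, hqT₁, hT₁sub, hpT₁⟩ := aux_cantor_clopen_sep hC hopen hqmem hpq
  -- first step : U into T₁
  have hT₁ne : T₁.Nonempty := ⟨q, hqT₁⟩
  have hT₁p : T₁ ≠ univ := fun h => hpT₁ (h ▸ mem_univ p)
  obtain ⟨c₁, hc₁mem, hc₁⟩ := aux_step Γ hfull hprox hU hT₁ hUne hT₁ne hUp hT₁p
    (disjoint_left.mpr fun {x} hxU hxT₁ => (hT₁sub hxT₁).1 hxU)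
  -- second step : T₁ into V₂
  have hV₂ne : V₂.Nonempty := ⟨p, hpV₂⟩
  have hV₂p : V₂ ≠ univ := fun h => hqV₂ (h ▸ mem_univ q)
  obtain ⟨c₂, hc₂mem, hc₂⟩ := aux_step Γ hfull hprox hT₁ hV₂ hT₁ne hV₂ne hT₁p hV₂p
    (disjoint_left.mpr fun {x} hxT₁ hxV₂ => (hT₁sub hxT₁).2 hxV₂)
  refine ⟨c₂ * c₁, mul_mem hc₂mem hc₁mem, ?_⟩
  have himg : (⇑(c₂ * c₁)) '' U = ⇑c₂ '' (⇑c₁ '' U) := by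
    rw [image_image]; rfl
  have hsub : (⇑(c₂ * c₁)) '' U ⊆ ⇑c₂ '' T₁ := by
    rw [himg]; exact image_mono hc₁.1
  have hsubV : (⇑(c₂ * c₁)) '' U ⊆ V := hsub.trans (hc₂.1.trans hV₂V)
  obtain ⟨v, hvV₂, hv⟩ := exists_of_ssubset hc₂
  exact (ssubset_iff_of_subset hsubV).mpr
    ⟨v, hV₂V hvV₂, fun hmem => hv (hsub hmem)⟩
end

section
/- Let Γ be a topological full group acting faithfully and extremely proximally on a Cantor set C. For any two nontrivial f, g ∈ Γ there exists h ∈ Γ' such that (hgh⁻¹)·f acts as the identity on some nonempty clopen subset of C. -/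
variable {C : Type*}

section Aux
variable [TopologicalSpace C]

lemma hg_mul_apply (p q : C ≃ₜ C) (x : C) : (p * q) x = p (q x) := rfl
lemma hg_inv_apply (p : C ≃ₜ C) (x : C) : (p⁻¹) x = p.symm x := rfl
lemma hg_one_apply (x : C) : (1 : C ≃ₜ C) x = x := rfl

lemma clopen_image (γ : C ≃ₜ C) {K : Set C} (hK : IsClopen K) : IsClopen (γ '' K) := by
  have : γ '' K = γ.symm ⁻¹' K := Equiv.image_eq_preimage_symm _ _
  rw [this]; exact hK.preimage γ.symm.continuous

open Classical in
noncomputable def swapFun (γ : C ≃ₜ C) (K : Set C) : C → C :=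
  fun x => if x ∈ K then γ x else if x ∈ γ '' K then γ.symm x else x

lemma swapFun_of_mem {γ : C ≃ₜ C} {K : Set C} {x : C} (hx : x ∈ K) :
    swapFun γ K x = γ x := by simp [swapFun, hx]

lemma swapFun_of_mem_image {γ : C ≃ₜ C} {K : Set C} (hd : Disjoint K (γ '' K)) {x : C}
    (hx : x ∈ γ '' K) : swapFun γ K x = γ.symm x := by
  have hxK : x ∉ K := fun h => (Set.disjoint_left.mp hd h) hx
  simp [swapFun, hxK, hx]

lemma swapFun_of_not_mem {γ : C ≃ₜ C} {K : Set C} {x : C} (hx : x ∉ K) (hx' : x ∉ γ '' K) :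
    swapFun γ K x = x := by simp [swapFun, hx, hx']

lemma swapFun_involutive {γ : C ≃ₜ C} {K : Set C} (hd : Disjoint K (γ '' K)) :
    Function.Involutive (swapFun γ K) := by
  intro x
  by_cases hx : x ∈ K
  · rw [swapFun_of_mem hx]
    have h1 : γ x ∈ γ '' K := ⟨x, hx, rfl⟩
    rw [swapFun_of_mem_image hd h1, Homeomorph.symm_apply_apply]
  · by_cases hx' : x ∈ γ '' K
    · rw [swapFun_of_mem_image hd hx']
      obtain ⟨k, hk, rfl⟩ := hx'
      rw [Homeomorph.symm_apply_apply, swapFun_of_mem hk]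
    · rw [swapFun_of_not_mem hx hx', swapFun_of_not_mem hx hx']

lemma swapFun_continuous {γ : C ≃ₜ C} {K : Set C} (hK : IsClopen K)
    (hd : Disjoint K (γ '' K)) : Continuous (swapFun γ K) := by
  rw [continuous_iff_continuousAt]
  intro x
  by_cases hx : x ∈ K
  · exact γ.continuous.continuousAt.congr <| Filter.eventuallyEq_of_mem
      (hK.isOpen.mem_nhds hx) (fun y hy => (swapFun_of_mem hy).symm)
  · by_cases hx' : x ∈ γ '' K
    · exact γ.symm.continuous.continuousAt.congr <| Filter.eventuallyEq_of_mem
        ((clopen_image γ hK).isOpen.mem_nhds hx')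
        (fun y hy => (swapFun_of_mem_image hd hy).symm)
    · refine continuous_id.continuousAt.congr <| Filter.eventuallyEq_of_mem
        (((hK.union (clopen_image γ hK)).compl.isOpen).mem_nhds ?_) (fun y hy => ?_)
      · simp [hx, hx']
      · have : y ∉ K ∧ y ∉ γ '' K := by simpa [Set.mem_union, not_or] using hy
        exact (swapFun_of_not_mem this.1 this.2).symm

noncomputable def swapHomeo (γ : C ≃ₜ C) (K : Set C) (hK : IsClopen K)
    (hd : Disjoint K (γ '' K)) : C ≃ₜ C where
  toEquiv := (swapFun_involutive hd).toPerm _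
  continuous_toFun := swapFun_continuous hK hd
  continuous_invFun := swapFun_continuous hK hd

lemma swapHomeo_apply (γ : C ≃ₜ C) (K : Set C) (hK : IsClopen K)
    (hd : Disjoint K (γ '' K)) (x : C) : swapHomeo γ K hK hd x = swapFun γ K x := rfl

lemma swapHomeo_symm_apply (γ : C ≃ₜ C) (K : Set C) (hK : IsClopen K)
    (hd : Disjoint K (γ '' K)) (x : C) : (swapHomeo γ K hK hd).symm x = swapFun γ K x := rfl

lemma swapHomeo_mem {Γ : Subgroup (C ≃ₜ C)} (hfull : IsTopologicalFullGroup Γ)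
    {γ : C ≃ₜ C} (hγ : γ ∈ Γ) (K : Set C) (hK : IsClopen K)
    (hd : Disjoint K (γ '' K)) : swapHomeo γ K hK hd ∈ Γ := by
  apply hfull
  intro x
  by_cases hx : x ∈ K
  · exact ⟨K, hK.isOpen, hx, γ, hγ, fun y hy => swapFun_of_mem hy⟩
  · by_cases hx' : x ∈ γ '' K
    · exact ⟨γ '' K, (clopen_image γ hK).isOpen, hx', γ⁻¹, inv_mem hγ,
        fun y hy => swapFun_of_mem_image hd hy⟩
    · refine ⟨(K ∪ γ '' K)ᶜ, (hK.union (clopen_image γ hK)).compl.isOpen, by simp [hx, hx'],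
        1, one_mem Γ, fun y hy => ?_⟩
      have : y ∉ K ∧ y ∉ γ '' K := by simpa [Set.mem_union, not_or] using hy
      exact swapFun_of_not_mem this.1 this.2

end Aux

section Cantor
variable [TopologicalSpace C]

lemma cantor_clopen_sep (φ : C ≃ₜ (ℕ → Bool)) {p q : C} (h : p ≠ q) :
    ∃ K : Set C, IsClopen K ∧ p ∈ K ∧ q ∉ K := by
  have hpq : φ p ≠ φ q := fun e => h (φ.injective e)
  have : ∃ n, φ p n ≠ φ q n := by
    by_contra hc; push_neg at hc; exact hpq (funext hc)
  obtain ⟨n, hn⟩ := this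
  refine ⟨φ ⁻¹' ((fun u : ℕ → Bool => u n) ⁻¹' {φ p n}), ?_, rfl, fun hq' => hn ?_⟩
  · exact ((isClopen_discrete _).preimage (continuous_apply n)).preimage φ.continuous
  · exact (Set.mem_singleton_iff.mp hq').symm

lemma cantor_exists_ne (φ : C ≃ₜ (ℕ → Bool)) {M : Set C} (hM : IsOpen M) {p : C}
    (hp : p ∈ M) : ∃ x ∈ M, x ≠ p := by
  classical
  set u : ℕ → Bool := φ p with hu
  have hM' : IsOpen (φ.symm ⁻¹' M) := hM.preimage φ.symm.continuous
  have hu' : u ∈ φ.symm ⁻¹' M := by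
    simp [u, Set.mem_preimage, Homeomorph.symm_apply_apply, hp]
  set v : ℕ → (ℕ → Bool) := fun k => Function.update u k (!(u k)) with hv
  have htend : Filter.Tendsto v Filter.atTop (nhds u) := by
    rw [tendsto_pi_nhds]
    intro i
    apply Filter.Tendsto.congr' (f₁ := fun _ => u i) _ tendsto_const_nhds
    filter_upwards [Filter.eventually_gt_atTop i] with k hk
    exact (Function.update_of_ne (by omega) _ _).symm
  have := htend.eventually_mem (hM'.mem_nhds hu')
  obtain ⟨k, hk⟩ := this.exists
  refine ⟨φ.symm (v k), hk, fun hc => ?_⟩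
  have : v k = u := by
    have := congrArg φ hc
    simpa [u, Homeomorph.apply_symm_apply] using this
  have hkk := congrFun this k
  simp [v, Function.update_self] at hkk

lemma cantor_exists_ne4 (φ : C ≃ₜ (ℕ → Bool)) {M : Set C} (hM : IsOpen M)
    (hne : M.Nonempty) (p1 p2 p3 p4 : C) :
    ∃ x ∈ M, x ≠ p1 ∧ x ≠ p2 ∧ x ≠ p3 ∧ x ≠ p4 := by
  haveI : T2Space C := φ.isEmbedding.t2Space
  have step : ∀ (N : Set C) (p : C), IsOpen N → N.Nonempty →
      IsOpen (N \ {p}) ∧ (N \ {p}).Nonempty := by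
    rintro N p hN ⟨x, hx⟩
    refine ⟨hN.sdiff isClosed_singleton, ?_⟩
    by_cases hxp : x = p
    · subst hxp
      obtain ⟨y, hy, hyp⟩ := cantor_exists_ne φ hN hx
      exact ⟨y, hy, hyp⟩
    · exact ⟨x, hx, hxp⟩
  obtain ⟨h1, h1'⟩ := step M p1 hM hne
  obtain ⟨h2, h2'⟩ := step _ p2 h1 h1'
  obtain ⟨h3, h3'⟩ := step _ p3 h2 h2'
  obtain ⟨h4, h4'⟩ := step _ p4 h3 h3'
  obtain ⟨x, hx⟩ := h4'
  exact ⟨x, hx.1.1.1.1, hx.1.1.1.2, hx.1.1.2, hx.1.2, hx.2⟩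

end Cantor

open scoped commutatorElement

/-- If `Γ` is a topological full group acting extremely proximally on a Cantor
set `C`, then for any nontrivial `f, g ∈ Γ` there is `h ∈ Γ' = ⁅Γ,Γ⁆` such that
`(hgh⁻¹)·f` is the identity on some nonempty clopen subset of `C`. -/
theorem exists_conjugate_mul_fixing_clopen [TopologicalSpace C]
    (hC : Nonempty (C ≃ₜ (ℕ → Bool))) (Γ : Subgroup (C ≃ₜ C))
    (hfull : IsTopologicalFullGroup Γ) (hprox : ExtremelyProximal (Γ : Set (C ≃ₜ C)))
    (f g : C ≃ₜ C) (hfΓ : f ∈ Γ) (hgΓ : g ∈ Γ) (hf : f ≠ 1) (hg : g ≠ 1) :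
    ∃ h ∈ (⁅Γ, Γ⁆ : Subgroup (C ≃ₜ C)), ∃ U : Set C, IsClopen U ∧ U.Nonempty ∧
      ∀ x ∈ U, (h * g * h⁻¹ * f) x = x := by
  obtain ⟨φ⟩ := hC
  haveI : T2Space C := φ.isEmbedding.t2Space
  -- a point moved by f
  have hfx : ∃ x : C, f x ≠ x := by
    by_contra hc; push_neg at hc; exact hf (Homeomorph.ext hc)
  obtain ⟨x₀, hx₀⟩ := hfx
  -- the moved set of g is open and nonempty
  have hMgopen : IsOpen {y : C | g y ≠ y} := by
    have hcl : IsClosed {y : C | g y = y} := isClosed_eq g.continuous continuous_id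
    exact hcl.isOpen_compl
  have hMgne : Set.Nonempty {y : C | g y ≠ y} := by
    by_contra hc
    rw [Set.not_nonempty_iff_eq_empty, Set.eq_empty_iff_forall_notMem] at hc
    exact hg (Homeomorph.ext fun y => not_not.mp (hc y))
  obtain ⟨y₀, hy₀M, hy1, hy2, hy3, hy4⟩ :=
    cantor_exists_ne4 φ hMgopen hMgne x₀ (f x₀) (g x₀) (g (f x₀))
  have hy₀g : g y₀ ≠ y₀ := hy₀M
  set w₀ := g.symm y₀ with hw₀def
  have hgw₀ : g w₀ = y₀ := g.apply_symm_apply y₀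
  have dw1 : w₀ ≠ x₀ := fun hc => hy3 (hgw₀.symm.trans (congrArg g hc))
  have dw2 : w₀ ≠ f x₀ := fun hc => hy4 (hgw₀.symm.trans (congrArg g hc))
  have dw3 : w₀ ≠ y₀ := fun hc => hy₀g ((congrArg g hc.symm).trans hgw₀)
  obtain ⟨z, _, hz1, hz2, hz3, hz4⟩ :=
    cantor_exists_ne4 φ isOpen_univ ⟨x₀, Set.mem_univ x₀⟩ x₀ (f x₀) y₀ w₀
  -- pairwise clopen separation of the five points
  have sep4 : ∀ p q r s u : C, p ≠ q → p ≠ r → p ≠ s → p ≠ u →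
      ∃ K : Set C, IsClopen K ∧ p ∈ K ∧ q ∉ K ∧ r ∉ K ∧ s ∉ K ∧ u ∉ K := by
    intro p q r s u h1 h2 h3 h4
    obtain ⟨K1, hc1, hp1, hq1⟩ := cantor_clopen_sep φ h1
    obtain ⟨K2, hc2, hp2, hq2⟩ := cantor_clopen_sep φ h2
    obtain ⟨K3, hc3, hp3, hq3⟩ := cantor_clopen_sep φ h3
    obtain ⟨K4, hc4, hp4, hq4⟩ := cantor_clopen_sep φ h4
    exact ⟨K1 ∩ K2 ∩ K3 ∩ K4, ((hc1.inter hc2).inter hc3).inter hc4,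
      ⟨⟨⟨hp1, hp2⟩, hp3⟩, hp4⟩,
      fun hm => hq1 hm.1.1.1, fun hm => hq2 hm.1.1.2, fun hm => hq3 hm.1.2,
      fun hm => hq4 hm.2⟩
  obtain ⟨W1, hW1, m1, n12, n13, n14, n15⟩ :=
    sep4 x₀ (f x₀) y₀ w₀ z (Ne.symm hx₀) hy1.symm dw1.symm hz1.symm
  obtain ⟨W2, hW2, m2, n21, n23, n24, n25⟩ :=
    sep4 (f x₀) x₀ y₀ w₀ z hx₀ hy2.symm dw2.symm hz2.symm
  obtain ⟨W3, hW3, m3, n31, n32, n34, n35⟩ :=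
    sep4 y₀ x₀ (f x₀) w₀ z hy1 hy2 dw3.symm hz3.symm
  obtain ⟨W4, hW4, m4, n41, n42, n43, n45⟩ :=
    sep4 w₀ x₀ (f x₀) y₀ z dw1 dw2 dw3 hz4.symm
  obtain ⟨W5, hW5, m5, n51, n52, n53, n54⟩ :=
    sep4 z x₀ (f x₀) y₀ w₀ hz1 hz2 hz3 hz4
  set V2 : Set C := W2 \ W1 with hV2def
  set V3 : Set C := W3 \ (W1 ∪ W2) with hV3def
  set V4 : Set C := W4 \ (W1 ∪ W2 ∪ W3) with hV4def
  set V5 : Set C := W5 \ (W1 ∪ W2 ∪ W3 ∪ W4) with hV5def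
  have hV2c : IsClopen V2 := hW2.diff hW1
  have hV3c : IsClopen V3 := hW3.diff (hW1.union hW2)
  have hV4c : IsClopen V4 := hW4.diff ((hW1.union hW2).union hW3)
  have hV5c : IsClopen V5 := hW5.diff (((hW1.union hW2).union hW3).union hW4)
  have mV2 : f x₀ ∈ V2 := ⟨m2, n12⟩
  have mV3 : y₀ ∈ V3 := ⟨m3, fun hc => hc.elim n13 n23⟩
  have mV4 : w₀ ∈ V4 := ⟨m4, fun hc => hc.elim (fun hc' => hc'.elim n14 n24) n34⟩
  have mV5 : z ∈ V5 := ⟨m5, fun hc =>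
    hc.elim (fun hc' => hc'.elim (fun hc'' => hc''.elim n15 n25) n35) n45⟩
  -- the basic clopen sets U (for f) and Wg (for g)
  set U : Set C := W1 ∩ f ⁻¹' V2 with hUdef
  have hUc : IsClopen U := hW1.inter (hV2c.preimage f.continuous)
  have hx₀U : x₀ ∈ U := ⟨m1, mV2⟩
  have hUsub1 : ∀ {c : C}, c ∈ U → c ∈ W1 := fun hc => hc.1
  have hUV2 : ∀ {c : C}, c ∈ U → f c ∈ V2 := fun hc => hc.2
  set Wg : Set C := V3 ∩ g.symm ⁻¹' V4 with hWgdef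
  have hWgc : IsClopen Wg := hV3c.inter (hV4c.preimage g.symm.continuous)
  have hy₀Wg : y₀ ∈ Wg := ⟨mV3, mV4⟩
  have hUne : U ≠ Set.univ := (Set.ne_univ_iff_exists_notMem U).mpr
    ⟨y₀, fun hc => mV3.2 (Or.inl (hUsub1 hc))⟩
  have hWgne : Wg ≠ Set.univ := (Set.ne_univ_iff_exists_notMem Wg).mpr
    ⟨x₀, fun hc => hc.1.2 (Or.inl m1)⟩
  -- move U into Wg
  obtain ⟨a, haΓ, haim⟩ := hprox U Wg hUc hWgc ⟨x₀, hx₀U⟩ ⟨y₀, hy₀Wg⟩ hUne hWgne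
  have haU : ∀ {c : C}, c ∈ U → a c ∈ Wg := fun hc => haim.subset ⟨_, hc, rfl⟩
  set b : C ≃ₜ C := g⁻¹ * a * f⁻¹ with hbdef
  have hbΓ : b ∈ Γ := mul_mem (mul_mem (inv_mem hgΓ) haΓ) (inv_mem hfΓ)
  have hbfx : ∀ x : C, b (f x) = g.symm (a x) := by
    intro x
    rw [hbdef, hg_mul_apply, hg_mul_apply, hg_inv_apply, hg_inv_apply,
      Homeomorph.symm_apply_apply]
  have hAsub : ∀ {c : C}, c ∈ a '' U → c ∈ V3 := by
    rintro _ ⟨x, hx, rfl⟩; exact (haU hx).1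
  have hA4 : ∀ {c : C}, c ∈ a '' U → g.symm c ∈ V4 := by
    rintro _ ⟨x, hx, rfl⟩; exact (haU hx).2
  have hfUV2 : ∀ {c : C}, c ∈ f '' U → c ∈ V2 := by
    rintro _ ⟨x, hx, rfl⟩; exact hUV2 hx
  have hBsub : ∀ {c : C}, c ∈ b '' (f '' U) → c ∈ V4 := by
    rintro _ ⟨_, ⟨x, hx, rfl⟩, rfl⟩
    rw [hbfx]; exact hA4 ⟨x, hx, rfl⟩
  -- the support set S
  set S : Set C := U ∪ f '' U ∪ a '' U ∪ b '' (f '' U) with hSdef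
  have hSc : IsClopen S := ((hUc.union (clopen_image f hUc)).union
    (clopen_image a hUc)).union (clopen_image b (clopen_image f hUc))
  have hSsplit : ∀ {c : C}, c ∉ S →
      c ∉ U ∧ c ∉ f '' U ∧ c ∉ a '' U ∧ c ∉ b '' (f '' U) := by
    intro c hc
    exact ⟨fun h => hc (Or.inl (Or.inl (Or.inl h))),
      fun h => hc (Or.inl (Or.inl (Or.inr h))),
      fun h => hc (Or.inl (Or.inr h)), fun h => hc (Or.inr h)⟩
  have hSW : ∀ {c : C}, c ∈ S → c ∈ W1 ∪ W2 ∪ W3 ∪ W4 := by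
    rintro c (((h | h) | h) | h)
    · exact Or.inl (Or.inl (Or.inl (hUsub1 h)))
    · exact Or.inl (Or.inl (Or.inr (hfUV2 h).1))
    · exact Or.inl (Or.inr (hAsub h).1)
    · exact Or.inr (hBsub h).1
  have hSne : S ≠ Set.univ := (Set.ne_univ_iff_exists_notMem S).mpr
    ⟨z, fun hc => mV5.2 (hSW hc)⟩
  have hV5ne : V5 ≠ Set.univ := (Set.ne_univ_iff_exists_notMem V5).mpr
    ⟨x₀, fun hc => hc.2 (Or.inl (Or.inl (Or.inl m1)))⟩
  obtain ⟨t, htΓ, htim⟩ := hprox S V5 hSc hV5c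
    ⟨x₀, Or.inl (Or.inl (Or.inl hx₀U))⟩ ⟨z, mV5⟩ hSne hV5ne
  have htS : ∀ {c : C}, c ∈ S → t c ∈ V5 := fun hc => htim.subset ⟨_, hc, rfl⟩
  -- points of V3 ∪ V4 are pulled outside S by t⁻¹
  have hnS3 : ∀ {c : C}, c ∈ V3 → t.symm c ∉ S := by
    intro c hc hcS
    have h5 : t (t.symm c) ∈ V5 := htS hcS
    rw [t.apply_symm_apply] at h5
    exact h5.2 (Or.inl (Or.inr hc.1))
  have hnS4 : ∀ {c : C}, c ∈ V4 → t.symm c ∉ S := by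
    intro c hc hcS
    have h5 : t (t.symm c) ∈ V5 := htS hcS
    rw [t.apply_symm_apply] at h5
    exact h5.2 (Or.inr hc.1)
  -- the two swaps
  have hdis1 : Disjoint U (a '' U) := Set.disjoint_left.mpr
    fun c hc hc' => (hAsub hc').2 (Or.inl (hUsub1 hc))
  have hdis2 : Disjoint (f '' U) (b '' (f '' U)) := Set.disjoint_left.mpr
    fun c hc hc' => (hBsub hc').2 (Or.inl (Or.inr (hfUV2 hc).1))
  have hfUc : IsClopen (f '' U) := clopen_image f hUc
  set s₁ : C ≃ₜ C := swapHomeo a U hUc hdis1 with hs₁def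
  set s₂ : C ≃ₜ C := swapHomeo b (f '' U) hfUc hdis2 with hs₂def
  have hs₁Γ : s₁ ∈ Γ := swapHomeo_mem hfull haΓ U hUc hdis1
  have hs₂Γ : s₂ ∈ Γ := swapHomeo_mem hfull hbΓ (f '' U) hfUc hdis2
  set s : C ≃ₜ C := s₁ * s₂ with hsdef
  have hsΓ : s ∈ Γ := mul_mem hs₁Γ hs₂Γ
  refine ⟨⁅s, t⁆, Subgroup.commutator_mem_commutator hsΓ htΓ, U, hUc, ⟨x₀, hx₀U⟩, ?_⟩
  intro x hxU
  -- membership facts for this x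
  have hfx2 : f x ∈ V2 := hUV2 hxU
  have hfxfU : f x ∈ f '' U := ⟨x, hxU, rfl⟩
  have haxA : a x ∈ a '' U := ⟨x, hxU, rfl⟩
  have hax3 : a x ∈ V3 := hAsub haxA
  have hqB : b (f x) ∈ b '' (f '' U) := ⟨f x, hfxfU, rfl⟩
  have hq4 : b (f x) ∈ V4 := hBsub hqB
  -- fixed point helpers
  have fix₁ : ∀ {c : C}, c ∉ U → c ∉ a '' U → swapFun a U c = c :=
    fun h1 h2 => swapFun_of_not_mem h1 h2
  have fix₂ : ∀ {c : C}, c ∉ f '' U → c ∉ b '' (f '' U) → swapFun b (f '' U) c = c :=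
    fun h1 h2 => swapFun_of_not_mem h1 h2
  -- rewrite the goal into nested applications
  have hinv : (⁅s, t⁆)⁻¹ = t * s * t⁻¹ * s⁻¹ := by
    rw [commutatorElement_inv, commutatorElement_def]
  rw [hinv, commutatorElement_def]
  simp only [hsdef, mul_inv_rev, hg_mul_apply, hg_inv_apply]
  rw [hs₁def, hs₂def]
  simp only [swapHomeo_apply, swapHomeo_symm_apply]
  -- innermost: s⁻¹ (f x)
  rw [fix₁ (fun h => hfx2.2 (hUsub1 h)) (fun h => (hAsub h).2 (Or.inr hfx2.1))]
  rw [swapFun_of_mem hfxfU]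
  -- t⁻¹ then s fixes, then t brings back
  have hr4 := hSsplit (hnS4 hq4)
  rw [fix₂ hr4.2.1 hr4.2.2.2, fix₁ hr4.1 hr4.2.2.1, t.apply_symm_apply]
  -- g (b (f x)) = a x
  rw [hbfx, g.apply_symm_apply]
  -- outer part
  have hr7 := hSsplit (hnS3 hax3)
  rw [fix₁ hr7.1 hr7.2.2.1, fix₂ hr7.2.1 hr7.2.2.2, t.apply_symm_apply]
  rw [fix₂ (fun h => hax3.2 (Or.inr (hfUV2 h).1)) (fun h => (hBsub h).2 (Or.inr hax3.1))]
  rw [swapFun_of_mem_image hdis1 haxA, a.symm_apply_apply]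
end

section
/- Let Γ be a topological full group acting faithfully and extremely proximally on a Cantor set C, and let V ⊊ C be a proper clopen set. Then there exists a proper clopen set U with V ⊊ U ⊊ C such that every element of Γ' supported on V lies in the commutator subgroup of Γ_U, where Γ_U is the subgroup of elements supported on U. -/
variable {C : Type*}

/-- The subgroup of elements of `Γ` supported on a set `U`. -/
def suppSubgroup [TopologicalSpace C] (Γ : Subgroup (C ≃ₜ C)) (U : Set C) :
    Subgroup (C ≃ₜ C) where
  carrier := {g | g ∈ Γ ∧ ∀ x ∉ U, g x = x}
  one_mem' := ⟨Γ.one_mem, fun _ _ => rfl⟩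
  mul_mem' := by
    rintro a b ⟨ha, ha'⟩ ⟨hb, hb'⟩
    exact ⟨Γ.mul_mem ha hb, fun x hx => by
      show a (b x) = x
      rw [hb' x hx, ha' x hx]⟩
  inv_mem' := by
    rintro a ⟨ha, ha'⟩
    refine ⟨Γ.inv_mem ha, fun x hx => ?_⟩
    conv_lhs => rw [← ha' x hx]
    exact a.symm_apply_apply x

lemma mem_suppSubgroup_iff [TopologicalSpace C] {Γ : Subgroup (C ≃ₜ C)} {U : Set C}
    {g : C ≃ₜ C} : g ∈ suppSubgroup Γ U ↔ g ∈ Γ ∧ ∀ x ∉ U, g x = x := Iff.rfl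

/-- Piecewise-continuity helper: an `if` over a clopen set with continuous branches
is continuous. -/
lemma continuous_ite_clopen [TopologicalSpace C] (S : Set C) [∀ x : C, Decidable (x ∈ S)]
    (hS : IsClopen S) {f g : C → C} (hf : Continuous f) (hg : Continuous g) :
    Continuous fun x => if x ∈ S then f x else g x := by
  rw [continuous_iff_continuousAt]
  intro x
  by_cases hx : x ∈ S
  · have h : (fun y => if y ∈ S then f y else g y) =ᶠ[nhds x] f := by
      filter_upwards [hS.isOpen.mem_nhds hx] with y hy
      simp [hy]
    exact hf.continuousAt.congr h.symm
  · have h : (fun y => if y ∈ S then f y else g y) =ᶠ[nhds x] g := by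
      filter_upwards [hS.compl.isOpen.mem_nhds hx] with y hy
      rw [if_neg ((Set.mem_compl_iff _ _).mp hy)]
    exact hg.continuousAt.congr h.symm

/-- Any nonempty open subset of Cantor space contains three pairwise disjoint
nonempty clopen subsets. -/
lemma cantor_three {T : Set (ℕ → Bool)} (hT : IsOpen T) (hne : T.Nonempty) :
    ∃ K₁ K₂ K₃ : Set (ℕ → Bool),
      (IsClopen K₁ ∧ K₁.Nonempty ∧ K₁ ⊆ T) ∧ (IsClopen K₂ ∧ K₂.Nonempty ∧ K₂ ⊆ T) ∧
      (IsClopen K₃ ∧ K₃.Nonempty ∧ K₃ ⊆ T) ∧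
      Disjoint K₁ K₂ ∧ Disjoint K₁ K₃ ∧ Disjoint K₂ K₃ := by
  classical
  obtain ⟨x, hx⟩ := hne
  obtain ⟨I, u, h1, hsub⟩ := isOpen_pi_iff.mp hT x hx
  set K : Set (ℕ → Bool) := ⋂ i ∈ I, (fun y : ℕ → Bool => y i) ⁻¹' {x i} with hK
  have hmemK : ∀ y : ℕ → Bool, y ∈ K ↔ ∀ i ∈ I, y i = x i := by
    intro y
    simp [hK]
  have hKclopen : IsClopen K := by
    rw [hK]
    exact isClopen_biInter_finset fun i _ =>
      (isClopen_discrete {x i}).preimage (continuous_apply i)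
  have hKT : K ⊆ T := by
    intro y hy
    apply hsub
    rw [Set.mem_pi]
    intro i hi
    rw [(hmemK y).mp hy i hi]
    exact (h1 i hi).2
  set n := Finset.sup I id + 1 with hn
  set m := Finset.sup I id + 2 with hm
  have hnI : ∀ i ∈ I, i ≠ n ∧ i ≠ m := by
    intro i hi
    have : i ≤ Finset.sup I id := Finset.le_sup (f := id) hi
    omega
  have hmn : m ≠ n := by omega
  have key : ∀ b c : Bool, ∃ y : ℕ → Bool, y ∈ K ∧ y n = b ∧ y m = c := by
    intro b c
    refine ⟨fun i => if i = n then b else if i = m then c else x i, ?_, ?_, ?_⟩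
    · rw [hmemK]
      intro i hi
      obtain ⟨h2, h3⟩ := hnI i hi
      simp [h2, h3]
    · simp
    · simp [hmn]
  have hbit : ∀ (k : ℕ) (b : Bool), IsClopen ((fun y : ℕ → Bool => y k) ⁻¹' {b}) :=
    fun k b => (isClopen_discrete {b}).preimage (continuous_apply k)
  have piece : ∀ b c : Bool,
      IsClopen (K ∩ ((fun y : ℕ → Bool => y n) ⁻¹' {b} ∩ (fun y : ℕ → Bool => y m) ⁻¹' {c})) ∧
      (K ∩ ((fun y : ℕ → Bool => y n) ⁻¹' {b} ∩ (fun y : ℕ → Bool => y m) ⁻¹' {c})).Nonempty ∧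
      K ∩ ((fun y : ℕ → Bool => y n) ⁻¹' {b} ∩ (fun y : ℕ → Bool => y m) ⁻¹' {c}) ⊆ T := by
    intro b c
    refine ⟨hKclopen.inter ((hbit n b).inter (hbit m c)), ?_, Set.inter_subset_left.trans hKT⟩
    obtain ⟨y, hy1, hy2, hy3⟩ := key b c
    exact ⟨y, hy1, hy2, hy3⟩
  refine ⟨K ∩ ((fun y : ℕ → Bool => y n) ⁻¹' {true} ∩ (fun y : ℕ → Bool => y m) ⁻¹' {true}),
          K ∩ ((fun y : ℕ → Bool => y n) ⁻¹' {true} ∩ (fun y : ℕ → Bool => y m) ⁻¹' {false}),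
          K ∩ ((fun y : ℕ → Bool => y n) ⁻¹' {false} ∩ (fun y : ℕ → Bool => y m) ⁻¹' {true}),
          piece true true, piece true false, piece false true, ?_, ?_, ?_⟩
  · rw [Set.disjoint_left]
    rintro y ⟨-, -, hy1⟩ ⟨-, -, hy2⟩
    have e1 : y m = true := hy1
    have e2 : y m = false := hy2
    rw [e1] at e2; exact Bool.noConfusion e2
  · rw [Set.disjoint_left]
    rintro y ⟨-, hy1, -⟩ ⟨-, hy2, -⟩
    have e1 : y n = true := hy1
    have e2 : y n = false := hy2
    rw [e1] at e2; exact Bool.noConfusion e2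
  · rw [Set.disjoint_left]
    rintro y ⟨-, hy1, -⟩ ⟨-, hy2, -⟩
    have e1 : y n = true := hy1
    have e2 : y n = false := hy2
    rw [e1] at e2; exact Bool.noConfusion e2

/-- Any nonempty open subset of a Cantor set contains three pairwise disjoint
nonempty clopen subsets. -/
lemma exists_three_disjoint_clopens [TopologicalSpace C] (φ : C ≃ₜ (ℕ → Bool))
    {S : Set C} (hS : IsOpen S) (hne : S.Nonempty) :
    ∃ Q₁ Q₂ Q₃ : Set C,
      (IsClopen Q₁ ∧ Q₁.Nonempty ∧ Q₁ ⊆ S) ∧ (IsClopen Q₂ ∧ Q₂.Nonempty ∧ Q₂ ⊆ S) ∧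
      (IsClopen Q₃ ∧ Q₃.Nonempty ∧ Q₃ ⊆ S) ∧
      Disjoint Q₁ Q₂ ∧ Disjoint Q₁ Q₃ ∧ Disjoint Q₂ Q₃ := by
  have hT : IsOpen (⇑φ.symm ⁻¹' S) := hS.preimage φ.symm.continuous
  have hTne : (⇑φ.symm ⁻¹' S).Nonempty := by
    obtain ⟨z, hz⟩ := hne
    exact ⟨φ z, by simp [hz]⟩
  obtain ⟨K₁, K₂, K₃, h₁, h₂, h₃, h12, h13, h23⟩ := cantor_three hT hTne
  have pull : ∀ K : Set (ℕ → Bool), IsClopen K ∧ K.Nonempty ∧ K ⊆ ⇑φ.symm ⁻¹' S →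
      IsClopen (⇑φ ⁻¹' K) ∧ (⇑φ ⁻¹' K).Nonempty ∧ ⇑φ ⁻¹' K ⊆ S := by
    rintro K ⟨hK, hKn, hKT⟩
    refine ⟨hK.preimage φ.continuous, ?_, ?_⟩
    · obtain ⟨y, hy⟩ := hKn
      exact ⟨φ.symm y, by simp [hy]⟩
    · intro w hw
      have := hKT hw
      simpa using this
  exact ⟨⇑φ ⁻¹' K₁, ⇑φ ⁻¹' K₂, ⇑φ ⁻¹' K₃, pull K₁ h₁, pull K₂ h₂, pull K₃ h₃,
    h12.preimage _, h13.preimage _, h23.preimage _⟩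

/-- If `Γ` is a topological full group acting extremely proximally on a Cantor
set `C` and `V ⊊ C` is a proper clopen set, then there is a proper clopen set
`U` with `V ⊊ U ⊊ C` such that every element of `Γ' = ⁅Γ,Γ⁆` supported on `V`
lies in the commutator subgroup of `Γ_U`. -/
theorem commutator_supported_in_commutator_of_suppSubgroup [TopologicalSpace C]
    (hC : Nonempty (C ≃ₜ (ℕ → Bool))) (Γ : Subgroup (C ≃ₜ C))
    (hfull : IsTopologicalFullGroup Γ) (hprox : ExtremelyProximal (Γ : Set (C ≃ₜ C)))
    (V : Set C) (hV : IsClopen V) (hVproper : V ≠ Set.univ) :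
    ∃ U : Set C, IsClopen U ∧ V ⊂ U ∧ U ≠ Set.univ ∧
      ∀ g ∈ (⁅Γ, Γ⁆ : Subgroup (C ≃ₜ C)), (∀ x ∉ V, g x = x) →
        g ∈ ⁅suppSubgroup Γ U, suppSubgroup Γ U⁆ := by
  classical
  obtain ⟨φ⟩ := hC
  -- three disjoint clopen subsets of `Vᶜ`
  have hVcne : Vᶜ.Nonempty := by
    obtain ⟨x, hx⟩ := Set.ne_univ_iff_exists_notMem V |>.mp hVproper
    exact ⟨x, hx⟩
  obtain ⟨Q₁, Q₂, Q₃, ⟨hc1, hn1, hs1⟩, ⟨hc2, hn2, hs2⟩, ⟨hc3, hn3, hs3⟩, hd12, hd13, hd23⟩ :=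
    exists_three_disjoint_clopens φ hV.compl.isOpen hVcne
  have hQ1nV : ∀ z ∈ Q₁, z ∉ V := fun z hz => (Set.mem_compl_iff _ _).mp (hs1 hz)
  have hQ2nV : ∀ z ∈ Q₂, z ∉ V := fun z hz => (Set.mem_compl_iff _ _).mp (hs2 hz)
  have hQ3nV : ∀ z ∈ Q₃, z ∉ V := fun z hz => (Set.mem_compl_iff _ _).mp (hs3 hz)
  have hVQ1c : V ⊆ Q₁ᶜ := fun z hz => Set.mem_compl (fun hq => hQ1nV z hq hz)
  -- properness facts
  have hQ1u : Q₁ ≠ Set.univ := by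
    intro h
    obtain ⟨y, hy⟩ := hn2
    exact Set.disjoint_left.mp hd12 (h ▸ Set.mem_univ y) hy
  have hQ2u : Q₂ ≠ Set.univ := by
    intro h
    obtain ⟨y, hy⟩ := hn1
    exact Set.disjoint_left.mp hd12 hy (h ▸ Set.mem_univ y)
  have hQ1cne : Q₁ᶜ.Nonempty := by
    obtain ⟨y, hy⟩ := hn2
    exact ⟨y, Set.mem_compl (Set.disjoint_right.mp hd12 hy)⟩
  have hQ1cu : Q₁ᶜ ≠ Set.univ := by
    intro h
    obtain ⟨y, hy⟩ := hn1
    exact (h ▸ Set.mem_univ y : y ∈ Q₁ᶜ) hy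
  -- extremely proximal elements
  obtain ⟨t₁, ht₁Γ, ht₁⟩ := hprox Q₁ Q₁ hc1 hc1 hn1 hn1 hQ1u hQ1u
  obtain ⟨t₂, ht₂Γ, ht₂⟩ := hprox Q₁ᶜ Q₂ hc1.compl hc2 hQ1cne hn2 hQ1cu hQ2u
  have ht₁' : t₁ ∈ Γ := ht₁Γ
  have ht₂' : t₂ ∈ Γ := ht₂Γ
  have hT1 : ⇑t₁ '' Q₁ ⊆ Q₁ := ht₁.subset
  have hT2 : ⇑t₂ '' Q₁ᶜ ⊆ Q₂ := ht₂.subset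
  have himgClopen : ∀ (t : C ≃ₜ C) (S : Set C), IsClopen S → IsClopen (⇑t '' S) :=
    fun t S hS => ⟨t.isClosed_image.2 hS.isClosed, t.isOpen_image.2 hS.isOpen⟩
  set A₁ : Set C := ⇑t₁ '' Q₁ with hA₁
  set A₂ : Set C := ⇑t₂ '' Q₁ᶜ with hA₂
  have hcA₁ : IsClopen A₁ := himgClopen t₁ Q₁ hc1
  have hcA₂ : IsClopen A₂ := himgClopen t₂ Q₁ᶜ hc1.compl
  have hA₁Q₁ : A₁ ⊆ Q₁ := hT1
  have hA₂Q₂ : A₂ ⊆ Q₂ := hT2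
  set TV : Set C := ⇑t₂ '' V with hTVdef
  have hcTV : IsClopen TV := himgClopen t₂ V hV
  have hTVQ2 : TV ⊆ Q₂ := (Set.image_mono hVQ1c).trans hT2
  set U : Set C := V ∪ Q₁ ∪ Q₂ with hUdef
  have hVU : V ⊆ U := fun z hz => Set.mem_union_left _ (Set.mem_union_left _ hz)
  have hQ1U : Q₁ ⊆ U := fun z hz => Set.mem_union_left _ (Set.mem_union_right _ hz)
  have hQ2U : Q₂ ⊆ U := fun z hz => Set.mem_union_right _ hz
  have hWU : A₁ ∪ A₂ ⊆ U := by
    intro z hz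
    rw [Set.mem_union] at hz
    rcases hz with h | h
    · exact hQ1U (hA₁Q₁ h)
    · exact hQ2U (hA₂Q₂ h)
  have hVW : ∀ z ∈ V, z ∉ A₁ ∪ A₂ := by
    intro z hz h
    rw [Set.mem_union] at h
    rcases h with h | h
    · exact hQ1nV z (hA₁Q₁ h) hz
    · exact hQ2nV z (hA₂Q₂ h) hz
  -- the embedding functions
  set jfun : C → C := fun x => if x ∈ Q₁ then t₁ x else t₂ x with hjfun
  set jinv : C → C := fun x => if x ∈ A₁ then t₁.symm x else if x ∈ A₂ then t₂.symm x else x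
    with hjinv
  have hjfQ : ∀ z ∈ Q₁, jfun z = t₁ z := by
    intro z hz; simp only [hjfun]; rw [if_pos hz]
  have hjfQn : ∀ z, z ∉ Q₁ → jfun z = t₂ z := by
    intro z hz; simp only [hjfun]; rw [if_neg hz]
  have hjiA₁ : ∀ z ∈ A₁, jinv z = t₁.symm z := by
    intro z hz; simp only [hjinv]; rw [if_pos hz]
  have hjiA₂ : ∀ z, z ∉ A₁ → z ∈ A₂ → jinv z = t₂.symm z := by
    intro z hz1 hz2; simp only [hjinv]; rw [if_neg hz1, if_pos hz2]
  have hjfW : ∀ z, jfun z ∈ A₁ ∪ A₂ := by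
    intro z
    by_cases hz : z ∈ Q₁
    · rw [hjfQ z hz]; exact Set.mem_union_left _ (Set.mem_image_of_mem _ hz)
    · rw [hjfQn z hz]; exact Set.mem_union_right _ (Set.mem_image_of_mem _ hz)
  have hA₂nA₁ : ∀ z ∈ A₂, z ∉ A₁ :=
    fun z hz h => Set.disjoint_left.mp hd12 (hA₁Q₁ h) (hA₂Q₂ hz)
  have hjijf : ∀ z, jinv (jfun z) = z := by
    intro z
    by_cases hz : z ∈ Q₁
    · rw [hjfQ z hz, hjiA₁ _ (Set.mem_image_of_mem _ hz), Homeomorph.symm_apply_apply]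
    · rw [hjfQn z hz]
      have h2 : t₂ z ∈ A₂ := Set.mem_image_of_mem _ hz
      rw [hjiA₂ _ (hA₂nA₁ _ h2) h2, Homeomorph.symm_apply_apply]
  have hjfji : ∀ z ∈ A₁ ∪ A₂, jfun (jinv z) = z := by
    intro z hz
    by_cases h1 : z ∈ A₁
    · obtain ⟨q, hq, rfl⟩ := h1
      rw [hjiA₁ _ (Set.mem_image_of_mem _ hq), Homeomorph.symm_apply_apply, hjfQ q hq]
    · have h2 : z ∈ A₂ := by
        rw [Set.mem_union] at hz; exact hz.resolve_left h1
      obtain ⟨q, hq, rfl⟩ := h2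
      rw [hjiA₂ _ h1 (Set.mem_image_of_mem _ hq), Homeomorph.symm_apply_apply, hjfQn q hq]
  have hcontjf : Continuous jfun := by
    rw [hjfun]
    exact continuous_ite_clopen Q₁ hc1 t₁.continuous t₂.continuous
  have hcontji : Continuous jinv := by
    rw [hjinv]
    exact continuous_ite_clopen A₁ hcA₁ t₁.symm.continuous
      (continuous_ite_clopen A₂ hcA₂ t₂.symm.continuous continuous_id')
  -- the "copying" endomorphism Ψ
  set psiF : (C ≃ₜ C) → C → C :=
    fun a x => if x ∈ A₁ ∪ A₂ then jfun (a (jinv x)) else x with hpsiF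
  have hpsiIn : ∀ (a : C ≃ₜ C), ∀ z ∈ A₁ ∪ A₂, psiF a z = jfun (a (jinv z)) := by
    intro a z hz; simp only [hpsiF]; rw [if_pos hz]
  have hpsiOut : ∀ (a : C ≃ₜ C), ∀ z, z ∉ A₁ ∪ A₂ → psiF a z = z := by
    intro a z hz; simp only [hpsiF]; rw [if_neg hz]
  have hcontpsi : ∀ a : C ≃ₜ C, Continuous (psiF a) := by
    intro a
    simp only [hpsiF]
    exact continuous_ite_clopen (A₁ ∪ A₂) (hcA₁.union hcA₂)
      (hcontjf.comp (a.continuous.comp hcontji)) continuous_id'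
  have hlinv : ∀ (a : C ≃ₜ C) (z : C), psiF a.symm (psiF a z) = z := by
    intro a z
    by_cases hz : z ∈ A₁ ∪ A₂
    · rw [hpsiIn a z hz, hpsiIn a.symm _ (hjfW _), hjijf, Homeomorph.symm_apply_apply,
        hjfji z hz]
    · rw [hpsiOut a z hz, hpsiOut a.symm z hz]
  have hrinv : ∀ (a : C ≃ₜ C) (z : C), psiF a (psiF a.symm z) = z := by
    intro a z
    have h := hlinv a.symm z
    rwa [Homeomorph.symm_symm] at h
  let psi : (C ≃ₜ C) → C ≃ₜ C := fun a =>
    ⟨⟨psiF a, psiF a.symm, hlinv a, hrinv a⟩, hcontpsi a, hcontpsi a.symm⟩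
  have hpsiApp : ∀ (a : C ≃ₜ C) (z : C), psi a z = psiF a z := fun _ _ => rfl
  have hpsi_mul : ∀ a b : C ≃ₜ C, psi (a * b) = psi a * psi b := by
    intro a b
    apply Homeomorph.ext
    intro z
    show psiF (a * b) z = psiF a (psiF b z)
    by_cases hz : z ∈ A₁ ∪ A₂
    · rw [hpsiIn (a * b) z hz, hpsiIn b z hz, hpsiIn a (jfun (b (jinv z))) (hjfW _), hjijf]
      rfl
    · rw [hpsiOut (a * b) z hz, hpsiOut b z hz, hpsiOut a z hz]
  let psiHom : (C ≃ₜ C) →* (C ≃ₜ C) := MonoidHom.mk' psi hpsi_mul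
  -- Ψ maps Γ into Γ (by fullness)
  have hpsiΓ : ∀ a, a ∈ Γ → psi a ∈ Γ := by
    intro a ha
    apply hfull
    intro x
    by_cases hxW : x ∈ A₁ ∪ A₂
    · by_cases hxA₁ : x ∈ A₁
      · by_cases hq : a (t₁.symm x) ∈ Q₁
        · refine ⟨A₁ ∩ ((fun y => a (t₁.symm y)) ⁻¹' Q₁),
            (hcA₁.inter (hc1.preimage (a.continuous.comp t₁.symm.continuous))).isOpen,
            ⟨hxA₁, hq⟩, t₁ * a * t₁⁻¹, mul_mem (mul_mem ht₁' ha) (inv_mem ht₁'), ?_⟩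
          rintro y ⟨hy1, hy2⟩
          show psiF a y = (t₁ * a * t₁⁻¹) y
          rw [hpsiIn a y (Set.mem_union_left _ hy1), hjiA₁ y hy1, hjfQ _ hy2]
          rfl
        · refine ⟨A₁ ∩ ((fun y => a (t₁.symm y)) ⁻¹' Q₁ᶜ),
            (hcA₁.inter (hc1.compl.preimage (a.continuous.comp t₁.symm.continuous))).isOpen,
            ⟨hxA₁, hq⟩, t₂ * a * t₁⁻¹, mul_mem (mul_mem ht₂' ha) (inv_mem ht₁'), ?_⟩
          rintro y ⟨hy1, hy2⟩
          show psiF a y = (t₂ * a * t₁⁻¹) y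
          rw [hpsiIn a y (Set.mem_union_left _ hy1), hjiA₁ y hy1, hjfQn _ hy2]
          rfl
      · have hxA₂ : x ∈ A₂ := by
          rw [Set.mem_union] at hxW; exact hxW.resolve_left hxA₁
        by_cases hq : a (t₂.symm x) ∈ Q₁
        · refine ⟨(A₁ᶜ ∩ A₂) ∩ ((fun y => a (t₂.symm y)) ⁻¹' Q₁),
            ((hcA₁.compl.inter hcA₂).inter
              (hc1.preimage (a.continuous.comp t₂.symm.continuous))).isOpen,
            ⟨⟨hxA₁, hxA₂⟩, hq⟩, t₁ * a * t₂⁻¹, mul_mem (mul_mem ht₁' ha) (inv_mem ht₂'), ?_⟩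
          rintro y ⟨⟨hy0, hy1⟩, hy2⟩
          show psiF a y = (t₁ * a * t₂⁻¹) y
          rw [hpsiIn a y (Set.mem_union_right _ hy1), hjiA₂ y hy0 hy1, hjfQ _ hy2]
          rfl
        · refine ⟨(A₁ᶜ ∩ A₂) ∩ ((fun y => a (t₂.symm y)) ⁻¹' Q₁ᶜ),
            ((hcA₁.compl.inter hcA₂).inter
              (hc1.compl.preimage (a.continuous.comp t₂.symm.continuous))).isOpen,
            ⟨⟨hxA₁, hxA₂⟩, hq⟩, t₂ * a * t₂⁻¹, mul_mem (mul_mem ht₂' ha) (inv_mem ht₂'), ?_⟩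
          rintro y ⟨⟨hy0, hy1⟩, hy2⟩
          show psiF a y = (t₂ * a * t₂⁻¹) y
          rw [hpsiIn a y (Set.mem_union_right _ hy1), hjiA₂ y hy0 hy1, hjfQn _ hy2]
          rfl
    · refine ⟨(A₁ ∪ A₂)ᶜ, (hcA₁.union hcA₂).compl.isOpen, hxW, 1, one_mem Γ, ?_⟩
      intro y hy
      show psiF a y = y
      exact hpsiOut a y hy
  have hpsiSupp : ∀ (a : C ≃ₜ C), ∀ x ∉ U, psi a x = x := by
    intro a x hx
    have hxW : x ∉ A₁ ∪ A₂ := fun h => hx (hWU h)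
    exact hpsiOut a x hxW
  -- the swap between V and t₂ '' V
  set swF : C → C := fun x => if x ∈ V then t₂ x else if x ∈ TV then t₂.symm x else x with hswF
  have hswV : ∀ z ∈ V, swF z = t₂ z := by
    intro z hz; simp only [hswF]; rw [if_pos hz]
  have hswTV : ∀ z ∈ TV, swF z = t₂.symm z := by
    intro z hz
    have hznV : z ∉ V := hQ2nV z (hTVQ2 hz)
    simp only [hswF]; rw [if_neg hznV, if_pos hz]
  have hswOut : ∀ z, z ∉ V → z ∉ TV → swF z = z := by
    intro z h1 h2; simp only [hswF]; rw [if_neg h1, if_neg h2]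
  have hswInv : ∀ z, swF (swF z) = z := by
    intro z
    by_cases hz : z ∈ V
    · rw [hswV z hz, hswTV _ (Set.mem_image_of_mem _ hz), Homeomorph.symm_apply_apply]
    · by_cases hz2 : z ∈ TV
      · obtain ⟨v, hv, rfl⟩ := hz2
        rw [hswTV _ (Set.mem_image_of_mem _ hv), Homeomorph.symm_apply_apply, hswV v hv]
      · rw [hswOut z hz hz2, hswOut z hz hz2]
  have hcontsw : Continuous swF := by
    rw [hswF]
    exact continuous_ite_clopen V hV t₂.continuous
      (continuous_ite_clopen TV hcTV t₂.symm.continuous continuous_id')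
  let sw : C ≃ₜ C := ⟨⟨swF, swF, hswInv, hswInv⟩, hcontsw, hcontsw⟩
  have hswΓ : sw ∈ Γ := by
    apply hfull
    intro x
    by_cases hx : x ∈ V
    · exact ⟨V, hV.isOpen, hx, t₂, ht₂', fun y hy => hswV y hy⟩
    · by_cases hx2 : x ∈ TV
      · refine ⟨TV, hcTV.isOpen, hx2, t₂⁻¹, inv_mem ht₂', fun y hy => ?_⟩
        show swF y = t₂.symm y
        exact hswTV y hy
      · refine ⟨(V ∪ TV)ᶜ, (hV.union hcTV).compl.isOpen, ?_, 1, one_mem Γ, ?_⟩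
        · exact Set.mem_compl (fun h => by
            rw [Set.mem_union] at h
            rcases h with h | h
            · exact hx h
            · exact hx2 h)
        · intro y hy
          have hy' : y ∉ V ∪ TV := hy
          rw [Set.mem_union] at hy'
          push_neg at hy'
          show swF y = y
          exact hswOut y hy'.1 hy'.2
  have hswH : sw ∈ suppSubgroup Γ U := by
    refine mem_suppSubgroup_iff.mpr ⟨hswΓ, fun x hx => ?_⟩
    show swF x = x
    exact hswOut x (fun h => hx (hVU h)) (fun h => hx (hQ2U (hTVQ2 h)))
  -- put the answer together
  refine ⟨U, (hV.union hc1).union hc2, ?_, ?_, ?_⟩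
  · rw [Set.ssubset_iff_of_subset hVU]
    obtain ⟨q, hq⟩ := hn1
    exact ⟨q, hQ1U hq, hQ1nV q hq⟩
  · intro h
    obtain ⟨q, hq⟩ := hn3
    have hqU : q ∈ U := h ▸ Set.mem_univ q
    rw [hUdef, Set.mem_union, Set.mem_union] at hqU
    rcases hqU with (h1 | h1) | h1
    · exact hQ3nV q hq h1
    · exact Set.disjoint_left.mp hd13 h1 hq
    · exact Set.disjoint_left.mp hd23 h1 hq
  · intro g hgΓ' hsupp
    -- g maps V to V
    have hgV : ∀ x ∈ V, g x ∈ V := by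
      intro x hx
      by_contra hgx
      have h2 : g (g x) = g x := hsupp (g x) hgx
      have h3 : g x = x := g.injective h2
      exact hgx (by rw [h3]; exact hx)
    -- the conjugation identity
    have hkey : ∀ x, swF (g (swF x)) = psiF g x := by
      intro x
      by_cases hxV : x ∈ V
      · rw [hswV x hxV, hpsiOut g x (hVW x hxV)]
        have h1 : t₂ x ∈ TV := Set.mem_image_of_mem _ hxV
        have h2 : t₂ x ∉ V := hQ2nV _ (hTVQ2 h1)
        rw [hsupp _ h2, hswTV _ h1, Homeomorph.symm_apply_apply]
      · by_cases hxTV : x ∈ TV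
        · obtain ⟨v, hv, rfl⟩ := hxTV
          rw [hswTV _ (Set.mem_image_of_mem _ hv), Homeomorph.symm_apply_apply,
            hswV _ (hgV v hv)]
          have h2 : t₂ v ∈ A₂ := Set.mem_image_of_mem _ (hVQ1c hv)
          rw [hpsiIn g _ (Set.mem_union_right _ h2), hjiA₂ _ (hA₂nA₁ _ h2) h2,
            Homeomorph.symm_apply_apply, hjfQn _ (fun hq => hQ1nV _ hq (hgV v hv))]
        · rw [hswOut x hxV hxTV, hsupp x hxV, hswOut x hxV hxTV]
          by_cases hxW : x ∈ A₁ ∪ A₂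
          · rw [hpsiIn g x hxW]
            by_cases hxA₁ : x ∈ A₁
            · obtain ⟨q, hq, rfl⟩ := hxA₁
              rw [hjiA₁ _ (Set.mem_image_of_mem _ hq), Homeomorph.symm_apply_apply,
                hsupp q (hQ1nV q hq), hjfQ q hq]
            · have hxA₂ : x ∈ A₂ := by
                rw [Set.mem_union] at hxW; exact hxW.resolve_left hxA₁
              obtain ⟨q, hq, rfl⟩ := hxA₂
              have hqV : q ∉ V := fun h => hxTV (Set.mem_image_of_mem _ h)
              rw [hjiA₂ _ hxA₁ (Set.mem_image_of_mem _ hq), Homeomorph.symm_apply_apply,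
                hsupp q hqV, hjfQn q hq]
          · rw [hpsiOut g x hxW]
    -- Ψ g lies in the commutator subgroup of Γ_U
    have hpsig : psi g ∈ ⁅suppSubgroup Γ U, suppSubgroup Γ U⁆ := by
      have h1 : psiHom g ∈ Subgroup.map psiHom ⁅Γ, Γ⁆ := Subgroup.mem_map_of_mem _ hgΓ'
      rw [Subgroup.map_commutator] at h1
      have hle : Subgroup.map psiHom Γ ≤ suppSubgroup Γ U := by
        rintro y ⟨a, ha, rfl⟩
        exact mem_suppSubgroup_iff.mpr ⟨hpsiΓ a ha, hpsiSupp a⟩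
      exact Subgroup.commutator_mono hle hle h1
    have hDH : (⁅suppSubgroup Γ U, suppSubgroup Γ U⁆ : Subgroup (C ≃ₜ C)) ≤
        suppSubgroup Γ U := by
      refine Subgroup.commutator_le.mpr ?_
      intro g₁ h₁ g₂ h₂
      rw [commutatorElement_def]
      exact mul_mem (mul_mem (mul_mem h₁ h₂) (inv_mem h₁)) (inv_mem h₂)
    -- g is conjugate to Ψ g by sw
    have hswsq : sw * sw = 1 := by
      apply Homeomorph.ext
      intro x
      exact hswInv x
    have hswinv' : sw⁻¹ = sw := inv_eq_of_mul_eq_one_right hswsq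
    have hgeq : g = sw * psi g * sw := by
      apply Homeomorph.ext
      intro x
      show g x = swF (psiF g (swF x))
      have e1 : psiF g (swF x) = swF (g x) := by
        have h2 := hkey (swF x)
        rw [hswInv x] at h2
        exact h2.symm
      rw [e1, hswInv]
    have hfin : sw * psi g * sw⁻¹ ∈ ⁅suppSubgroup Γ U, suppSubgroup Γ U⁆ := by
      have h2 : sw * psi g * sw⁻¹ = (@Bracket.bracket _ _ commutatorElement sw (psi g)) * psi g := by
        rw [commutatorElement_def]; group
      rw [h2]
      exact mul_mem (Subgroup.commutator_mem_commutator hswH (hDH hpsig)) hpsig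
    rw [hswinv'] at hfin
    rw [hgeq]
    exact hfin
end

section
/- Let Γ be a topological full group acting faithfully and extremely proximally on a Cantor set C, and let U ⊊ V ⊆ C be clopen with U proper in V. Then there exists h in the commutator subgroup of Γ_V such that the sets hᵏ(U), k ∈ ℤ, are pairwise disjoint. -/
variable {C : Type*}

lemma homeoGroup_mul_apply [TopologicalSpace C] (g h : C ≃ₜ C) (x : C) :
    (g * h) x = g (h x) := rfl

lemma homeoGroup_one_apply [TopologicalSpace C] (x : C) : (1 : C ≃ₜ C) x = x := rfl

lemma homeoGroup_inv_apply [TopologicalSpace C] (g : C ≃ₜ C) (x : C) :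
    (g⁻¹ : C ≃ₜ C) x = g.symm x := rfl

lemma clopen_image_s17 [TopologicalSpace C] (g : C ≃ₜ C) {A : Set C} (hA : IsClopen A) :
    IsClopen (g '' A) := by
  rw [← Homeomorph.preimage_symm]
  exact hA.preimage g.symm.continuous

/-- Given `γ ∈ Γ` and a clopen `A` with `γ '' A` disjoint from `A`, the "swap"
which is `γ` on `A`, `γ⁻¹` on `γ '' A`, and identity elsewhere, belongs to `Γ`. -/
lemma exists_swap_homeo [TopologicalSpace C] {Γ : Subgroup (C ≃ₜ C)}
    (hfull : IsTopologicalFullGroup Γ) {γ : C ≃ₜ C} (hγ : γ ∈ Γ)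
    {A : Set C} (hA : IsClopen A) (hd : Disjoint A (γ '' A)) :
    ∃ σ : C ≃ₜ C, σ ∈ Γ ∧ (∀ x ∈ A, σ x = γ x) ∧ (∀ x ∈ γ '' A, σ x = γ.symm x) ∧
      ∀ x, x ∉ A → x ∉ γ '' A → σ x = x := by
  classical
  set B := γ '' A with hB
  have hBc : IsClopen B := clopen_image_s17 γ hA
  set f : C → C := fun x => if x ∈ A then γ x else if x ∈ B then γ.symm x else x with hf
  have hfA : ∀ x ∈ A, f x = γ x := fun x hx => by simp [hf, hx]
  have hfB : ∀ x ∈ B, f x = γ.symm x := fun x hx => by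
    have hxA : x ∉ A := Set.disjoint_right.mp hd hx
    simp [hf, hxA, hx]
  have hfO : ∀ x, x ∉ A → x ∉ B → f x = x := fun x h1 h2 => by simp [hf, h1, h2]
  have hinv : ∀ x, f (f x) = x := by
    intro x
    by_cases h1 : x ∈ A
    · rw [hfA x h1, hfB _ (Set.mem_image_of_mem γ h1), Homeomorph.symm_apply_apply]
    by_cases h2 : x ∈ B
    · have hmA : γ.symm x ∈ A := by
        obtain ⟨y, hy, rfl⟩ := h2
        simpa using hy
      rw [hfB x h2, hfA _ hmA, Homeomorph.apply_symm_apply]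
    · rw [hfO x h1 h2, hfO x h1 h2]
  have hcont : Continuous f := by
    have hin : Continuous (fun x => if x ∈ B then γ.symm x else x) := by
      refine Continuous.if ?_ γ.symm.continuous continuous_id
      intro a ha
      rw [show frontier {x | x ∈ B} = (∅ : Set C) from hBc.frontier_eq] at ha
      exact absurd ha (Set.notMem_empty a)
    refine Continuous.if ?_ γ.continuous hin
    intro a ha
    rw [show frontier {x | x ∈ A} = (∅ : Set C) from hA.frontier_eq] at ha
    exact absurd ha (Set.notMem_empty a)
  refine ⟨⟨⟨f, f, hinv, hinv⟩, hcont, hcont⟩, ?_, fun x hx => hfA x hx,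
    fun x hx => hfB x hx, fun x h1 h2 => hfO x h1 h2⟩
  apply hfull
  intro x
  by_cases h1 : x ∈ A
  · exact ⟨A, hA.isOpen, h1, γ, hγ, fun y hy => hfA y hy⟩
  by_cases h2 : x ∈ B
  · exact ⟨B, hBc.isOpen, h2, γ⁻¹, Γ.inv_mem hγ, fun y hy => hfB y hy⟩
  · refine ⟨(A ∪ B)ᶜ, (hA.union hBc).isClosed.isOpen_compl, ?_, 1, Γ.one_mem, ?_⟩
    · simp [h1, h2]
    · intro y hy
      rw [Set.mem_compl_iff, Set.mem_union] at hy
      push_neg at hy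
      exact hfO y hy.1 hy.2

/-- If `Γ` is a topological full group acting extremely proximally on a Cantor
set `C` and `U ⊊ V` are clopen, then there is `h` in the commutator subgroup of
`Γ_V` whose integer powers move `U` to pairwise disjoint sets. -/
theorem exists_element_with_pairwise_disjoint_powers [TopologicalSpace C]
    (hC : Nonempty (C ≃ₜ (ℕ → Bool))) (Γ : Subgroup (C ≃ₜ C))
    (hfull : IsTopologicalFullGroup Γ) (hprox : ExtremelyProximal (Γ : Set (C ≃ₜ C)))
    (U V : Set C) (hU : IsClopen U) (hV : IsClopen V) (hUV : U ⊂ V) :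
    ∃ h ∈ ⁅suppSubgroup Γ V, suppSubgroup Γ V⁆, ∀ k l : ℤ, k ≠ l →
      Disjoint ((h ^ k) '' U) ((h ^ l) '' U) := by
  classical
  rcases Set.eq_empty_or_nonempty U with hUe | hUne
  · refine ⟨1, Subgroup.one_mem _, fun k l _ => ?_⟩
    simp [hUe]
  obtain ⟨u, hu⟩ := hUne
  obtain ⟨p, hpV, hpU⟩ := Set.exists_of_ssubset hUV
  have hUV' : U ⊆ V := hUV.subset
  have hWc : IsClopen (V \ U) := hV.diff hU
  have hUuniv : U ≠ Set.univ := fun h => hpU (h ▸ Set.mem_univ p)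
  have hWuniv : V \ U ≠ Set.univ := fun h => by
    have : u ∈ V \ U := h.symm ▸ Set.mem_univ u
    exact this.2 hu
  -- Step 1 : M := g₁ '' U ⊊ V \ U
  obtain ⟨g₁, hg₁Γ, hg₁⟩ := hprox U (V \ U) hU hWc ⟨u, hu⟩ ⟨p, hpV, hpU⟩ hUuniv hWuniv
  set M : Set C := g₁ '' U with hM
  have hMc : IsClopen M := clopen_image_s17 g₁ hU
  have hMW : M ⊆ V \ U := hg₁.subset
  obtain ⟨q, hqW, hqM⟩ := Set.exists_of_ssubset hg₁
  -- E := U ∪ M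
  set E : Set C := U ∪ M with hE
  have hEc : IsClopen E := hU.union hMc
  have hEV : E ⊆ V := Set.union_subset hUV' (fun x hx => (hMW hx).1)
  have huE : u ∈ E := Or.inl hu
  have hqE : q ∉ E := fun h => h.elim (fun h' => hqW.2 h') hqM
  have hVEc : IsClopen (V \ E) := hV.diff hEc
  have hEuniv : E ≠ Set.univ := fun h => hqE (h ▸ Set.mem_univ q)
  have hVEuniv : V \ E ≠ Set.univ := fun h => by
    have : u ∈ V \ E := h.symm ▸ Set.mem_univ u
    exact this.2 huE
  -- Step 2 : E' := δ '' E ⊊ V \ E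
  obtain ⟨δ, hδΓ, hδ⟩ := hprox E (V \ E) hEc hVEc ⟨u, huE⟩ ⟨q, hqW.1, hqE⟩ hEuniv hVEuniv
  set E' : Set C := δ '' E with hE'
  have hE'c : IsClopen E' := clopen_image_s17 δ hEc
  have hE'VE : E' ⊆ V \ E := hδ.subset
  obtain ⟨r, hrVE, hrE'⟩ := Set.exists_of_ssubset hδ
  have huE' : u ∉ E' := fun h => (hE'VE h).2 huE
  have huM : u ∉ M := fun h => (hMW h).2 hu
  have hE'univ : E' ≠ Set.univ := fun h => huE' (h ▸ Set.mem_univ u)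
  have hMuniv : M ≠ Set.univ := fun h => huM (h ▸ Set.mem_univ u)
  -- Step 3 : F := ε '' E' ⊊ M
  obtain ⟨ε, hεΓ, hε⟩ := hprox E' M hE'c hMc ⟨δ u, Set.mem_image_of_mem δ huE⟩
    ⟨g₁ u, Set.mem_image_of_mem g₁ hu⟩ hE'univ hMuniv
  set F : Set C := ε '' E' with hF
  have hFM : F ⊆ M := hε.subset
  have hFE : F ⊆ E := fun x hx => Or.inr (hFM hx)
  -- S := E ∪ E'
  set S : Set C := E ∪ E' with hS
  have hSc : IsClopen S := hEc.union hE'c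
  have hSV : S ⊆ V := Set.union_subset hEV (fun x hx => (hE'VE hx).1)
  have huS : u ∈ S := Or.inl huE
  have hrS : r ∉ S := fun h => h.elim (fun h' => hrVE.2 h') hrE'
  have hVSc : IsClopen (V \ S) := hV.diff hSc
  have hSuniv : S ≠ Set.univ := fun h => hrS (h ▸ Set.mem_univ r)
  have hVSuniv : V \ S ≠ Set.univ := fun h => by
    have : u ∈ V \ S := h.symm ▸ Set.mem_univ u
    exact this.2 huS
  -- Step 4 : S' := ζ '' S ⊊ V \ S
  obtain ⟨ζ, hζΓ, hζ⟩ := hprox S (V \ S) hSc hVSc ⟨u, huS⟩ ⟨r, hrVE.1, hrS⟩ hSuniv hVSuniv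
  have hS'VS : ζ '' S ⊆ V \ S := hζ.subset
  -- swaps
  have hdE : Disjoint E (δ '' E) := Set.disjoint_left.mpr
    (fun x hx hx' => (hE'VE hx').2 hx)
  obtain ⟨t, htΓ, htE, htE', htO⟩ := exists_swap_homeo hfull hδΓ hEc hdE
  have hdE' : Disjoint E' (ε '' E') := Set.disjoint_left.mpr
    (fun x hx hx' => (hE'VE hx).2 (hFE hx'))
  obtain ⟨s, hsΓ, hsE', hsF, hsO⟩ := exists_swap_homeo hfull hεΓ hE'c hdE'
  have hdS : Disjoint S (ζ '' S) := Set.disjoint_left.mpr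
    (fun x hx hx' => (hS'VS hx').2 hx)
  obtain ⟨b, hbΓ, hbS, hbS', hbO⟩ := exists_swap_homeo hfull hζΓ hSc hdS
  -- a := s * t
  set a : C ≃ₜ C := s * t with ha
  have hat : ∀ x ∈ E, a x = ε (δ x) := by
    intro x hx
    show s (t x) = ε (δ x)
    rw [htE x hx, hsE' (δ x) (Set.mem_image_of_mem δ hx)]
  have haO : ∀ x, x ∉ S → a x = x := by
    intro x hx
    have hxE : x ∉ E := fun h => hx (Or.inl h)
    have hxE' : x ∉ E' := fun h => hx (Or.inr h)
    show s (t x) = x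
    rw [htO x hxE hxE', hsO x hxE' (fun hFx => hxE (hFE hFx))]
  -- memberships in suppSubgroup
  have ht_mem : t ∈ suppSubgroup Γ V := by
    refine ⟨htΓ, fun x hx => ?_⟩
    exact htO x (fun h => hx (hEV h)) (fun h => hx ((hE'VE h).1))
  have hs_mem : s ∈ suppSubgroup Γ V := by
    refine ⟨hsΓ, fun x hx => ?_⟩
    exact hsO x (fun h => hx ((hE'VE h).1)) (fun h => hx (hEV (hFE h)))
  have hb_mem : b ∈ suppSubgroup Γ V := by
    refine ⟨hbΓ, fun x hx => ?_⟩
    exact hbO x (fun h => hx (hSV h)) (fun h => hx ((hS'VS h).1))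
  have ha_mem : a ∈ suppSubgroup Γ V := mul_mem hs_mem ht_mem
  -- h := ⁅a, b⁆ acts as a on E
  set h : C ≃ₜ C := a * b * a⁻¹ * b⁻¹ with hh
  have hh_mem : h ∈ ⁅suppSubgroup Γ V, suppSubgroup Γ V⁆ :=
    Subgroup.commutator_mem_commutator ha_mem hb_mem
  have hhE : ∀ x ∈ E, h x = ε (δ x) := by
    intro x hx
    have hxS : x ∈ S := Or.inl hx
    have h1 : b (ζ x) = x := by
      rw [hbS' (ζ x) (Set.mem_image_of_mem ζ hxS), Homeomorph.symm_apply_apply]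
    have h2 : (b⁻¹ : C ≃ₜ C) x = ζ x := by
      show b.symm x = ζ x
      exact b.injective (by rw [Homeomorph.apply_symm_apply, h1])
    have hζS : ζ x ∉ S := fun hm => (hS'VS (Set.mem_image_of_mem ζ hxS)).2 hm
    have h3 : a (ζ x) = ζ x := haO _ hζS
    have h4 : (a⁻¹ : C ≃ₜ C) (ζ x) = ζ x := by
      show a.symm (ζ x) = ζ x
      exact a.injective (by rw [Homeomorph.apply_symm_apply, h3])
    show a (b ((a⁻¹ : C ≃ₜ C) ((b⁻¹ : C ≃ₜ C) x))) = ε (δ x)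
    rw [h2, h4, h1, hat x hx]
  have hhE2 : ∀ x ∈ E, h x ∈ E ∧ h x ∉ U := by
    intro x hx
    rw [hhE x hx]
    have hmem : ε (δ x) ∈ F := Set.mem_image_of_mem ε (Set.mem_image_of_mem δ hx)
    exact ⟨hFE hmem, fun hu' => (hMW (hFM hmem)).2 hu'⟩
  -- powers stay in E and avoid U
  have hpowE : ∀ n : ℕ, ∀ x ∈ E, (h ^ n) x ∈ E := by
    intro n
    induction n with
    | zero => intro x hx; simpa [homeoGroup_one_apply] using hx
    | succ n ih =>
      intro x hx
      rw [pow_succ, homeoGroup_mul_apply]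
      exact ih _ (hhE2 x hx).1
  have hpowU : ∀ n : ℕ, ∀ x ∈ E, (h ^ (n + 1)) x ∉ U := by
    intro n x hx
    rw [pow_succ', homeoGroup_mul_apply]
    exact (hhE2 _ (hpowE n x hx)).2
  refine ⟨h, hh_mem, ?_⟩
  have key : ∀ k l : ℤ, k < l → Disjoint ((h ^ k) '' U) ((h ^ l) '' U) := by
    intro k l hkl
    rw [Set.disjoint_left]
    rintro y ⟨x₁, hx₁, rfl⟩ ⟨x₂, hx₂, heq⟩
    have hml : (h ^ (l - k)) x₂ = x₁ := by
      have h1 : h ^ (l - k) = (h ^ k)⁻¹ * h ^ l := by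
        rw [sub_eq_neg_add, zpow_add, zpow_neg]
      rw [h1, homeoGroup_mul_apply, heq]
      exact Homeomorph.symm_apply_apply _ _
    obtain ⟨m, hm⟩ : ∃ m : ℕ, l - k = ((m + 1 : ℕ) : ℤ) :=
      ⟨(l - k - 1).toNat, by omega⟩
    rw [hm, zpow_natCast] at hml
    exact hpowU m x₂ (Or.inl hx₂) (by rw [hml]; exact hx₁)
  intro k l hkl
  rcases lt_or_gt_of_ne hkl with h' | h'
  · exact key k l h'
  · exact (key l k h').symm
end
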